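/- arXiv:1807.08591 — 9 statements merged into one kernel-verified Lean document; each statement's English description precedes it below -/
import Mathlib

section
/- Let A ∈ ℂ^{n×n} be a Hermitian matrix having exactly k positive eigenvalues (counted with multiplicities), and let K ∈ ℂ^{n×m}. Then for every j with 1 ≤ j ≤ min{k, m, rank(K*AK)}, the j-th largest eigenvalue of the Hermitian matrix K*AK satisfies λ_j^↓(K*AK) ≤ ‖K‖² · λ_j^↓(A), where λ_j^↓(X) denotes the j-th eigenvalue of a Hermitian matrix X (counted with multiplicities) arranged in nonincreasing order and ‖K‖ is the spectral (operator) norm of K. -/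
open scoped Matrix

/-- The spectral (operator) norm of a complex rectangular matrix. -/
noncomputable def specNorm {n m : ℕ} (K : Matrix (Fin n) (Fin m) ℂ) : ℝ :=
  ‖LinearMap.toContinuousLinearMap (Matrix.toEuclideanLin K)‖

private lemma dot_diag {p : ℕ} (c : ℕ → ℝ) (v : Fin p → ℂ) :
    star v ⬝ᵥ (Matrix.diagonal (fun i : Fin p => (c i : ℂ))) *ᵥ v
      = ((∑ i : Fin p, c i * ‖v i‖ ^ 2 : ℝ) : ℂ) := by
  rw [dotProduct]
  push_cast
  refine Finset.sum_congr rfl fun i _ => ?_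
  have : (starRingEnd ℂ) (v i) * v i = ((‖v i‖ ^ 2 : ℝ) : ℂ) := by
    rw [mul_comm, Complex.mul_conj, Complex.normSq_eq_norm_sq]
  simp only [Matrix.mulVec_diagonal, Pi.star_apply, RCLike.star_def]
  rw [show (starRingEnd ℂ) (v i) * ((c i : ℂ) * v i)
        = (c i : ℂ) * ((starRingEnd ℂ) (v i) * v i) by ring, this]
  push_cast
  ring

private lemma dot_self {p : ℕ} (v : Fin p → ℂ) :
    star v ⬝ᵥ v = ((∑ i : Fin p, ‖v i‖ ^ 2 : ℝ) : ℂ) := by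
  have := dot_diag (fun _ => (1 : ℝ)) v
  simpa using this

private lemma quad_conj {p q : ℕ} (B : Matrix (Fin p) (Fin q) ℂ)
    (C : Matrix (Fin p) (Fin p) ℂ) (y : Fin q → ℂ) :
    star y ⬝ᵥ (Bᴴ * C * B) *ᵥ y = star (B *ᵥ y) ⬝ᵥ C *ᵥ (B *ᵥ y) := by
  rw [Matrix.star_mulVec, ← Matrix.dotProduct_mulVec, Matrix.mulVec_mulVec,
    Matrix.mulVec_mulVec]

private lemma unitary_norm_sq {p q : ℕ} (Q : Matrix (Fin p) (Fin q) ℂ)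
    (hQ : Qᴴ * Q = 1) (v : Fin q → ℂ) :
    ∑ i : Fin p, ‖(Q *ᵥ v) i‖ ^ 2 = ∑ i : Fin q, ‖v i‖ ^ 2 := by
  have h : star (Q *ᵥ v) ⬝ᵥ (Q *ᵥ v) = star v ⬝ᵥ v := by
    rw [Matrix.star_mulVec, ← Matrix.dotProduct_mulVec, Matrix.mulVec_mulVec, hQ,
      Matrix.one_mulVec]
  rw [dot_self, dot_self] at h
  exact_mod_cast h

private lemma spec_bound {p q : ℕ} (K : Matrix (Fin p) (Fin q) ℂ) (v : Fin q → ℂ) :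
    ∑ i : Fin p, ‖(K *ᵥ v) i‖ ^ 2 ≤ specNorm K ^ 2 * ∑ i : Fin q, ‖v i‖ ^ 2 := by
  set ev : EuclideanSpace ℂ (Fin q) := (WithLp.equiv 2 _).symm v with hev
  have h1 : ‖LinearMap.toContinuousLinearMap (Matrix.toEuclideanLin K) ev‖
      ≤ specNorm K * ‖ev‖ :=
    (LinearMap.toContinuousLinearMap (Matrix.toEuclideanLin K)).le_opNorm ev
  have h2 : LinearMap.toContinuousLinearMap (Matrix.toEuclideanLin K) ev
      = (WithLp.equiv 2 (Fin p → ℂ)).symm (K *ᵥ v) := by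
    simp [hev, Matrix.toEuclideanLin_apply]
  have hnormv : ‖ev‖ ^ 2 = ∑ i, ‖v i‖ ^ 2 := by
    rw [EuclideanSpace.norm_eq, Real.sq_sqrt (by positivity)]
    simp [hev]
  have hnormKv : ‖(WithLp.equiv 2 (Fin p → ℂ)).symm (K *ᵥ v)‖ ^ 2
      = ∑ i, ‖(K *ᵥ v) i‖ ^ 2 := by
    rw [EuclideanSpace.norm_eq, Real.sq_sqrt (by positivity)]
    simp
  have h3 : ‖(WithLp.equiv 2 (Fin p → ℂ)).symm (K *ᵥ v)‖ ≤ specNorm K * ‖ev‖ := by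
    rw [← h2]; exact h1
  have h4 := mul_self_le_mul_self (norm_nonneg _) h3
  calc ∑ i, ‖(K *ᵥ v) i‖ ^ 2 = ‖(WithLp.equiv 2 (Fin p → ℂ)).symm (K *ᵥ v)‖ ^ 2 :=
        hnormKv.symm
    _ ≤ (specNorm K * ‖ev‖) ^ 2 := by rw [sq, sq]; exact h4
    _ = specNorm K ^ 2 * ∑ i : Fin q, ‖v i‖ ^ 2 := by rw [mul_pow, hnormv]

/-- Let `A ∈ ℂ^{n×n}` be Hermitian with exactly `k` positive eigenvalues (counted with
multiplicities), listed in nonincreasing order as `lam 0 ≥ lam 1 ≥ …`, and let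
`K ∈ ℂ^{n×m}`.  If `nu` lists the eigenvalues of the Hermitian matrix `KᴴAK` in
nonincreasing order, then for every `j < min {k, m, rank (KᴴAK)}` (0-indexed) one has
`nu j ≤ ‖K‖² · lam j`. -/
theorem schur_eigenvalue_bound
    (n m k : ℕ) (hkn : k ≤ n)
    (A : Matrix (Fin n) (Fin n) ℂ)
    (lam : ℕ → ℝ)
    (hlam : ∀ i j : ℕ, i ≤ j → j < n → lam j ≤ lam i)
    (hAdiag : ∃ U ∈ Matrix.unitaryGroup (Fin n) ℂ,
      A = U * Matrix.diagonal (fun i : Fin n => (lam i : ℂ)) * Uᴴ)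
    (hexact : ∀ i : ℕ, i < n → (0 < lam i ↔ i < k))
    (K : Matrix (Fin n) (Fin m) ℂ)
    (nu : ℕ → ℝ)
    (hnu : ∀ i j : ℕ, i ≤ j → j < m → nu j ≤ nu i)
    (hnudiag : ∃ V ∈ Matrix.unitaryGroup (Fin m) ℂ,
      Kᴴ * A * K = V * Matrix.diagonal (fun i : Fin m => (nu i : ℂ)) * Vᴴ)
    (j : ℕ) (hjk : j < k) (hjm : j < m) (hjr : j < (Kᴴ * A * K).rank) :
    nu j ≤ specNorm K ^ 2 * lam j := by
  obtain ⟨U, hU, hA⟩ := hAdiag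
  obtain ⟨V, hV, hH⟩ := hnudiag
  have hjn : j < n := lt_of_lt_of_le hjk hkn
  have hlamj : 0 < lam j := (hexact j hjn).mpr hjk
  set M : Matrix (Fin n) (Fin m) ℂ := Uᴴ * K * V with hM
  -- the extension-by-zero linear map
  let ext : (Fin (j + 1) → ℂ) →ₗ[ℂ] (Fin m → ℂ) :=
    { toFun := fun z p => if h : (p : ℕ) < j + 1 then z ⟨p, h⟩ else 0
      map_add' := fun z w => by
        funext p; by_cases h : (p : ℕ) ≤ j <;> simp [h]
      map_smul' := fun c z => by
        funext p; by_cases h : (p : ℕ) ≤ j <;> simp [h] }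
  -- restriction to the first j coordinates
  let res : (Fin n → ℂ) →ₗ[ℂ] (Fin j → ℂ) :=
    LinearMap.funLeft ℂ ℂ (Fin.castLE hjn.le)
  let φ : (Fin (j + 1) → ℂ) →ₗ[ℂ] (Fin j → ℂ) :=
    res ∘ₗ M.mulVecLin ∘ₗ ext
  -- φ has nontrivial kernel by dimension count
  have hker : ∃ z : Fin (j + 1) → ℂ, z ≠ 0 ∧ φ z = 0 := by
    by_contra hc
    push_neg at hc
    have hinj : Function.Injective φ := by
      rw [← LinearMap.ker_eq_bot, Submodule.eq_bot_iff]
      intro z hz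
      by_contra hz0
      exact (hc z hz0) hz
    have := LinearMap.finrank_le_finrank_of_injective hinj
    rw [Module.finrank_fin_fun, Module.finrank_fin_fun] at this
    omega
  obtain ⟨z, hz, hφz⟩ := hker
  set y : Fin m → ℂ := ext z with hy
  set w : Fin n → ℂ := M *ᵥ y with hw
  -- support properties
  have hy_supp : ∀ p : Fin m, j + 1 ≤ (p : ℕ) → y p = 0 := by
    intro p hp
    simp only [hy, ext, LinearMap.coe_mk, AddHom.coe_mk]
    rw [dif_neg (by omega)]
  have hw_zero : ∀ i : Fin n, (i : ℕ) < j → w i = 0 := by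
    intro i hi
    have := congrFun hφz ⟨(i : ℕ), hi⟩
    simpa [φ, res, LinearMap.funLeft, hw, hy, Fin.castLE,
      Matrix.mulVecLin_apply] using this
  -- y ≠ 0
  have hy_ne : ∃ p : Fin m, y p ≠ 0 := by
    obtain ⟨l, hl⟩ := Function.ne_iff.mp hz
    refine ⟨⟨(l : ℕ), lt_of_lt_of_le l.isLt hjm⟩, ?_⟩
    simp only [hy, ext, LinearMap.coe_mk, AddHom.coe_mk]
    rw [dif_pos l.isLt]
    simpa using hl
  -- unitarity facts
  have hVu : Vᴴ * V = 1 := by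
    have := hV.1; rwa [Matrix.star_eq_conjTranspose] at this
  have hVu' : V * Vᴴ = 1 := by
    have := hV.2; rwa [Matrix.star_eq_conjTranspose] at this
  have hUu : U * Uᴴ = 1 := by
    have := hU.2; rwa [Matrix.star_eq_conjTranspose] at this
  -- two expressions for the quadratic form
  have hVHV : Vᴴ * (Kᴴ * A * K) * V = Matrix.diagonal (fun i : Fin m => (nu i : ℂ)) := by
    rw [hH]
    calc Vᴴ * (V * Matrix.diagonal (fun i : Fin m => (nu i : ℂ)) * Vᴴ) * V
        = (Vᴴ * V) * Matrix.diagonal (fun i : Fin m => (nu i : ℂ)) * (Vᴴ * V) := by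
          simp only [Matrix.mul_assoc]
      _ = Matrix.diagonal (fun i : Fin m => (nu i : ℂ)) := by
          rw [hVu, Matrix.one_mul, Matrix.mul_one]
  have hMDM : Vᴴ * (Kᴴ * A * K) * V
      = Mᴴ * Matrix.diagonal (fun i : Fin n => (lam i : ℂ)) * M := by
    rw [hA, hM]
    simp only [Matrix.conjTranspose_mul, Matrix.conjTranspose_conjTranspose]
    simp only [Matrix.mul_assoc]
  have hkey : star y ⬝ᵥ (Matrix.diagonal (fun i : Fin m => (nu i : ℂ))) *ᵥ y
      = star w ⬝ᵥ (Matrix.diagonal (fun i : Fin n => (lam i : ℂ))) *ᵥ w := by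
    rw [← hVHV, hMDM, hw, quad_conj]
  rw [dot_diag, dot_diag] at hkey
  have hreal : ∑ i : Fin m, nu i * ‖y i‖ ^ 2 = ∑ i : Fin n, lam i * ‖w i‖ ^ 2 := by
    exact_mod_cast hkey
  set S : ℝ := ∑ i : Fin m, ‖y i‖ ^ 2 with hS
  have hSpos : 0 < S := by
    obtain ⟨p, hp⟩ := hy_ne
    have h1 : 0 < ‖y p‖ ^ 2 := pow_pos (norm_pos_iff.mpr hp) 2
    have h2 : ‖y p‖ ^ 2 ≤ ∑ i : Fin m, ‖y i‖ ^ 2 :=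
      Finset.single_le_sum (f := fun i : Fin m => ‖y i‖ ^ 2)
        (fun i _ => by positivity) (Finset.mem_univ p)
    rw [← hS] at h2
    linarith
  -- lower bound on the quadratic form
  have hlow : nu j * S ≤ ∑ i : Fin m, nu i * ‖y i‖ ^ 2 := by
    rw [hS, Finset.mul_sum]
    refine Finset.sum_le_sum fun i _ => ?_
    by_cases h : (i : ℕ) ≤ j
    · exact mul_le_mul_of_nonneg_right (hnu (i : ℕ) j h hjm) (by positivity)
    · rw [hy_supp i (by omega)]
      simp
  -- upper bound
  have hup : ∑ i : Fin n, lam i * ‖w i‖ ^ 2 ≤ lam j * ∑ i : Fin n, ‖w i‖ ^ 2 := by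
    rw [Finset.mul_sum]
    refine Finset.sum_le_sum fun i _ => ?_
    by_cases h : (i : ℕ) < j
    · rw [hw_zero i h]; simp
    · exact mul_le_mul_of_nonneg_right (hlam j (i : ℕ) (by omega) i.isLt) (by positivity)
  -- norm bounds
  have hxw : ∑ i : Fin n, ‖w i‖ ^ 2 = ∑ i : Fin n, ‖(K *ᵥ (V *ᵥ y)) i‖ ^ 2 := by
    have : w = Uᴴ *ᵥ (K *ᵥ (V *ᵥ y)) := by
      rw [hw, hM, Matrix.mulVec_mulVec, Matrix.mulVec_mulVec]
    rw [this]
    exact unitary_norm_sq Uᴴ (by rw [Matrix.conjTranspose_conjTranspose, hUu]) _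
  have hxS : ∑ i : Fin m, ‖(V *ᵥ y) i‖ ^ 2 = S := unitary_norm_sq V hVu y
  have hKbound : ∑ i : Fin n, ‖(K *ᵥ (V *ᵥ y)) i‖ ^ 2 ≤ specNorm K ^ 2 * S := by
    calc ∑ i : Fin n, ‖(K *ᵥ (V *ᵥ y)) i‖ ^ 2
        ≤ specNorm K ^ 2 * ∑ i : Fin m, ‖(V *ᵥ y) i‖ ^ 2 := spec_bound K _
      _ = specNorm K ^ 2 * S := by rw [hxS]
  -- conclude
  have hchain : nu j * S ≤ (specNorm K ^ 2 * lam j) * S := by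
    calc nu j * S ≤ ∑ i : Fin m, nu i * ‖y i‖ ^ 2 := hlow
      _ = ∑ i : Fin n, lam i * ‖w i‖ ^ 2 := hreal
      _ ≤ lam j * ∑ i : Fin n, ‖w i‖ ^ 2 := hup
      _ = lam j * ∑ i : Fin n, ‖(K *ᵥ (V *ᵥ y)) i‖ ^ 2 := by rw [hxw]
      _ ≤ lam j * (specNorm K ^ 2 * S) := by
          exact mul_le_mul_of_nonneg_left hKbound hlamj.le
      _ = (specNorm K ^ 2 * lam j) * S := by ring
  exact le_of_mul_le_mul_right hchain hSpos
end

section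
/- Let A ∈ ℂ^{n×n} be a Hermitian matrix with eigenvalues (counted with multiplicities) λ_1 ≥ … ≥ λ_k > 0 ≥ λ_{k+1} ≥ … ≥ λ_n, and let D ∈ ℂ^{m×m} be a Hermitian matrix with eigenvalues (counted with multiplicities) μ_1 ≤ … ≤ μ_r ≤ 0 < μ_{r+1} ≤ … ≤ μ_m. If r > k, then there exists no matrix K ∈ ℂ^{n×m} such that D + K*AK is positive definite. -/
open scoped Matrix ComplexOrder

/-- Quadratic form of a unitarily diagonalized matrix as a real sum. -/
lemma quad_form_diag {p : ℕ} (W : Matrix (Fin p) (Fin p) ℂ) (d : Fin p → ℝ) (x : Fin p → ℂ) :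
    dotProduct (star x) ((W * Matrix.diagonal (fun i => (d i : ℂ)) * Wᴴ).mulVec x)
      = ((∑ i, d i * Complex.normSq ((Wᴴ.mulVec x) i) : ℝ) : ℂ) := by
  have h1 : (W * Matrix.diagonal (fun i => (d i : ℂ)) * Wᴴ).mulVec x
      = W.mulVec ((Matrix.diagonal (fun i => (d i : ℂ))).mulVec (Wᴴ.mulVec x)) := by
    rw [Matrix.mulVec_mulVec, Matrix.mulVec_mulVec]
  rw [h1, Matrix.dotProduct_mulVec]
  have h2 : Matrix.vecMul (star x) W = star (Wᴴ.mulVec x) := by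
    rw [Matrix.star_mulVec, Matrix.conjTranspose_conjTranspose]
  rw [h2]
  set z := Wᴴ.mulVec x with hz
  simp only [dotProduct, Matrix.mulVec_diagonal, Pi.star_apply, Complex.ofReal_sum]
  refine Finset.sum_congr rfl fun i _ => ?_
  rw [Complex.ofReal_mul, Complex.normSq_eq_conj_mul_self]
  ring_nf
  rw [Complex.star_def]
  ring

lemma conj_quad {n m : ℕ} (K : Matrix (Fin n) (Fin m) ℂ) (A : Matrix (Fin n) (Fin n) ℂ)
    (x : Fin m → ℂ) :
    dotProduct (star x) ((Kᴴ * A * K).mulVec x)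
      = dotProduct (star (K.mulVec x)) (A.mulVec (K.mulVec x)) := by
  calc dotProduct (star x) ((Kᴴ * A * K).mulVec x)
      = dotProduct (star x) (Kᴴ.mulVec (A.mulVec (K.mulVec x))) := by
        rw [Matrix.mulVec_mulVec, Matrix.mulVec_mulVec, Matrix.mul_assoc]
    _ = dotProduct (Matrix.vecMul (star x) Kᴴ) (A.mulVec (K.mulVec x)) :=
        Matrix.dotProduct_mulVec _ _ _
    _ = dotProduct (star (K.mulVec x)) (A.mulVec (K.mulVec x)) := by
        rw [Matrix.star_mulVec]

/-- Let `A ∈ ℂ^{n×n}` be Hermitian with eigenvalues (counted with multiplicities,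
nonincreasing) `lam 0 ≥ … ≥ lam (k-1) > 0 ≥ lam k ≥ … ≥ lam (n-1)`, and let `D ∈ ℂ^{m×m}`
be Hermitian with eigenvalues (nondecreasing) `mu 0 ≤ … ≤ mu (r-1) ≤ 0 < mu r ≤ … ≤ mu (m-1)`.
If `r > k`, then there is no `K ∈ ℂ^{n×m}` such that `D + KᴴAK` is positive definite. -/
theorem no_posdef_completion_of_r_gt_k
    (n m k r : ℕ) (hkn : k ≤ n) (hrm : r ≤ m)
    (A : Matrix (Fin n) (Fin n) ℂ) (D : Matrix (Fin m) (Fin m) ℂ)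
    (lam mu : ℕ → ℝ)
    (hlam : ∀ i j : ℕ, i ≤ j → j < n → lam j ≤ lam i)
    (hlampos : ∀ i : ℕ, i < k → 0 < lam i)
    (hlamnonpos : ∀ i : ℕ, k ≤ i → i < n → lam i ≤ 0)
    (hmu : ∀ i j : ℕ, i ≤ j → j < m → mu i ≤ mu j)
    (hmunonpos : ∀ i : ℕ, i < r → mu i ≤ 0)
    (hmupos : ∀ i : ℕ, r ≤ i → i < m → 0 < mu i)
    (hAdiag : ∃ U ∈ Matrix.unitaryGroup (Fin n) ℂ,
      A = U * Matrix.diagonal (fun i : Fin n => (lam i : ℂ)) * Uᴴ)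
    (hDdiag : ∃ V ∈ Matrix.unitaryGroup (Fin m) ℂ,
      D = V * Matrix.diagonal (fun j : Fin m => (mu j : ℂ)) * Vᴴ)
    (hrk : k < r) :
    ¬ ∃ K : Matrix (Fin n) (Fin m) ℂ, (D + Kᴴ * A * K).PosDef := by
  obtain ⟨U, hU, hA⟩ := hAdiag
  obtain ⟨V, hV, hD⟩ := hDdiag
  rintro ⟨K, hpd⟩
  -- The matrix M = Uᴴ K V
  set M : Matrix (Fin n) (Fin m) ℂ := Uᴴ * K * V with hM
  -- Linear map from ℂ^r to ℂ^k : c ↦ first k coords of M *ᵥ (extension of c)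
  set E : (Fin r → ℂ) →ₗ[ℂ] (Fin m → ℂ) :=
    Function.ExtendByZero.linearMap ℂ (Fin.castLE hrm) with hE
  set T : (Fin r → ℂ) →ₗ[ℂ] (Fin k → ℂ) :=
    (LinearMap.funLeft ℂ ℂ (Fin.castLE hkn)).comp (M.mulVecLin.comp E) with hT
  -- T is not injective since k < r
  have hTnotinj : ¬ Function.Injective T := by
    intro hinj
    have := LinearMap.finrank_le_finrank_of_injective hinj
    simp only [Module.finrank_fin_fun] at this
    omega
  rw [← LinearMap.ker_eq_bot] at hTnotinj
  obtain ⟨c, hcker, hc0⟩ := (Submodule.ne_bot_iff _).mp hTnotinj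
  -- the extended vector and x
  set ch : Fin m → ℂ := E c with hch
  set x : Fin m → ℂ := V.mulVec ch with hx
  have hVunit : Vᴴ * V = 1 := by
    have := (Matrix.mem_unitaryGroup_iff'.mp hV)
    exact this
  have hUcast : Fin.castLE hrm = fun i : Fin r => (Fin.castLE hrm i) := rfl
  have hcastinj : Function.Injective (Fin.castLE hrm) := Fin.castLE_injective hrm
  have hch_lt : ∀ j : Fin r, ch (Fin.castLE hrm j) = c j := by
    intro j
    simp only [hch, hE, Function.ExtendByZero.linearMap_apply]
    exact Function.Injective.extend_apply hcastinj c 0 j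
  have hch_ge : ∀ j : Fin m, r ≤ (j : ℕ) → ch j = 0 := by
    intro j hj
    simp only [hch, hE, Function.ExtendByZero.linearMap_apply]
    apply Function.extend_apply'
    rintro ⟨a, ha⟩
    have : ((Fin.castLE hrm a : Fin m) : ℕ) = (j : ℕ) := by rw [ha]
    simp at this
    omega
  -- Vᴴ x = ch
  have hVx : Vᴴ.mulVec x = ch := by
    rw [hx, Matrix.mulVec_mulVec, hVunit, Matrix.one_mulVec]
  -- x ≠ 0
  have hxne : x ≠ 0 := by
    intro h0
    apply hc0
    funext j
    have : ch (Fin.castLE hrm j) = 0 := by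
      rw [← hVx, h0, Matrix.mulVec_zero]; rfl
    rw [← hch_lt j, this]; rfl
  -- kernel condition: (M *ᵥ ch) i = 0 for i < k
  have hker : ∀ i : Fin n, (i : ℕ) < k → (M.mulVec ch) i = 0 := by
    intro i hik
    have : T c = 0 := hcker
    have h2 : T c ⟨(i : ℕ), hik⟩ = 0 := by rw [this]; rfl
    simp only [hT, LinearMap.comp_apply, LinearMap.funLeft_apply,
      Matrix.mulVecLin_apply] at h2
    exact h2
  -- positivity from PosDef
  have hpos := hpd.dotProduct_mulVec_pos hxne
  -- compute the quadratic form
  have hDterm : dotProduct (star x) (D.mulVec x)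
      = ((∑ j : Fin m, mu (j:ℕ) * Complex.normSq (ch j) : ℝ) : ℂ) := by
    rw [hD, quad_form_diag, hVx]
  have hyz : Uᴴ.mulVec (K.mulVec x) = M.mulVec ch := by
    rw [hx, hM, Matrix.mulVec_mulVec, Matrix.mulVec_mulVec, Matrix.mul_assoc]
  have hAterm : dotProduct (star x) ((Kᴴ * A * K).mulVec x)
      = ((∑ i : Fin n, lam (i:ℕ) * Complex.normSq ((M.mulVec ch) i) : ℝ) : ℂ) := by
    rw [conj_quad, hA, quad_form_diag, hyz]
  have htot : dotProduct (star x) ((D + Kᴴ * A * K).mulVec x)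
      = (((∑ j : Fin m, mu (j:ℕ) * Complex.normSq (ch j))
          + (∑ i : Fin n, lam (i:ℕ) * Complex.normSq ((M.mulVec ch) i)) : ℝ) : ℂ) := by
    rw [Matrix.add_mulVec, dotProduct_add, hDterm, hAterm, Complex.ofReal_add]
  rw [htot] at hpos
  have hposR : (0:ℝ) < (∑ j : Fin m, mu (j:ℕ) * Complex.normSq (ch j))
      + (∑ i : Fin n, lam (i:ℕ) * Complex.normSq ((M.mulVec ch) i)) := by exact_mod_cast hpos
  -- but both sums are ≤ 0
  have hS1 : (∑ j : Fin m, mu (j:ℕ) * Complex.normSq (ch j)) ≤ 0 := by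
    apply Finset.sum_nonpos
    intro j _
    by_cases hj : (j : ℕ) < r
    · exact mul_nonpos_of_nonpos_of_nonneg (hmunonpos (j:ℕ) hj) (Complex.normSq_nonneg _)
    · rw [hch_ge j (le_of_not_gt hj)]
      simp
  have hS2 : (∑ i : Fin n, lam (i:ℕ) * Complex.normSq ((M.mulVec ch) i)) ≤ 0 := by
    apply Finset.sum_nonpos
    intro i _
    by_cases hi : (i : ℕ) < k
    · rw [hker i hi]
      simp
    · exact mul_nonpos_of_nonpos_of_nonneg (hlamnonpos (i:ℕ) (le_of_not_gt hi) i.isLt)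
        (Complex.normSq_nonneg _)
  linarith
end

section
/- Let A ∈ ℂ^{n×n} be a Hermitian matrix with eigenvalues (counted with multiplicities) λ_1 ≥ … ≥ λ_k > 0 ≥ λ_{k+1} ≥ … ≥ λ_n, and let D ∈ ℂ^{m×m} be a Hermitian matrix with eigenvalues (counted with multiplicities) μ_1 ≤ … ≤ μ_r ≤ 0 < μ_{r+1} ≤ … ≤ μ_m, and let p = dim ker D. If r − p > k, then there exists no matrix K ∈ ℂ^{n×m} such that D + K*AK is positive semidefinite. -/
open scoped Matrix ComplexOrder
open Matrix



lemma sum_supported_castLE {M : Type*} [AddCommMonoid M] {q m : ℕ} (hqm : q ≤ m)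
    (g : Fin m → M) (hg : ∀ j : Fin m, ¬ (j : ℕ) < q → g j = 0) :
    ∑ j, g j = ∑ j : Fin q, g (Fin.castLE hqm j) := by
  classical
  have h1 : ∑ j ∈ Finset.univ.map ⟨Fin.castLE hqm, Fin.castLE_injective hqm⟩, g j
      = ∑ j : Fin q, g (Fin.castLE hqm j) := Finset.sum_map _ _ _
  rw [← h1]
  symm
  apply Finset.sum_subset (Finset.subset_univ _)
  intro j _ hj
  apply hg
  intro hlt
  exact hj (Finset.mem_map.mpr ⟨⟨(j : ℕ), hlt⟩, Finset.mem_univ _, by ext; simp⟩)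

lemma diag_case (n m k q : ℕ) (hkn : k ≤ n) (hqm : q ≤ m) (hq : k < q)
    (lam mu : ℕ → ℝ)
    (hlamnonpos : ∀ i : ℕ, k ≤ i → i < n → lam i ≤ 0)
    (hmuneg : ∀ j : ℕ, j < q → mu j < 0)
    (K : Matrix (Fin n) (Fin m) ℂ) :
    ¬ (Matrix.diagonal (fun j : Fin m => (mu j : ℂ))
        + Kᴴ * Matrix.diagonal (fun i : Fin n => (lam i : ℂ)) * K).PosSemidef := by
  intro hB
  set M : Matrix (Fin k) (Fin q) ℂ := fun i j => K (Fin.castLE hkn i) (Fin.castLE hqm j) with hM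
  -- a nonzero kernel element of M
  have hker : ∃ c : Fin q → ℂ, c ≠ 0 ∧ M *ᵥ c = 0 := by
    have h2 := LinearMap.finrank_range_add_finrank_ker M.mulVecLin
    have h1 : Module.finrank ℂ (LinearMap.range M.mulVecLin) ≤ k := by
      have := Submodule.finrank_le (LinearMap.range M.mulVecLin)
      simpa using this
    have h3 : 0 < Module.finrank ℂ (LinearMap.ker M.mulVecLin) := by
      simp only [Module.finrank_pi, Fintype.card_fin] at h2
      omega
    have hne : LinearMap.ker M.mulVecLin ≠ ⊥ := by
      intro h
      rw [h] at h3
      simp at h3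
    obtain ⟨c, hc, hc0⟩ := (Submodule.ne_bot_iff _).mp hne
    exact ⟨c, hc0, hc⟩
  obtain ⟨c, hc0, hcker⟩ := hker
  set x : Fin m → ℂ := fun j => if h : (j : ℕ) < q then c ⟨(j : ℕ), h⟩ else 0 with hx
  have hxzero : ∀ j : Fin m, ¬ (j : ℕ) < q → x j = 0 := fun j h => dif_neg h
  have hxcast : ∀ j : Fin q, x (Fin.castLE hqm j) = c j := by
    intro j
    simp [hx]
  set y := K *ᵥ x with hy
  have hyk : ∀ i : Fin n, (i : ℕ) < k → y i = 0 := by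
    intro i hi
    have hyi : y i = ∑ j : Fin m, K i j * x j := rfl
    rw [hyi, sum_supported_castLE hqm _ (fun j hj => by rw [hxzero j hj, mul_zero])]
    have hicast : Fin.castLE hkn ⟨(i : ℕ), hi⟩ = i := by ext; simp
    have : ∑ j : Fin q, K i (Fin.castLE hqm j) * x (Fin.castLE hqm j)
        = (M *ᵥ c) ⟨(i : ℕ), hi⟩ := by
      apply Finset.sum_congr rfl
      intro j _
      rw [hxcast]
      simp [hM, hicast, mulVec]
    rw [this, hcker]
    rfl
  -- quadratic form values
  have hpsd := hB.dotProduct_mulVec_nonneg x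
  have hsplit : star x ⬝ᵥ ((Matrix.diagonal (fun j : Fin m => (mu j : ℂ))
        + Kᴴ * Matrix.diagonal (fun i : Fin n => (lam i : ℂ)) * K) *ᵥ x)
      = star x ⬝ᵥ (Matrix.diagonal (fun j : Fin m => (mu j : ℂ)) *ᵥ x)
        + star y ⬝ᵥ (Matrix.diagonal (fun i : Fin n => (lam i : ℂ)) *ᵥ y) := by
    rw [add_mulVec, dotProduct_add]
    congr 1
    rw [Matrix.mul_assoc, ← mulVec_mulVec, dotProduct_mulVec, ← star_mulVec, ← hy,
      ← mulVec_mulVec, dotProduct_mulVec]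
  -- the two diagonal quadratic forms as real numbers
  have hdiag : ∀ (N : ℕ) (d : ℕ → ℝ) (v : Fin N → ℂ),
      star v ⬝ᵥ (Matrix.diagonal (fun i : Fin N => (d i : ℂ)) *ᵥ v)
        = ((∑ i : Fin N, d i * Complex.normSq (v i) : ℝ) : ℂ) := by
    intro N d v
    push_cast
    apply Finset.sum_congr rfl
    intro i _
    rw [mulVec_diagonal]
    simp [Complex.normSq_eq_conj_mul_self]
    ring
  set t1 : ℝ := ∑ j : Fin m, mu j * Complex.normSq (x j) with ht1
  set t2 : ℝ := ∑ i : Fin n, lam i * Complex.normSq (y i) with ht2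
  have ht1neg : t1 < 0 := by
    rw [ht1, sum_supported_castLE hqm _
      (fun j hj => by rw [hxzero j hj]; simp)]
    have := Finset.sum_lt_sum (s := (Finset.univ : Finset (Fin q)))
      (f := fun j : Fin q => mu ((Fin.castLE hqm j : Fin m) : ℕ)
        * Complex.normSq (x (Fin.castLE hqm j)))
      (g := fun _ => (0 : ℝ)) ?_ ?_
    · simpa using this
    · intro j _
      have h1 : mu ((Fin.castLE hqm j : Fin m) : ℕ) < 0 := hmuneg _ (by simp [j.2])
      nlinarith [Complex.normSq_nonneg (x (Fin.castLE hqm j))]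
    · obtain ⟨j0, hj0⟩ := Function.ne_iff.mp hc0
      refine ⟨j0, Finset.mem_univ _, ?_⟩
      have h1 : mu ((Fin.castLE hqm j0 : Fin m) : ℕ) < 0 := hmuneg _ (by simp [j0.2])
      have h2 : 0 < Complex.normSq (x (Fin.castLE hqm j0)) := by
        rw [hxcast]
        exact Complex.normSq_pos.mpr hj0
      nlinarith
  have ht2nonpos : t2 ≤ 0 := by
    apply Finset.sum_nonpos
    intro i _
    by_cases hi : (i : ℕ) < k
    · rw [hyk i hi]; simp
    · have h1 : lam (i : ℕ) ≤ 0 := hlamnonpos _ (not_lt.mp hi) i.2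
      nlinarith [Complex.normSq_nonneg (y i)]
  rw [hsplit, hdiag m mu x, hdiag n lam y, ← Complex.ofReal_add] at hpsd
  have : (0 : ℝ) ≤ t1 + t2 := Complex.zero_le_real.mp hpsd
  linarith



/-- Let `A ∈ ℂ^{n×n}` be Hermitian with eigenvalues (counted with multiplicities,
nonincreasing) `lam 0 ≥ … ≥ lam (k-1) > 0 ≥ lam k ≥ … ≥ lam (n-1)`, let `D ∈ ℂ^{m×m}`
be Hermitian with eigenvalues (nondecreasing) `mu 0 ≤ … ≤ mu (r-1) ≤ 0 < mu r ≤ … ≤ mu (m-1)`,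
and let `p = dim ker D`.  If `r − p > k`, then there is no `K ∈ ℂ^{n×m}` such that
`D + KᴴAK` is positive semidefinite. -/
theorem no_possemidef_completion_of_r_sub_p_gt_k
    (n m k r p : ℕ) (hkn : k ≤ n) (hrm : r ≤ m)
    (A : Matrix (Fin n) (Fin n) ℂ) (D : Matrix (Fin m) (Fin m) ℂ)
    (lam mu : ℕ → ℝ)
    (hlam : ∀ i j : ℕ, i ≤ j → j < n → lam j ≤ lam i)
    (hlampos : ∀ i : ℕ, i < k → 0 < lam i)
    (hlamnonpos : ∀ i : ℕ, k ≤ i → i < n → lam i ≤ 0)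
    (hmu : ∀ i j : ℕ, i ≤ j → j < m → mu i ≤ mu j)
    (hmunonpos : ∀ i : ℕ, i < r → mu i ≤ 0)
    (hmupos : ∀ i : ℕ, r ≤ i → i < m → 0 < mu i)
    (hAdiag : ∃ U ∈ Matrix.unitaryGroup (Fin n) ℂ,
      A = U * Matrix.diagonal (fun i : Fin n => (lam i : ℂ)) * Uᴴ)
    (hDdiag : ∃ V ∈ Matrix.unitaryGroup (Fin m) ℂ,
      D = V * Matrix.diagonal (fun j : Fin m => (mu j : ℂ)) * Vᴴ)
    (hp : p = Module.finrank ℂ (LinearMap.ker D.mulVecLin))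
    (hrpk : k < r - p) :
    ¬ ∃ K : Matrix (Fin n) (Fin m) ℂ, (D + Kᴴ * A * K).PosSemidef := by
  classical
  rintro ⟨K, hB⟩
  obtain ⟨U, hU, hA⟩ := hAdiag
  obtain ⟨V, hV, hD⟩ := hDdiag
  -- unitary facts
  have hV1 : Vᴴ * V = 1 := by
    have := (Unitary.mem_iff.mp hV).1
    simpa [Matrix.star_eq_conjTranspose] using this
  have hV2 : V * Vᴴ = 1 := by
    have := (Unitary.mem_iff.mp hV).2
    simpa [Matrix.star_eq_conjTranspose] using this
  have hVdet : IsUnit V.det := IsUnit.of_mul_eq_one Vᴴ.det (by rw [← det_mul, hV2, det_one])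
  have hVHdet : IsUnit Vᴴ.det := IsUnit.of_mul_eq_one V.det (by rw [← det_mul, hV1, det_one])
  -- kernel dimension = number of zero eigenvalues
  set z : ℕ := Fintype.card {j : Fin m // mu (j : ℕ) = 0} with hz
  have hrankD : D.rank = m - z := by
    rw [hD, Matrix.mul_assoc, rank_mul_eq_right_of_isUnit_det _ _ hVdet,
      rank_mul_eq_left_of_isUnit_det _ _ hVHdet, Matrix.rank_diagonal]
    have e1 : Fintype.card {j : Fin m // ((mu (j : ℕ) : ℂ)) ≠ 0}
        = Fintype.card {j : Fin m // ¬ mu (j : ℕ) = 0} :=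
      Fintype.card_congr (Equiv.subtypeEquivRight (fun j => by simp))
    rw [e1, Fintype.card_subtype_compl, Fintype.card_fin]
  have hzm : z ≤ m := by
    have := Fintype.card_subtype_le (fun j : Fin m => mu (j : ℕ) = 0)
    simpa using this
  have hrn : D.rank + Module.finrank ℂ (LinearMap.ker D.mulVecLin) = m := by
    have h := LinearMap.finrank_range_add_finrank_ker D.mulVecLin
    have h2 : Module.finrank ℂ (Fin m → ℂ) = m := by simp
    rw [h2] at h
    exact h
  have hrank_le : D.rank ≤ m := by omega
  have hpz : p = z := by
    rw [hp]
    omega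
  -- m positive
  have hm0 : 0 < m := lt_of_lt_of_le (lt_of_le_of_lt (Nat.zero_le _) (lt_of_lt_of_le hrpk (Nat.sub_le r p))) hrm
  -- negativity of the first r - p eigenvalues of D
  have hmuneg : ∀ j : ℕ, j < r - p → mu j < 0 := by
    intro j hj
    have hjr : j < r := lt_of_lt_of_le hj (Nat.sub_le r p)
    rcases lt_or_eq_of_le (hmunonpos j hjr) with h | h
    · exact h
    · exfalso
      have hsub : ∀ i : ℕ, j ≤ i → i < r → mu i = 0 := by
        intro i h1 h2
        refine le_antisymm (hmunonpos i h2) ?_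
        rw [← h]
        exact hmu j i h1 (lt_of_lt_of_le h2 hrm)
      have hle : (Finset.Ico j r).card ≤ z := by
        rw [hz, Fintype.card_subtype]
        apply Finset.card_le_card_of_injOn (fun i => (⟨i % m, Nat.mod_lt _ hm0⟩ : Fin m))
        · intro i hi
          obtain ⟨h1, h2⟩ := Finset.mem_Ico.mp hi
          have him : i < m := lt_of_lt_of_le h2 hrm
          simp only [Finset.mem_filter, Finset.mem_univ, true_and]
          simp only [Finset.coe_filter, Finset.mem_univ, true_and, Set.mem_setOf_eq]
          show mu (i % m) = 0
          rw [Nat.mod_eq_of_lt him]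
          exact hsub i h1 h2
        · intro a ha b hb hab
          obtain ⟨_, ha2⟩ := Finset.mem_Ico.mp ha
          obtain ⟨_, hb2⟩ := Finset.mem_Ico.mp hb
          have : a % m = b % m := congrArg Fin.val hab
          rwa [Nat.mod_eq_of_lt (lt_of_lt_of_le ha2 hrm),
            Nat.mod_eq_of_lt (lt_of_lt_of_le hb2 hrm)] at this
      rw [Nat.card_Ico] at hle
      omega
  -- conjugate by V
  have hB' := hB.conjTranspose_mul_mul_same V
  have heq : Vᴴ * (D + Kᴴ * A * K) * V
      = Matrix.diagonal (fun j : Fin m => (mu j : ℂ))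
        + (Uᴴ * K * V)ᴴ * Matrix.diagonal (fun i : Fin n => (lam i : ℂ)) * (Uᴴ * K * V) := by
    rw [hD, hA]
    simp only [conjTranspose_mul, conjTranspose_conjTranspose]
    rw [Matrix.mul_add, Matrix.add_mul]
    congr 1
    · have e : Vᴴ * (V * Matrix.diagonal (fun j : Fin m => (mu j : ℂ)) * Vᴴ) * V
          = (Vᴴ * V) * Matrix.diagonal (fun j : Fin m => (mu j : ℂ)) * (Vᴴ * V) := by
        simp only [Matrix.mul_assoc]
      rw [e, hV1, Matrix.one_mul, Matrix.mul_one]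
    · simp only [Matrix.mul_assoc]
  rw [heq] at hB'
  exact diag_case n m k (r - p) hkn (le_trans (Nat.sub_le r p) hrm) hrpk lam mu
    hlamnonpos hmuneg (Uᴴ * K * V) hB'
end

section
/- Let A ∈ ℂ^{n×n} be a Hermitian matrix with eigenvalues (counted with multiplicities) λ_1 ≥ … ≥ λ_k > 0 ≥ λ_{k+1} ≥ … ≥ λ_n, let D ∈ ℂ^{m×m} be a Hermitian matrix with eigenvalues (counted with multiplicities) μ_1 ≤ … ≤ μ_r ≤ 0 < μ_{r+1} ≤ … ≤ μ_m, let p = dim ker D, and let κ > 0. Then there exists a matrix K ∈ ℂ^{n×m} with ‖K‖ ≤ κ such that D + K*AK is positive semidefinite if and only if r − p ≤ k and κ²λ_i + μ_i ≥ 0 for all i = 1,…,r−p. -/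
open scoped Matrix ComplexOrder

open Matrix Finset


section helpers
lemma re_star_dot {m : ℕ} (v : Fin m → ℂ) : (star v ⬝ᵥ v).re = ∑ i, ‖v i‖^2 := by
  simp [dotProduct, RCLike.conj_mul, Complex.re_sum, ← Complex.ofReal_pow]

lemma sq_sum_pos {m : ℕ} {x : Fin m → ℂ} (hx : x ≠ 0) : 0 < ∑ j, ‖x j‖^2 := by
  rcases (Finset.sum_nonneg (fun j _ => sq_nonneg ‖x j‖)).lt_or_eq with h | h
  · exact h
  · exfalso; apply hx; funext j
    have := (Finset.sum_eq_zero_iff_of_nonneg (fun j _ => sq_nonneg ‖x j‖)).mp h.symm j (mem_univ j)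
    simpa using pow_eq_zero_iff (n := 2) (by norm_num) |>.mp this

lemma exists_ker {m : ℕ} {E : Type*} [AddCommGroup E] [Module ℂ E] [FiniteDimensional ℂ E]
    (Φ : (Fin m → ℂ) →ₗ[ℂ] E) (h : Module.finrank ℂ E < m) : ∃ x ≠ 0, Φ x = 0 := by
  by_contra hc
  push_neg at hc
  have hinj : Function.Injective Φ := by
    rw [← LinearMap.ker_eq_bot, LinearMap.ker_eq_bot']
    intro x hx; by_contra h0; exact (hc x h0) hx
  have := LinearMap.finrank_le_finrank_of_injective hinj
  rw [Module.finrank_pi] at this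
  simp at this; omega

lemma card_lt (m b : ℕ) (hb : b ≤ m) : Fintype.card {i : Fin m // (i : ℕ) < b} = b := by
  rw [Fintype.card_eq.mpr ⟨{
    toFun := fun i => (⟨i.1, i.2⟩ : Fin b),
    invFun := fun s => ⟨⟨s.1, lt_of_lt_of_le s.2 hb⟩, s.2⟩,
    left_inv := fun i => by apply Subtype.ext; apply Fin.ext; rfl,
    right_inv := fun s => by apply Fin.ext; rfl }⟩, Fintype.card_fin]

lemma card_ge (m a : ℕ) (ha : a ≤ m) : Fintype.card {i : Fin m // a ≤ (i : ℕ)} = m - a := by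
  have e : {i : Fin m // a ≤ (i : ℕ)} ≃ Fin (m - a) := by
    refine ⟨fun i => ⟨i.1.1 - a, ?_⟩, fun s => ⟨⟨a + s.1, ?_⟩, Nat.le_add_right a s.1⟩, ?_, ?_⟩
    · have := i.1.2; have := i.2; omega
    · have := s.2; omega
    · intro i; apply Subtype.ext; apply Fin.ext
      show a + (i.1.1 - a) = i.1.1; have := i.2; omega
    · intro s; apply Fin.ext; show a + s.1 - a = s.1; omega
  rw [Fintype.card_eq.mpr ⟨e⟩, Fintype.card_fin]

lemma re_dot_diag {m : ℕ} (c : ℕ → ℝ) (x : Fin m → ℂ) :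
    (star x ⬝ᵥ (Matrix.diagonal (fun j : Fin m => (c j : ℂ)) *ᵥ x)).re
      = ∑ j : Fin m, c (j : ℕ) * ‖x j‖^2 := by
  simp only [dotProduct, mulVec_diagonal, Pi.star_apply, Complex.re_sum]
  refine Finset.sum_congr rfl fun j _ => ?_
  rw [mul_left_comm, Complex.star_def, RCLike.conj_mul]
  simp [← Complex.ofReal_pow, ← Complex.ofReal_mul]

lemma dot_conj {n m : ℕ} (K : Matrix (Fin n) (Fin m) ℂ) (B : Matrix (Fin n) (Fin n) ℂ) (x : Fin m → ℂ) :
    star x ⬝ᵥ ((Kᴴ * B * K) *ᵥ x) = star (K *ᵥ x) ⬝ᵥ (B *ᵥ (K *ᵥ x)) := by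
  rw [star_mulVec, ← dotProduct_mulVec, ← mulVec_mulVec, ← mulVec_mulVec]
end helpers

lemma norm_euclid {m : ℕ} (x : EuclideanSpace ℂ (Fin m)) : ‖x‖^2 = ∑ i, ‖x i‖^2 := by
  rw [EuclideanSpace.norm_eq, Real.sq_sqrt]; positivity

lemma specNorm_le_iff {n m : ℕ} (K : Matrix (Fin n) (Fin m) ℂ) (κ : ℝ) (hκ : 0 ≤ κ) :
    specNorm K ≤ κ ↔ ∀ x : Fin m → ℂ, ∑ i, ‖(K *ᵥ x) i‖^2 ≤ κ^2 * ∑ j, ‖x j‖^2 := by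
  rw [specNorm, ContinuousLinearMap.opNorm_le_iff hκ]
  constructor
  · intro h x
    have := h ((WithLp.equiv 2 (Fin m → ℂ)).symm x)
    rw [LinearMap.coe_toContinuousLinearMap'] at this
    change ‖(WithLp.equiv 2 (Fin n → ℂ)).symm (K *ᵥ x)‖ ≤ κ * ‖(WithLp.equiv 2 (Fin m → ℂ)).symm x‖ at this
    have h2 : ‖(WithLp.equiv 2 (Fin n → ℂ)).symm (K *ᵥ x)‖^2 ≤ (κ * ‖(WithLp.equiv 2 (Fin m → ℂ)).symm x‖)^2 := by
      apply sq_le_sq' (by nlinarith [norm_nonneg ((WithLp.equiv 2 (Fin n → ℂ)).symm (K *ᵥ x))]) this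
    rw [norm_euclid, mul_pow, norm_euclid] at h2
    exact h2
  · intro h x
    rw [LinearMap.coe_toContinuousLinearMap']
    have hx : Matrix.toEuclideanLin K x = (WithLp.equiv 2 (Fin n → ℂ)).symm (K *ᵥ ((WithLp.equiv 2 (Fin m → ℂ)) x)) := rfl
    rw [hx]
    have h1 := h ((WithLp.equiv 2 (Fin m → ℂ)) x)
    have e1 : ‖(WithLp.equiv 2 (Fin n → ℂ)).symm (K *ᵥ ((WithLp.equiv 2 (Fin m → ℂ)) x))‖^2 = ∑ i, ‖(K *ᵥ ((WithLp.equiv 2 (Fin m → ℂ)) x)) i‖^2 := norm_euclid _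
    have e2 : ‖x‖^2 = ∑ j, ‖((WithLp.equiv 2 (Fin m → ℂ)) x) j‖^2 := norm_euclid x
    nlinarith [norm_nonneg ((WithLp.equiv 2 (Fin n → ℂ)).symm (K *ᵥ ((WithLp.equiv 2 (Fin m → ℂ)) x))), norm_nonneg x, mul_nonneg hκ (norm_nonneg x)]

-- forward direction of diagonal case
lemma diag_forward (n m k r p : ℕ) (hkn : k ≤ n) (hrm : r ≤ m) (hpr : p ≤ r)
    (κ : ℝ) (hκ : 0 < κ) (lam mu : ℕ → ℝ)
    (hlam : ∀ i j : ℕ, i ≤ j → j < n → lam j ≤ lam i)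
    (hlampos : ∀ i : ℕ, i < k → 0 < lam i)
    (hlamnonpos : ∀ i : ℕ, k ≤ i → i < n → lam i ≤ 0)
    (hmu : ∀ i j : ℕ, i ≤ j → j < m → mu i ≤ mu j)
    (hneg : ∀ j : ℕ, j < r - p → mu j < 0)
    (K : Matrix (Fin n) (Fin m) ℂ) (hKn : specNorm K ≤ κ)
    (hKpsd : ((Matrix.diagonal fun j : Fin m => (mu (j:ℕ) : ℂ)) +
      Kᴴ * (Matrix.diagonal fun i : Fin n => (lam (i:ℕ) : ℂ)) * K).PosSemidef) :
    r - p ≤ k ∧ ∀ i : ℕ, i < r - p → 0 ≤ κ ^ 2 * lam i + mu i := by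
  have hKb := (specNorm_le_iff K κ hκ.le).mp hKn
  have quad : ∀ x : Fin m → ℂ,
      0 ≤ (∑ j : Fin m, mu (j:ℕ) * ‖x j‖^2) + ∑ i : Fin n, lam (i:ℕ) * ‖(K *ᵥ x) i‖^2 := by
    intro x
    have h0 := hKpsd.dotProduct_mulVec_nonneg x
    have hre := (Complex.le_def.mp h0).1
    rw [Matrix.add_mulVec, dotProduct_add] at hre
    rw [dot_conj K _ x] at hre
    rw [Complex.add_re, re_dot_diag, re_dot_diag] at hre
    simpa using hre
  have hrpk : r - p ≤ k := by
    by_contra hlt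
    push_neg at hlt
    set Φ : (Fin m → ℂ) →ₗ[ℂ] ({j : Fin m // r - p ≤ (j:ℕ)} → ℂ) × ({s : Fin n // (s:ℕ) < k} → ℂ) :=
      { toFun := fun x => (fun j => x j.1, fun s => (K *ᵥ x) s.1),
        map_add' := fun x y => by ext <;> simp [Matrix.mulVec_add]
        map_smul' := fun c x => by ext <;> simp [Matrix.mulVec_smul] } with hΦ
    obtain ⟨x, hx0, hxker⟩ := exists_ker Φ (by
      rw [Module.finrank_prod, Module.finrank_pi, Module.finrank_pi, card_ge m (r-p) (by omega), card_lt n k hkn]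
      omega)
    have hx1 : ∀ j : Fin m, r - p ≤ (j:ℕ) → x j = 0 := by
      intro j hj
      have := congrFun (congrArg Prod.fst hxker) ⟨j, hj⟩
      simpa [hΦ] using this
    have hx2 : ∀ s : Fin n, (s:ℕ) < k → (K *ᵥ x) s = 0 := by
      intro s hs
      have := congrFun (congrArg Prod.snd hxker) ⟨s, hs⟩
      simpa [hΦ] using this
    have hS2 : (∑ i : Fin n, lam (i:ℕ) * ‖(K *ᵥ x) i‖^2) ≤ 0 := by
      apply Finset.sum_nonpos
      intro i _
      by_cases hik : (i:ℕ) < k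
      · rw [hx2 i hik]; simp
      · exact mul_nonpos_of_nonpos_of_nonneg (hlamnonpos i (by omega) i.2) (sq_nonneg _)
    have hS1 : (∑ j : Fin m, mu (j:ℕ) * ‖x j‖^2) ≤ 0 := by
      apply Finset.sum_nonpos
      intro j _
      by_cases hj : (j:ℕ) < r - p
      · exact mul_nonpos_of_nonpos_of_nonneg (hneg j hj).le (sq_nonneg _)
      · rw [hx1 j (by omega)]; simp
    have hS1' : (∑ j : Fin m, mu (j:ℕ) * ‖x j‖^2) = 0 := le_antisymm hS1 (by linarith [quad x])
    have hall := (Finset.sum_eq_zero_iff_of_nonpos (fun j _ => ?_)).mp hS1'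
    · apply hx0
      funext j
      by_cases hj : (j:ℕ) < r - p
      · have := hall j (mem_univ j)
        have hmne : mu (j:ℕ) ≠ 0 := (hneg j hj).ne
        have : ‖x j‖^2 = 0 := by
          rcases mul_eq_zero.mp this with h | h
          · exact absurd h hmne
          · exact h
        simpa using pow_eq_zero_iff (n := 2) (by norm_num) |>.mp this
      · exact hx1 j (by omega)
    · by_cases hj : (j:ℕ) < r - p
      · exact mul_nonpos_of_nonpos_of_nonneg (hneg j hj).le (sq_nonneg _)
      · rw [hx1 j (by omega)]; simp
  refine ⟨hrpk, fun i hi => ?_⟩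
  have him : i < m := by omega
  have hik : i < k := by omega
  have hin : i < n := by omega
  set Φ : (Fin m → ℂ) →ₗ[ℂ] ({j : Fin m // i + 1 ≤ (j:ℕ)} → ℂ) × ({s : Fin n // (s:ℕ) < i} → ℂ) :=
    { toFun := fun x => (fun j => x j.1, fun s => (K *ᵥ x) s.1),
      map_add' := fun x y => by ext <;> simp [Matrix.mulVec_add]
      map_smul' := fun c x => by ext <;> simp [Matrix.mulVec_smul] } with hΦ
  obtain ⟨x, hx0, hxker⟩ := exists_ker Φ (by
    rw [Module.finrank_prod, Module.finrank_pi, Module.finrank_pi, card_ge m (i+1) (by omega), card_lt n i (by omega)]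
    omega)
  have hx1 : ∀ j : Fin m, i + 1 ≤ (j:ℕ) → x j = 0 := by
    intro j hj
    have := congrFun (congrArg Prod.fst hxker) ⟨j, hj⟩
    simpa [hΦ] using this
  have hx2 : ∀ s : Fin n, (s:ℕ) < i → (K *ᵥ x) s = 0 := by
    intro s hs
    have := congrFun (congrArg Prod.snd hxker) ⟨s, hs⟩
    simpa [hΦ] using this
  have hT : 0 < ∑ j : Fin m, ‖x j‖^2 := sq_sum_pos hx0
  have hS1 : (∑ j : Fin m, mu (j:ℕ) * ‖x j‖^2) ≤ mu i * ∑ j : Fin m, ‖x j‖^2 := by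
    rw [Finset.mul_sum]
    apply Finset.sum_le_sum
    intro j _
    by_cases hj : (j:ℕ) ≤ i
    · exact mul_le_mul_of_nonneg_right (hmu (j:ℕ) i hj him) (sq_nonneg _)
    · rw [hx1 j (by omega)]; simp
  have hS2 : (∑ s : Fin n, lam (s:ℕ) * ‖(K *ᵥ x) s‖^2) ≤ lam i * ∑ s : Fin n, ‖(K *ᵥ x) s‖^2 := by
    rw [Finset.mul_sum]
    apply Finset.sum_le_sum
    intro s _
    by_cases hs : (s:ℕ) < i
    · rw [hx2 s hs]; simp
    · exact mul_le_mul_of_nonneg_right (hlam i (s:ℕ) (by omega) s.2) (sq_nonneg _)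
  have hS3 : lam i * (∑ s : Fin n, ‖(K *ᵥ x) s‖^2) ≤ lam i * (κ^2 * ∑ j : Fin m, ‖x j‖^2) :=
    mul_le_mul_of_nonneg_left (hKb x) (hlampos i hik).le
  have hq := quad x
  have : 0 ≤ (mu i + κ^2 * lam i) * ∑ j : Fin m, ‖x j‖^2 := by nlinarith
  nlinarith

lemma diag_backward (n m k r p : ℕ) (hkn : k ≤ n) (hrm : r ≤ m) (hpr : p ≤ r)
    (κ : ℝ) (hκ : 0 < κ) (lam mu : ℕ → ℝ)
    (hzero : ∀ j : ℕ, r - p ≤ j → j < r → mu j = 0)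
    (hmupos : ∀ i : ℕ, r ≤ i → i < m → 0 < mu i)
    (hrpk : r - p ≤ k)
    (hineq : ∀ i : ℕ, i < r - p → 0 ≤ κ ^ 2 * lam i + mu i) :
    ∃ K : Matrix (Fin n) (Fin m) ℂ, specNorm K ≤ κ ∧
      ((Matrix.diagonal fun j : Fin m => (mu (j:ℕ) : ℂ)) +
        Kᴴ * (Matrix.diagonal fun i : Fin n => (lam (i:ℕ) : ℂ)) * K).PosSemidef := by
  set q := r - p with hq
  have hqm : q ≤ m := by omega
  have hqn : q ≤ n := by omega
  set K : Matrix (Fin n) (Fin m) ℂ :=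
    Matrix.of (fun (i : Fin n) (j : Fin m) =>
      if ((i:ℕ) = (j:ℕ) ∧ (j:ℕ) < q) then (κ:ℂ) else 0) with hK
  have hKx : ∀ (x : Fin m → ℂ) (i : Fin n), (K *ᵥ x) i =
      if h : (i:ℕ) < q then (κ:ℂ) * x ⟨(i:ℕ), by omega⟩ else 0 := by
    intro x i
    show (∑ j : Fin m, K i j * x j) = _
    split
    next h =>
      rw [Finset.sum_eq_single (⟨(i:ℕ), by omega⟩ : Fin m)]
      · rw [hK]; simp [h]
      · intro b _ hb
        rw [hK]
        have : (i:ℕ) ≠ (b:ℕ) := by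
          intro hc; apply hb; apply Fin.ext; simp [← hc]
        simp [Matrix.of_apply, this]
      · intro hc; exact absurd (mem_univ _) hc
    next h =>
      apply Finset.sum_eq_zero
      intro j _
      rw [hK]
      have : ¬((i:ℕ) = (j:ℕ) ∧ (j:ℕ) < q) := by rintro ⟨h1, h2⟩; omega
      simp [Matrix.of_apply, this]
  refine ⟨K, ?_, ?_⟩
  · rw [specNorm_le_iff K κ hκ.le]
    intro x
    set g : ℕ → ℝ := fun t => if h : t < m then ‖x ⟨t, h⟩‖^2 else 0 with hg
    have hgval : ∀ (t : ℕ) (h : t < m), g t = ‖x ⟨t, h⟩‖^2 := fun t h => dif_pos h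
    have hgnn : ∀ t, 0 ≤ g t := by
      intro t; rw [hg]; dsimp only; split <;> [exact sq_nonneg _; rfl]
    have e1 : ∑ i : Fin n, ‖(K *ᵥ x) i‖^2 = ∑ t ∈ Finset.range n, (if t < q then κ^2 * g t else 0) := by
      rw [← Fin.sum_univ_eq_sum_range]
      refine Finset.sum_congr rfl fun i _ => ?_
      rw [hKx x i]
      by_cases h : (i:ℕ) < q
      · have him : (i:ℕ) < m := by omega
        rw [dif_pos h, if_pos h, norm_mul, mul_pow, hgval (i:ℕ) him]
        simp [Complex.norm_real, abs_of_pos hκ]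
      · rw [dif_neg h, if_neg h]; simp
    have e2 : ∑ t ∈ Finset.range n, (if t < q then κ^2 * g t else 0) = κ^2 * ∑ t ∈ Finset.range q, g t := by
      rw [Finset.mul_sum, ← Finset.sum_subset (Finset.range_subset_range.mpr hqn)]
      · refine Finset.sum_congr rfl fun t ht => ?_
        rw [if_pos (Finset.mem_range.mp ht)]
      · intro t _ ht
        rw [if_neg (fun hc => ht (Finset.mem_range.mpr hc))]
    have e3 : ∑ t ∈ Finset.range q, g t ≤ ∑ t ∈ Finset.range m, g t :=
      Finset.sum_le_sum_of_subset_of_nonneg (Finset.range_subset_range.mpr hqm) (fun t _ _ => hgnn t)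
    have e4 : ∑ t ∈ Finset.range m, g t = ∑ j : Fin m, ‖x j‖^2 := by
      rw [← Fin.sum_univ_eq_sum_range]
      exact Finset.sum_congr rfl fun j _ => by rw [hgval (j:ℕ) j.2]
    rw [e1, e2]
    rw [e4] at e3
    nlinarith
  · have heq : (Matrix.diagonal fun j : Fin m => (mu (j:ℕ) : ℂ)) +
        Kᴴ * (Matrix.diagonal fun i : Fin n => (lam (i:ℕ) : ℂ)) * K =
        Matrix.diagonal (fun j : Fin m =>
          ((mu (j:ℕ) + if (j:ℕ) < q then κ^2 * lam (j:ℕ) else 0 : ℝ) : ℂ)) := by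
      ext j j'
      rw [Matrix.mul_assoc, Matrix.add_apply, Matrix.diagonal_apply, Matrix.diagonal_apply]
      have hmulapp : (Kᴴ * ((Matrix.diagonal fun i : Fin n => (lam (i:ℕ) : ℂ)) * K)) j j' =
          ∑ i : Fin n, (starRingEnd ℂ) (K i j) * ((lam (i:ℕ) : ℂ) * K i j') := by
        rw [Matrix.mul_apply]
        refine Finset.sum_congr rfl fun i _ => ?_
        rw [Matrix.conjTranspose_apply, Matrix.diagonal_mul]
        rfl
      rw [hmulapp]
      by_cases hjj : j = j'
      · subst hjj
        rw [if_pos rfl, if_pos rfl]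
        by_cases hj : (j:ℕ) < q
        · rw [if_pos hj]
          have hsum : (∑ i : Fin n, (starRingEnd ℂ) (K i j) * ((lam (i:ℕ) : ℂ) * K i j)) =
              (starRingEnd ℂ) (κ:ℂ) * ((lam (j:ℕ) : ℂ) * (κ:ℂ)) := by
            rw [Finset.sum_eq_single (⟨(j:ℕ), by omega⟩ : Fin n)]
            · rw [hK]; simp [hj]
            · intro b _ hb
              have : (b:ℕ) ≠ (j:ℕ) := by
                intro hc; apply hb; apply Fin.ext; simp [hc]
              rw [hK]; simp [Matrix.of_apply, this]
            · intro hc; exact absurd (mem_univ _) hc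
          rw [hsum, Complex.conj_ofReal]
          push_cast; ring
        · rw [if_neg hj]
          have hsum : (∑ i : Fin n, (starRingEnd ℂ) (K i j) * ((lam (i:ℕ) : ℂ) * K i j)) = 0 := by
            apply Finset.sum_eq_zero
            intro i _
            have : ¬((i:ℕ) = (j:ℕ) ∧ (j:ℕ) < q) := by rintro ⟨h1, h2⟩; omega
            rw [hK]; simp [Matrix.of_apply, this]
          rw [hsum]
          push_cast; ring
      · rw [if_neg hjj, if_neg hjj]
        have hsum : (∑ i : Fin n, (starRingEnd ℂ) (K i j) * ((lam (i:ℕ) : ℂ) * K i j')) = 0 := by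
          apply Finset.sum_eq_zero
          intro i _
          by_cases h1 : (i:ℕ) = (j:ℕ) ∧ (j:ℕ) < q
          · have : ¬((i:ℕ) = (j':ℕ) ∧ (j':ℕ) < q) := by
              rintro ⟨h2, h3⟩
              exact hjj (Fin.ext (h1.1.symm.trans h2))
            rw [hK]; simp [Matrix.of_apply, this]
          · rw [hK]; simp [Matrix.of_apply, h1]
        rw [hsum, add_zero]
    rw [heq, Matrix.posSemidef_diagonal_iff]
    intro j
    rw [Complex.zero_le_real]
    by_cases hj : (j:ℕ) < q
    · rw [if_pos hj]
      have := hineq (j:ℕ) hj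
      linarith
    · rw [if_neg hj]
      simp only [add_zero]
      by_cases hjr : (j:ℕ) < r
      · rw [hzero (j:ℕ) (by omega) hjr]
      · exact (hmupos (j:ℕ) (by omega) j.2).le

lemma unitary_dot {m : ℕ} {W : Matrix (Fin m) (Fin m) ℂ} (hW : W ∈ Matrix.unitaryGroup (Fin m) ℂ)
    (v : Fin m → ℂ) : star (W *ᵥ v) ⬝ᵥ (W *ᵥ v) = star v ⬝ᵥ v := by
  rw [star_mulVec, ← dotProduct_mulVec, mulVec_mulVec]
  have h1 : Wᴴ * W = 1 := by
    rw [← Matrix.star_eq_conjTranspose]; exact (Unitary.mem_iff.mp hW).1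
  rw [h1, Matrix.one_mulVec]

lemma sumsq_unitary {m : ℕ} {W : Matrix (Fin m) (Fin m) ℂ} (hW : W ∈ Matrix.unitaryGroup (Fin m) ℂ)
    (v : Fin m → ℂ) : ∑ i, ‖(W *ᵥ v) i‖^2 = ∑ i, ‖v i‖^2 := by
  rw [← re_star_dot, unitary_dot hW, re_star_dot]

lemma card_Ico' (m a b : ℕ) (hab : a ≤ b) (hb : b ≤ m) :
    Fintype.card {i : Fin m // a ≤ (i:ℕ) ∧ (i:ℕ) < b} = b - a := by
  have e : {i : Fin m // a ≤ (i:ℕ) ∧ (i:ℕ) < b} ≃ Fin (b - a) := by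
    refine ⟨fun i => ⟨i.1.1 - a, by have := i.2.1; have := i.2.2; have := i.1.2; omega⟩,
      fun s => ⟨⟨a + s.1, by have := s.2; omega⟩, Nat.le_add_right a s.1,
        by have := s.2; show a + s.1 < b; omega⟩, ?_, ?_⟩
    · intro i; apply Subtype.ext; apply Fin.ext
      show a + (i.1.1 - a) = i.1.1; have := i.2.1; omega
    · intro s; apply Fin.ext; show a + s.1 - a = s.1; omega
  rw [Fintype.card_eq.mpr ⟨e⟩, Fintype.card_fin]

/-- Let `A ∈ ℂ^{n×n}` be Hermitian with eigenvalues (nonincreasing)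
`lam 0 ≥ … ≥ lam (k-1) > 0 ≥ lam k ≥ … ≥ lam (n-1)`, let `D ∈ ℂ^{m×m}` be Hermitian with
eigenvalues (nondecreasing) `mu 0 ≤ … ≤ mu (r-1) ≤ 0 < mu r ≤ … ≤ mu (m-1)`, let
`p = dim ker D` and let `κ > 0`.  Then there exists `K ∈ ℂ^{n×m}` with `‖K‖ ≤ κ` such that
`D + KᴴAK` is positive semidefinite if and only if `r − p ≤ k` and `κ²·lam i + mu i ≥ 0` for all
(0-indexed) `i < r − p`. -/
theorem exists_possemidef_completion_iff
    (n m k r p : ℕ) (hkn : k ≤ n) (hrm : r ≤ m) (hpr : p ≤ r)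
    (κ : ℝ) (hκ : 0 < κ)
    (A : Matrix (Fin n) (Fin n) ℂ) (D : Matrix (Fin m) (Fin m) ℂ)
    (lam mu : ℕ → ℝ)
    (hlam : ∀ i j : ℕ, i ≤ j → j < n → lam j ≤ lam i)
    (hlampos : ∀ i : ℕ, i < k → 0 < lam i)
    (hlamnonpos : ∀ i : ℕ, k ≤ i → i < n → lam i ≤ 0)
    (hmu : ∀ i j : ℕ, i ≤ j → j < m → mu i ≤ mu j)
    (hmunonpos : ∀ i : ℕ, i < r → mu i ≤ 0)
    (hmupos : ∀ i : ℕ, r ≤ i → i < m → 0 < mu i)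
    (hAdiag : ∃ U ∈ Matrix.unitaryGroup (Fin n) ℂ,
      A = U * Matrix.diagonal (fun i : Fin n => (lam i : ℂ)) * Uᴴ)
    (hDdiag : ∃ V ∈ Matrix.unitaryGroup (Fin m) ℂ,
      D = V * Matrix.diagonal (fun j : Fin m => (mu j : ℂ)) * Vᴴ)
    (hp : p = Module.finrank ℂ (LinearMap.ker D.mulVecLin)) :
    (∃ K : Matrix (Fin n) (Fin m) ℂ, specNorm K ≤ κ ∧ (D + Kᴴ * A * K).PosSemidef) ↔
      (r - p ≤ k ∧ ∀ i : ℕ, i < r - p → 0 ≤ κ ^ 2 * lam i + mu i) := by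
  obtain ⟨U, hU, hA⟩ := hAdiag
  obtain ⟨V, hV, hD⟩ := hDdiag
  set Λd : Matrix (Fin n) (Fin n) ℂ := Matrix.diagonal (fun i : Fin n => (lam (i:ℕ) : ℂ)) with hΛd
  set Md : Matrix (Fin m) (Fin m) ℂ := Matrix.diagonal (fun j : Fin m => (mu (j:ℕ) : ℂ)) with hMd
  have hVV : Vᴴ * V = 1 := by
    rw [← Matrix.star_eq_conjTranspose]; exact (Unitary.mem_iff.mp hV).1
  have hVV' : V * Vᴴ = 1 := by
    rw [← Matrix.star_eq_conjTranspose]; exact (Unitary.mem_iff.mp hV).2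
  have hUU : Uᴴ * U = 1 := by
    rw [← Matrix.star_eq_conjTranspose]; exact (Unitary.mem_iff.mp hU).1
  have hUU' : U * Uᴴ = 1 := by
    rw [← Matrix.star_eq_conjTranspose]; exact (Unitary.mem_iff.mp hU).2
  have hUH : Uᴴ ∈ Matrix.unitaryGroup (Fin n) ℂ := by
    rw [← Matrix.star_eq_conjTranspose]; exact Unitary.star_mem hU
  have hVH : Vᴴ ∈ Matrix.unitaryGroup (Fin m) ℂ := by
    rw [← Matrix.star_eq_conjTranspose]; exact Unitary.star_mem hV
  -- counting zeros of mu
  have hcard0 : Fintype.card {i : Fin m // mu (i:ℕ) = 0} = p := by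
    have hVdet : IsUnit V.det := Matrix.isUnit_det_of_right_inverse hVV'
    have hVHdet : IsUnit (Vᴴ).det := Matrix.isUnit_det_of_right_inverse hVV
    have hrank : D.rank = Md.rank := by
      rw [hD, Matrix.mul_assoc, Matrix.rank_mul_eq_right_of_isUnit_det V _ hVdet,
        Matrix.rank_mul_eq_left_of_isUnit_det Vᴴ Md hVHdet]
    have hrankd : Md.rank = Fintype.card {i : Fin m // mu (i:ℕ) ≠ 0} := by
      rw [hMd, Matrix.rank_diagonal]
      exact Fintype.card_eq.mpr ⟨Equiv.subtypeEquivRight (fun i => by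
        simp [Complex.ofReal_eq_zero, Ne])⟩
    have hsum : D.rank + Module.finrank ℂ (LinearMap.ker D.mulVecLin) = m := by
      have h1 := LinearMap.finrank_range_add_finrank_ker D.mulVecLin
      have h2 : Module.finrank ℂ (Fin m → ℂ) = m := by simp
      rw [h2] at h1
      exact h1
    have hcompl : Fintype.card {i : Fin m // mu (i:ℕ) ≠ 0}
        = m - Fintype.card {i : Fin m // mu (i:ℕ) = 0} := by
      have h3 := Fintype.card_subtype_compl (fun i : Fin m => mu (i:ℕ) = 0)
      rw [Fintype.card_fin] at h3
      rw [← h3]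
    have hle : Fintype.card {i : Fin m // mu (i:ℕ) = 0} ≤ m := by
      have := Fintype.card_subtype_le (fun i : Fin m => mu (i:ℕ) = 0)
      rwa [Fintype.card_fin] at this
    omega
  have hneg : ∀ j : ℕ, j < r - p → mu j < 0 := by
    intro j hj
    rcases lt_or_eq_of_le (hmunonpos j (by omega)) with h | h
    · exact h
    · exfalso
      have hinj : Function.Injective (fun i : {i : Fin m // j ≤ (i:ℕ) ∧ (i:ℕ) < r} =>
          (⟨i.1, le_antisymm (hmunonpos (i.1:ℕ) i.2.2) (h ▸ hmu j (i.1:ℕ) i.2.1 i.1.2)⟩ :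
            {i : Fin m // mu (i:ℕ) = 0})) := by
        intro a b hab
        have h' := congrArg Subtype.val hab
        exact Subtype.ext h'
      have := Fintype.card_le_of_injective _ hinj
      rw [hcard0, card_Ico' m j r (by omega) hrm] at this
      omega
  have hzero : ∀ j : ℕ, r - p ≤ j → j < r → mu j = 0 := by
    intro j hj1 hj2
    rcases lt_or_eq_of_le (hmunonpos j hj2) with h | h
    · exfalso
      have hinj : Function.Injective (fun i : {i : Fin m // mu (i:ℕ) = 0} =>
          (⟨i.1, by
            have hir : (i.1:ℕ) < r := by
              by_contra hc
              exact absurd i.2 (hmupos (i.1:ℕ) (by omega) i.1.2).ne'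
            have hji : j + 1 ≤ (i.1:ℕ) := by
              by_contra hc
              have := hmu (i.1:ℕ) j (by omega) (by omega)
              rw [i.2] at this
              linarith
            exact ⟨hji, hir⟩⟩ :
            {i : Fin m // j + 1 ≤ (i:ℕ) ∧ (i:ℕ) < r})) := by
        intro a b hab
        have h' := congrArg Subtype.val hab
        exact Subtype.ext h'
      have := Fintype.card_le_of_injective _ hinj
      rw [hcard0, card_Ico' m (j+1) r (by omega) hrm] at this
      omega
    · exact h
  -- transfer to diagonal case
  have hcanV : ∀ X : Matrix (Fin m) (Fin m) ℂ, Vᴴ * (V * X) = X := fun X => by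
    rw [← Matrix.mul_assoc, hVV, Matrix.one_mul]
  have hcanU : ∀ X : Matrix (Fin n) (Fin m) ℂ, Uᴴ * (U * X) = X := fun X => by
    rw [← Matrix.mul_assoc, hUU, Matrix.one_mul]
  have main_equiv : (∃ K : Matrix (Fin n) (Fin m) ℂ, specNorm K ≤ κ ∧ (D + Kᴴ * A * K).PosSemidef) ↔
      (∃ L : Matrix (Fin n) (Fin m) ℂ, specNorm L ≤ κ ∧ (Md + Lᴴ * Λd * L).PosSemidef) := by
    constructor
    · rintro ⟨K, h1, h2⟩
      refine ⟨Uᴴ * K * V, ?_, ?_⟩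
      · rw [specNorm_le_iff _ κ hκ.le]
        intro x
        have hx : (Uᴴ * K * V) *ᵥ x = Uᴴ *ᵥ (K *ᵥ (V *ᵥ x)) := by
          rw [mulVec_mulVec, mulVec_mulVec]
        rw [hx, sumsq_unitary hUH (K *ᵥ (V *ᵥ x))]
        calc ∑ i, ‖(K *ᵥ (V *ᵥ x)) i‖^2 ≤ κ^2 * ∑ j, ‖(V *ᵥ x) j‖^2 :=
              (specNorm_le_iff K κ hκ.le).mp h1 (V *ᵥ x)
          _ = κ^2 * ∑ j, ‖x j‖^2 := by rw [sumsq_unitary hV x]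
      · have key : Md + (Uᴴ * K * V)ᴴ * Λd * (Uᴴ * K * V) = Vᴴ * (D + Kᴴ * A * K) * V := by
          rw [hD, hA]
          simp only [Matrix.conjTranspose_mul, Matrix.conjTranspose_conjTranspose,
            Matrix.mul_add, Matrix.add_mul, Matrix.mul_assoc, hcanV, hcanU, hVV, hUU,
            Matrix.mul_one, Matrix.one_mul]
        rw [key]
        exact h2.conjTranspose_mul_mul_same V
    · rintro ⟨L, h1, h2⟩
      refine ⟨U * L * Vᴴ, ?_, ?_⟩
      · rw [specNorm_le_iff _ κ hκ.le]
        intro x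
        have hx : (U * L * Vᴴ) *ᵥ x = U *ᵥ (L *ᵥ (Vᴴ *ᵥ x)) := by
          rw [mulVec_mulVec, mulVec_mulVec]
        rw [hx, sumsq_unitary hU (L *ᵥ (Vᴴ *ᵥ x))]
        calc ∑ i, ‖(L *ᵥ (Vᴴ *ᵥ x)) i‖^2 ≤ κ^2 * ∑ j, ‖(Vᴴ *ᵥ x) j‖^2 :=
              (specNorm_le_iff L κ hκ.le).mp h1 (Vᴴ *ᵥ x)
          _ = κ^2 * ∑ j, ‖x j‖^2 := by rw [sumsq_unitary hVH x]
      · have key : D + (U * L * Vᴴ)ᴴ * A * (U * L * Vᴴ) = Vᴴᴴ * (Md + Lᴴ * Λd * L) * Vᴴ := by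
          rw [hD, hA]
          simp only [Matrix.conjTranspose_mul, Matrix.conjTranspose_conjTranspose,
            Matrix.mul_add, Matrix.add_mul, Matrix.mul_assoc, hcanV, hcanU, hVV, hUU,
            Matrix.mul_one, Matrix.one_mul]
        rw [key]
        exact h2.conjTranspose_mul_mul_same Vᴴ
  rw [main_equiv]
  constructor
  · rintro ⟨L, h1, h2⟩
    exact diag_forward n m k r p hkn hrm hpr κ hκ lam mu hlam hlampos hlamnonpos hmu hneg L h1 h2
  · rintro ⟨h1, h2⟩
    exact diag_backward n m k r p hkn hrm hpr κ hκ lam mu hzero hmupos h1 h2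
end

section
/- Let A ∈ ℂ^{n×n} be Hermitian with eigenvalues λ_1 ≥ … ≥ λ_k > 0 ≥ λ_{k+1} ≥ … ≥ λ_n and D ∈ ℂ^{m×m} be Hermitian with eigenvalues μ_1 ≤ … ≤ μ_r ≤ 0 < μ_{r+1} ≤ … ≤ μ_m, with p = dim ker D. Let κ > 0 and assume r − p ≤ k and κ²λ_i + μ_i ≥ 0 for i = 1,…,r−p. For i = 1,…,r−p choose 0 < ε_i ≤ κ² with ε_iλ_i + μ_i ≥ 0, and set ε_j = 0 for j = r−p+1,…,r. Let U ∈ ℂ^{n×n}, V ∈ ℂ^{m×m} be unitary with A = U·diag(λ_1,…,λ_n)·U* and D = V·diag(μ_1,…,μ_m)·V*, let E ∈ ℂ^{n×m} have (i,i)-entry √ε_i for i = 1,…,r and all other entries zero, and set K := U E V*. Then ‖K‖ ≤ κ, and the characteristic polynomial of the block matrix S = [[A, −AK],[K*A, D]] ∈ ℂ^{(n+m)×(n+m)} is (up to sign) ∏_{i=r−p+1}^{n}(λ_i − η) · ∏_{j=r−p+1}^{m}(μ_j − η) · ∏_{i=1}^{r−p}(η² − (λ_i + μ_i)η + λ_i(μ_i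 + ε_iλ_i)); in particular the eigenvalues of S are λ_{r−p+1},…,λ_n, μ_{r−p+1},…,μ_m, and η_i^± = (λ_i + μ_i)/2 ± λ_i√(α_i − ε_i) for i = 1,…,r−p, where α_i := (λ_i − μ_i)²/(4λ_i²). -/
open scoped Matrix ComplexOrder
open Polynomial

/-- The principal square root of a real number, as a complex number. -/
noncomputable def sqrtC (x : ℝ) : ℂ :=
  if 0 ≤ x then (Real.sqrt x : ℂ) else Complex.I * (Real.sqrt (-x) : ℂ)

lemma sqrtC_sq (t : ℝ) : sqrtC t ^ 2 = (t : ℂ) := by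
  unfold sqrtC
  split_ifs with h
  · rw [← Complex.ofReal_pow, Real.sq_sqrt h]
  · rw [mul_pow, Complex.I_sq, ← Complex.ofReal_pow, Real.sq_sqrt (by linarith)]
    push_cast; ring

lemma Ediag {n m r : ℕ} (eps : ℕ → ℝ) (hge : ∀ j : ℕ, j < r → 0 ≤ eps j)
    (E : Matrix (Fin n) (Fin m) ℂ)
    (hE : ∀ (i : Fin n) (j : Fin m),
      E i j = if (i : ℕ) = (j : ℕ) ∧ (j : ℕ) < r then (Real.sqrt (eps j) : ℂ) else 0)
    (g : ℕ → ℂ) :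
    Eᴴ * Matrix.diagonal (fun i : Fin n => g i) * E =
      Matrix.diagonal (fun j : Fin m =>
        if (j : ℕ) < r ∧ (j : ℕ) < n then (eps j : ℂ) * g j else 0) := by
  ext j j'
  rw [Matrix.mul_apply]
  have hrow : ∀ i : Fin n, (Eᴴ * Matrix.diagonal (fun i : Fin n => g i)) j i =
      star (E i j) * g i := by
    intro i
    rw [Matrix.mul_diagonal, Matrix.conjTranspose_apply]
  simp only [hrow]
  by_cases hjj : j = j'
  · subst hjj
    by_cases hc : (j : ℕ) < r ∧ (j : ℕ) < n
    · rw [Matrix.diagonal_apply_eq, if_pos hc]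
      rw [Finset.sum_eq_single (⟨(j : ℕ), hc.2⟩ : Fin n)]
      · rw [hE, if_pos ⟨rfl, hc.1⟩]
        rw [show star ((Real.sqrt (eps j) : ℂ)) = (Real.sqrt (eps j) : ℂ) by
          rw [Complex.star_def, Complex.conj_ofReal]]
        have : (Real.sqrt (eps j) : ℂ) * g ((⟨(j : ℕ), hc.2⟩ : Fin n) : ℕ) *
            (Real.sqrt (eps j) : ℂ) = ((Real.sqrt (eps j) * Real.sqrt (eps j) : ℝ) : ℂ) * g (j : ℕ) := by
          push_cast; ring
        rw [this, Real.mul_self_sqrt (hge _ hc.1)]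
      · intro i _ hi
        rw [hE, if_neg, mul_zero]
        rintro ⟨h1, -⟩
        exact hi (Fin.ext h1)
      · intro h; exact absurd (Finset.mem_univ _) h
    · rw [Matrix.diagonal_apply_eq, if_neg hc]
      apply Finset.sum_eq_zero
      intro i _
      rw [hE, if_neg, mul_zero]
      rintro ⟨h1, h2⟩
      exact hc ⟨h2, h1 ▸ i.isLt⟩
  · rw [Matrix.diagonal_apply_ne _ hjj]
    apply Finset.sum_eq_zero
    intro i _
    by_cases h1 : (i : ℕ) = (j : ℕ) ∧ (j : ℕ) < r
    · rw [hE i j', if_neg, mul_zero]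
      rintro ⟨h2, -⟩
      exact hjj (Fin.ext (h1.1 ▸ h2))
    · rw [hE i j, if_neg h1]
      simp

lemma eval_charpoly' {ι : Type*} [Fintype ι] [DecidableEq ι] {R : Type*} [CommRing R]
    (M : Matrix ι ι R) (x : R) :
    M.charpoly.eval x = (x • (1 : Matrix ι ι R) - M).det := by
  rw [Matrix.charpoly, ← Polynomial.coe_evalRingHom, RingHom.map_det]
  congr 1
  ext i j
  by_cases h : i = j <;>
    simp [Matrix.charmatrix_apply, Matrix.map_apply, Matrix.diagonal_apply, h,
      Matrix.one_apply, Matrix.sub_apply, Matrix.smul_apply]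

lemma spectrum_eq_charpoly_roots {ι : Type*} [Fintype ι] [DecidableEq ι]
    (M : Matrix ι ι ℂ) :
    spectrum ℂ M = {x : ℂ | M.charpoly.eval x = 0} := by
  ext x
  rw [spectrum.mem_iff, Algebra.algebraMap_eq_smul_one, Matrix.isUnit_iff_isUnit_det,
    isUnit_iff_ne_zero, not_ne_iff, Set.mem_setOf_eq, eval_charpoly']

lemma det_conj_unitary {ι : Type*} [Fintype ι] [DecidableEq ι]
    (W M : Matrix ι ι ℂ) (h1 : W * Wᴴ = 1) (x : ℂ) :
    (x • (1 : Matrix ι ι ℂ) - W * M * Wᴴ).det = (x • (1 : Matrix ι ι ℂ) - M).det := by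
  have : x • (1 : Matrix ι ι ℂ) - W * M * Wᴴ = W * (x • (1 : Matrix ι ι ℂ) - M) * Wᴴ := by
    rw [Matrix.mul_sub, Matrix.sub_mul, Matrix.mul_smul, Matrix.mul_one, Matrix.smul_mul, h1]
  rw [this, Matrix.det_mul, Matrix.det_mul, mul_comm W.det, mul_assoc, ← Matrix.det_mul, h1,
    Matrix.det_one, mul_one]

lemma quad_factor (l mu e : ℝ) (hl : 0 < l) (x : ℂ) :
    x ^ 2 - ((l + mu : ℝ) : ℂ) * x + ((l * (mu + e * l) : ℝ) : ℂ) =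
      (x - ((((l + mu) / 2 : ℝ) : ℂ) + (l : ℂ) * sqrtC ((l - mu) ^ 2 / (4 * l ^ 2) - e))) *
      (x - ((((l + mu) / 2 : ℝ) : ℂ) - (l : ℂ) * sqrtC ((l - mu) ^ 2 / (4 * l ^ 2) - e))) := by
  have hl0 : (l : ℂ) ≠ 0 := by exact_mod_cast hl.ne'
  have key : ((l : ℂ) * sqrtC ((l - mu) ^ 2 / (4 * l ^ 2) - e)) ^ 2 =
      ((l : ℂ) - (mu : ℂ)) ^ 2 / 4 - (e : ℂ) * (l : ℂ) ^ 2 := by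
    rw [mul_pow, sqrtC_sq]
    push_cast
    field_simp
  have expand : (x - ((((l + mu) / 2 : ℝ) : ℂ) + (l : ℂ) * sqrtC ((l - mu) ^ 2 / (4 * l ^ 2) - e))) *
      (x - ((((l + mu) / 2 : ℝ) : ℂ) - (l : ℂ) * sqrtC ((l - mu) ^ 2 / (4 * l ^ 2) - e))) =
      (x - (((l + mu) / 2 : ℝ) : ℂ)) ^ 2 -
        ((l : ℂ) * sqrtC ((l - mu) ^ 2 / (4 * l ^ 2) - e)) ^ 2 := by ring
  rw [expand, key]
  push_cast
  ring

lemma star_dot_self {q : ℕ} (w : Fin q → ℂ) :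
    dotProduct (star w) w = ((∑ i, ‖w i‖ ^ 2 : ℝ) : ℂ) := by
  rw [dotProduct]
  push_cast
  exact Finset.sum_congr rfl fun i _ => by
    rw [Pi.star_apply, Complex.star_def]
    exact RCLike.conj_mul (w i)

/-- Spectrum of the block matrix `S = [[A, −AK],[KᴴA, D]]` for the particular contraction
`K = U E Vᴴ` built from the eigenvalue data of `A` and `D` and parameters `ε i` (positive
semidefinite case): `‖K‖ ≤ κ`, the characteristic polynomial of `S` is the (monic version
of the) product `∏_{i≥r−p}(X − lam i) ∏_{j≥r−p}(X − mu j) ∏_{i<r−p}(X² − (lam i + mu i)X +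
lam i(mu i + ε i·lam i))`, and the eigenvalues of `S` are `lam i` (`r−p ≤ i < n`),
`mu j` (`r−p ≤ j < m`) and `η_i^± = (lam i + mu i)/2 ± lam i·√(α i − ε i)` (`i < r−p`),
where `α i = (lam i − mu i)²/(4(lam i)²)`. -/
theorem spectrum_blockMatrix_semidef
    (n m k r p : ℕ) (hkn : k ≤ n) (hrm : r ≤ m) (hpr : p ≤ r)
    (κ : ℝ) (hκ : 0 < κ)
    (lam mu eps : ℕ → ℝ)
    (hlam : ∀ i j : ℕ, i ≤ j → j < n → lam j ≤ lam i)
    (hlampos : ∀ i : ℕ, i < k → 0 < lam i)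
    (hlamnonpos : ∀ i : ℕ, k ≤ i → i < n → lam i ≤ 0)
    (hmu : ∀ i j : ℕ, i ≤ j → j < m → mu i ≤ mu j)
    (hmunonpos : ∀ i : ℕ, i < r → mu i ≤ 0)
    (hmupos : ∀ i : ℕ, r ≤ i → i < m → 0 < mu i)
    (D : Matrix (Fin m) (Fin m) ℂ)
    (hp : p = Module.finrank ℂ (LinearMap.ker D.mulVecLin))
    (hrpk : r - p ≤ k)
    (hcond : ∀ i : ℕ, i < r - p → 0 ≤ κ ^ 2 * lam i + mu i)
    (heps0 : ∀ i : ℕ, i < r - p → 0 < eps i)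
    (hepsκ : ∀ i : ℕ, i < r - p → eps i ≤ κ ^ 2)
    (hepsc : ∀ i : ℕ, i < r - p → 0 ≤ eps i * lam i + mu i)
    (hepsz : ∀ j : ℕ, r - p ≤ j → j < r → eps j = 0)
    (U : Matrix (Fin n) (Fin n) ℂ) (hU : U ∈ Matrix.unitaryGroup (Fin n) ℂ)
    (V : Matrix (Fin m) (Fin m) ℂ) (hV : V ∈ Matrix.unitaryGroup (Fin m) ℂ)
    (A : Matrix (Fin n) (Fin n) ℂ)
    (hA : A = U * Matrix.diagonal (fun i : Fin n => (lam i : ℂ)) * Uᴴ)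
    (hD : D = V * Matrix.diagonal (fun j : Fin m => (mu j : ℂ)) * Vᴴ)
    (E : Matrix (Fin n) (Fin m) ℂ)
    (hE : ∀ (i : Fin n) (j : Fin m),
      E i j = if (i : ℕ) = (j : ℕ) ∧ (j : ℕ) < r then (Real.sqrt (eps j) : ℂ) else 0)
    (K : Matrix (Fin n) (Fin m) ℂ) (hK : K = U * E * Vᴴ)
    (S : Matrix (Fin n ⊕ Fin m) (Fin n ⊕ Fin m) ℂ)
    (hS : S = Matrix.fromBlocks A (-(A * K)) (Kᴴ * A) D) :
    specNorm K ≤ κ ∧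
    S.charpoly =
      (∏ i ∈ Finset.Ico (r - p) n, (X - C ((lam i : ℂ)))) *
      (∏ j ∈ Finset.Ico (r - p) m, (X - C ((mu j : ℂ)))) *
      (∏ i ∈ Finset.range (r - p),
        (X ^ 2 - C (((lam i + mu i : ℝ) : ℂ)) * X
          + C (((lam i * (mu i + eps i * lam i) : ℝ) : ℂ)))) ∧
    spectrum ℂ S =
      ((fun i : ℕ => ((lam i : ℂ))) '' (Set.Ico (r - p) n)) ∪
      ((fun j : ℕ => ((mu j : ℂ))) '' (Set.Ico (r - p) m)) ∪
      {η : ℂ | ∃ i : ℕ, i < r - p ∧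
        (η = (((lam i + mu i) / 2 : ℝ) : ℂ)
              + (lam i : ℂ) * sqrtC ((lam i - mu i) ^ 2 / (4 * lam i ^ 2) - eps i) ∨
         η = (((lam i + mu i) / 2 : ℝ) : ℂ)
              - (lam i : ℂ) * sqrtC ((lam i - mu i) ^ 2 / (4 * lam i ^ 2) - eps i))} := by
  have hrpn : r - p ≤ n := hrpk.trans hkn
  have hrpm : r - p ≤ m := (Nat.sub_le r p).trans hrm
  have hge : ∀ j : ℕ, j < r → 0 ≤ eps j := by
    intro j hj
    rcases lt_or_ge j (r - p) with h | h
    · exact (heps0 j h).le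
    · rw [hepsz j h hj]
  have hUU : Uᴴ * U = 1 := by
    have := Matrix.mem_unitaryGroup_iff'.mp hU
    rwa [Matrix.star_eq_conjTranspose] at this
  have hUU' : U * Uᴴ = 1 := by
    have := Matrix.mem_unitaryGroup_iff.mp hU
    rwa [Matrix.star_eq_conjTranspose] at this
  have hVV : Vᴴ * V = 1 := by
    have := Matrix.mem_unitaryGroup_iff'.mp hV
    rwa [Matrix.star_eq_conjTranspose] at this
  have hVV' : V * Vᴴ = 1 := by
    have := Matrix.mem_unitaryGroup_iff.mp hV
    rwa [Matrix.star_eq_conjTranspose] at this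
  set L : Matrix (Fin n) (Fin n) ℂ := Matrix.diagonal (fun i : Fin n => (lam i : ℂ)) with hLdef
  set Md : Matrix (Fin m) (Fin m) ℂ := Matrix.diagonal (fun j : Fin m => (mu j : ℂ)) with hMdef
  set S₀ : Matrix (Fin n ⊕ Fin m) (Fin n ⊕ Fin m) ℂ :=
    Matrix.fromBlocks L (-(L * E)) (Eᴴ * L) Md with hS₀def
  set W : Matrix (Fin n ⊕ Fin m) (Fin n ⊕ Fin m) ℂ := Matrix.fromBlocks U 0 0 V with hWdef
  have hWW : W * Wᴴ = 1 := by
    rw [hWdef]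
    simp only [Matrix.fromBlocks_conjTranspose, Matrix.conjTranspose_zero,
      Matrix.fromBlocks_multiply, Matrix.mul_zero, Matrix.zero_mul, add_zero, zero_add,
      hUU', hVV']
    exact Matrix.fromBlocks_one
  have hcancelU : ∀ (X : Matrix (Fin n) (Fin m) ℂ), Uᴴ * (U * X) = X := by
    intro X; rw [← Matrix.mul_assoc, hUU, Matrix.one_mul]
  have hcancelU' : ∀ (X : Matrix (Fin n) (Fin n) ℂ), Uᴴ * (U * X) = X := by
    intro X; rw [← Matrix.mul_assoc, hUU, Matrix.one_mul]
  have hAK : A * K = U * (L * E) * Vᴴ := by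
    rw [hA, hK]
    simp only [Matrix.mul_assoc]
    rw [hcancelU]
  have hKA : Kᴴ * A = V * (Eᴴ * L) * Uᴴ := by
    rw [hK, hA]
    simp only [Matrix.conjTranspose_mul, Matrix.conjTranspose_conjTranspose, Matrix.mul_assoc]
    rw [hcancelU']
  have hconj : S = W * S₀ * Wᴴ := by
    have hblocks : W * S₀ * Wᴴ = Matrix.fromBlocks (U * L * Uᴴ) (U * (-(L * E)) * Vᴴ)
        (V * (Eᴴ * L) * Uᴴ) (V * Md * Vᴴ) := by
      rw [hWdef, hS₀def]
      simp only [Matrix.fromBlocks_conjTranspose, Matrix.conjTranspose_zero,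
        Matrix.fromBlocks_multiply, Matrix.mul_zero, Matrix.zero_mul, add_zero, zero_add]
    rw [hS, hblocks, hAK, hKA, hA, hD]
    simp only [Matrix.mul_neg, Matrix.neg_mul]
  set P : Polynomial ℂ :=
      (∏ i ∈ Finset.Ico (r - p) n, (X - C ((lam i : ℂ)))) *
      (∏ j ∈ Finset.Ico (r - p) m, (X - C ((mu j : ℂ)))) *
      (∏ i ∈ Finset.range (r - p),
        (X ^ 2 - C (((lam i + mu i : ℝ) : ℂ)) * X
          + C (((lam i * (mu i + eps i * lam i) : ℝ) : ℂ)))) with hPdef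
  have hP : ∀ x : ℂ, (∀ i : Fin n, x ≠ (lam (i : ℕ) : ℂ)) →
      S.charpoly.eval x = P.eval x := by
    intro x hx
    rw [eval_charpoly', hconj, det_conj_unitary _ _ hWW]
    have h1 : (x • (1 : Matrix (Fin n ⊕ Fin m) (Fin n ⊕ Fin m) ℂ) - S₀) =
        Matrix.fromBlocks (Matrix.diagonal fun i : Fin n => x - (lam (i : ℕ) : ℂ)) (L * E)
          (-(Eᴴ * L)) (Matrix.diagonal fun j : Fin m => x - (mu (j : ℕ) : ℂ)) := by
      rw [hS₀def, hLdef, hMdef]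
      ext i j
      rcases i with i | i <;> rcases j with j | j <;>
        simp only [Matrix.sub_apply, Matrix.smul_apply, Matrix.one_apply, Matrix.neg_apply,
          Matrix.fromBlocks_apply₁₁, Matrix.fromBlocks_apply₁₂, Matrix.fromBlocks_apply₂₁,
          Matrix.fromBlocks_apply₂₂, Matrix.diagonal_apply, smul_eq_mul, Sum.inl.injEq,
          Sum.inr.injEq, reduceCtorEq] <;>
        split_ifs <;> (try ring) <;> simp_all
    rw [h1]
    have hd0 : ∀ i : Fin n, x - (lam (i : ℕ) : ℂ) ≠ 0 := fun i => sub_ne_zero.mpr (hx i)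
    obtain ⟨c, hc⟩ : ∃ c : ℕ → ℂ, c = fun a =>
        if a < r ∧ a < n then (eps a : ℂ) * ((lam a : ℂ) * (x - (lam a : ℂ))⁻¹ * (lam a : ℂ))
        else 0 := ⟨_, rfl⟩
    set d : Fin n → ℂ := fun i => x - (lam (i : ℕ) : ℂ) with hddef
    letI : Invertible (Matrix.diagonal d) :=
      ⟨Matrix.diagonal (fun i => (d i)⁻¹), by
        rw [Matrix.diagonal_mul_diagonal]
        rw [show (fun i => (d i)⁻¹ * d i) = fun _ => (1 : ℂ) from
          funext fun i => inv_mul_cancel₀ (hd0 i)]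
        exact Matrix.diagonal_one, by
        rw [Matrix.diagonal_mul_diagonal]
        rw [show (fun i => d i * (d i)⁻¹) = fun _ => (1 : ℂ) from
          funext fun i => mul_inv_cancel₀ (hd0 i)]
        exact Matrix.diagonal_one⟩
    rw [Matrix.det_fromBlocks₁₁]
    have hinvOf : ⅟ (Matrix.diagonal d) = Matrix.diagonal (fun i => (d i)⁻¹) := rfl
    rw [hinvOf]
    -- compute the Schur complement
    have hmid : -(Eᴴ * L) * Matrix.diagonal (fun i => (d i)⁻¹) * (L * E) =
        -(Eᴴ * Matrix.diagonal (fun i : Fin n =>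
            ((lam (i : ℕ) : ℂ) * (x - (lam (i : ℕ) : ℂ))⁻¹ * (lam (i : ℕ) : ℂ))) * E) := by
      rw [hLdef, hddef]
      simp only [Matrix.neg_mul, Matrix.mul_neg, neg_inj]
      rw [Matrix.mul_assoc, Matrix.mul_assoc, ← Matrix.mul_assoc (Matrix.diagonal _),
        Matrix.diagonal_mul_diagonal, ← Matrix.mul_assoc (Matrix.diagonal _),
        Matrix.diagonal_mul_diagonal, ← Matrix.mul_assoc]
    rw [hmid, Ediag eps hge E hE
      (fun a => (lam a : ℂ) * (x - (lam a : ℂ))⁻¹ * (lam a : ℂ)), sub_neg_eq_add]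
    rw [show (Matrix.diagonal fun j : Fin m =>
        if (j : ℕ) < r ∧ (j : ℕ) < n then
          (eps (j : ℕ) : ℂ) * ((lam (j : ℕ) : ℂ) * (x - (lam (j : ℕ) : ℂ))⁻¹ * (lam (j : ℕ) : ℂ))
        else 0) = Matrix.diagonal fun j : Fin m => c (j : ℕ) from by rw [hc]]
    rw [Matrix.diagonal_add, Matrix.det_diagonal, Matrix.det_diagonal]
    have hprodn : (∏ i : Fin n, d i) = ∏ i ∈ Finset.range n, (x - (lam i : ℂ)) :=
      Fin.prod_univ_eq_prod_range (fun a => x - (lam a : ℂ)) n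
    have hprodm : (∏ j : Fin m, ((x - (mu (j : ℕ) : ℂ)) + c (j : ℕ))) =
        ∏ j ∈ Finset.range m, ((x - (mu j : ℂ)) + c j) :=
      Fin.prod_univ_eq_prod_range (fun a => (x - (mu a : ℂ)) + c a) m
    rw [hprodn, hprodm]
    -- split ranges
    rw [← Finset.prod_range_mul_prod_Ico (fun a => x - (lam a : ℂ)) hrpn,
      ← Finset.prod_range_mul_prod_Ico (fun a => (x - (mu a : ℂ)) + c a) hrpm]
    have hIcom : ∀ j ∈ Finset.Ico (r - p) m, ((x - (mu j : ℂ)) + c j) = x - (mu j : ℂ) := by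
      intro j hj
      rw [Finset.mem_Ico] at hj
      have : c j = 0 := by
        rw [hc]
        dsimp only
        split_ifs with h
        · rw [hepsz j hj.1 h.1]; simp
        · rfl
      rw [this, add_zero]
    rw [Finset.prod_congr rfl hIcom]
    have hpair : (∏ i ∈ Finset.range (r - p), (x - (lam i : ℂ))) *
        (∏ j ∈ Finset.range (r - p), ((x - (mu j : ℂ)) + c j)) =
        ∏ i ∈ Finset.range (r - p),
          (x ^ 2 - ((lam i + mu i : ℝ) : ℂ) * x + ((lam i * (mu i + eps i * lam i) : ℝ) : ℂ)) := by
      rw [← Finset.prod_mul_distrib]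
      apply Finset.prod_congr rfl
      intro i hi
      rw [Finset.mem_range] at hi
      have hir : i < r := lt_of_lt_of_le hi (Nat.sub_le r p)
      have hin : i < n := lt_of_lt_of_le hi hrpn
      have hx0 : x - (lam i : ℂ) ≠ 0 := sub_ne_zero.mpr (hx ⟨i, hin⟩)
      rw [hc]
      dsimp only
      rw [if_pos ⟨hir, hin⟩]
      push_cast
      field_simp
      ring
    rw [hPdef]
    simp only [eval_mul, eval_prod, eval_add, eval_sub, eval_pow, eval_X, eval_C]
    calc (∏ i ∈ Finset.range (r - p), (x - (lam i : ℂ))) *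
          (∏ i ∈ Finset.Ico (r - p) n, (x - (lam i : ℂ))) *
          ((∏ j ∈ Finset.range (r - p), ((x - (mu j : ℂ)) + c j)) *
            (∏ j ∈ Finset.Ico (r - p) m, (x - (mu j : ℂ)))) =
        ((∏ i ∈ Finset.Ico (r - p) n, (x - (lam i : ℂ))) *
          (∏ j ∈ Finset.Ico (r - p) m, (x - (mu j : ℂ)))) *
          ((∏ i ∈ Finset.range (r - p), (x - (lam i : ℂ))) *
            (∏ j ∈ Finset.range (r - p), ((x - (mu j : ℂ)) + c j))) := by ring
      _ = _ := by rw [hpair]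
  have hcp : S.charpoly = P := by
    have hsub : (Set.range fun i : Fin n => (lam (i : ℕ) : ℂ))ᶜ ⊆
        {x : ℂ | S.charpoly.eval x = P.eval x} :=
      fun x hx => hP x (fun i h => hx ⟨i, h.symm⟩)
    exact Polynomial.eq_of_infinite_eval_eq _ _
      (((Set.finite_range _).infinite_compl).mono hsub)
  have hspec : spectrum ℂ S =
      ((fun i : ℕ => ((lam i : ℂ))) '' (Set.Ico (r - p) n)) ∪
      ((fun j : ℕ => ((mu j : ℂ))) '' (Set.Ico (r - p) m)) ∪
      {η : ℂ | ∃ i : ℕ, i < r - p ∧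
        (η = (((lam i + mu i) / 2 : ℝ) : ℂ)
              + (lam i : ℂ) * sqrtC ((lam i - mu i) ^ 2 / (4 * lam i ^ 2) - eps i) ∨
         η = (((lam i + mu i) / 2 : ℝ) : ℂ)
              - (lam i : ℂ) * sqrtC ((lam i - mu i) ^ 2 / (4 * lam i ^ 2) - eps i))} := by
    rw [spectrum_eq_charpoly_roots, hcp, hPdef]
    ext x
    have hquad : ∀ i : ℕ, i < r - p →
        ((x ^ 2 - ((lam i + mu i : ℝ) : ℂ) * x + ((lam i * (mu i + eps i * lam i) : ℝ) : ℂ) = 0) ↔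
          (x = (((lam i + mu i) / 2 : ℝ) : ℂ)
              + (lam i : ℂ) * sqrtC ((lam i - mu i) ^ 2 / (4 * lam i ^ 2) - eps i) ∨
           x = (((lam i + mu i) / 2 : ℝ) : ℂ)
              - (lam i : ℂ) * sqrtC ((lam i - mu i) ^ 2 / (4 * lam i ^ 2) - eps i))) := by
      intro i hi
      rw [quad_factor (lam i) (mu i) (eps i) (hlampos i (lt_of_lt_of_le hi hrpk)) x,
        mul_eq_zero, sub_eq_zero, sub_eq_zero]
    simp only [Set.mem_setOf_eq, eval_mul, eval_prod, eval_sub, eval_add, eval_pow, eval_X,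
      eval_C, mul_eq_zero, Finset.prod_eq_zero_iff, Set.mem_union, Set.mem_image, Set.mem_Ico,
      Finset.mem_Ico, Finset.mem_range, sub_eq_zero]
    constructor
    · rintro ((⟨i, hi, hxe⟩ | ⟨j, hj, hxe⟩) | ⟨i, hi, hq⟩)
      · exact Or.inl (Or.inl ⟨i, hi, hxe.symm⟩)
      · exact Or.inl (Or.inr ⟨j, hj, hxe.symm⟩)
      · exact Or.inr ⟨i, hi, (hquad i hi).mp hq⟩
    · rintro ((⟨i, hi, hxe⟩ | ⟨j, hj, hxe⟩) | ⟨i, hi, hor⟩)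
      · exact Or.inl (Or.inl ⟨i, hi, hxe.symm⟩)
      · exact Or.inl (Or.inr ⟨j, hj, hxe.symm⟩)
      · exact Or.inr ⟨i, hi, (hquad i hi).mpr hor⟩
  refine ⟨?_, hcp, hspec⟩
  -- norm bound
  have hEEc : Eᴴ * E = Matrix.diagonal (fun j : Fin m =>
      if (j : ℕ) < r ∧ (j : ℕ) < n then (eps (j : ℕ) : ℂ) else 0) := by
    have h := Ediag eps hge E hE (fun _ => (1 : ℂ))
    rw [Matrix.diagonal_one, Matrix.mul_one] at h
    simpa using h
  have hKK : Kᴴ * K = V * (Eᴴ * E) * Vᴴ := by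
    rw [hK]
    simp only [Matrix.conjTranspose_mul, Matrix.conjTranspose_conjTranspose, Matrix.mul_assoc]
    rw [hcancelU]
  show ‖LinearMap.toContinuousLinearMap (Matrix.toEuclideanLin K)‖ ≤ κ
  apply ContinuousLinearMap.opNorm_le_bound _ hκ.le
  intro v
  rw [LinearMap.coe_toContinuousLinearMap']
  set xv : Fin m → ℂ := ⇑(WithLp.equiv 2 (Fin m → ℂ)) v with hxv
  set y : Fin m → ℂ := Vᴴ *ᵥ xv with hy
  have hstxv : star xv ᵥ* V = star y := by
    rw [hy, Matrix.star_mulVec, Matrix.conjTranspose_conjTranspose]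
  have hKxv : ((∑ i, ‖(K *ᵥ xv) i‖ ^ 2 : ℝ) : ℂ) =
      ∑ j : Fin m, ((if (j : ℕ) < r ∧ (j : ℕ) < n then (eps (j : ℕ) : ℂ) else 0) *
        ((‖y j‖ ^ 2 : ℝ) : ℂ)) := by
    rw [← star_dot_self]
    rw [Matrix.star_mulVec, Matrix.dotProduct_mulVec, Matrix.vecMul_vecMul, hKK]
    rw [← Matrix.vecMul_vecMul, ← Matrix.vecMul_vecMul, hstxv, ← Matrix.dotProduct_mulVec, ← hy]
    rw [hEEc]
    rw [show star y ᵥ* Matrix.diagonal (fun j : Fin m =>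
        if (j : ℕ) < r ∧ (j : ℕ) < n then (eps (j : ℕ) : ℂ) else 0) =
        fun j => star (y j) * (if (j : ℕ) < r ∧ (j : ℕ) < n then (eps (j : ℕ) : ℂ) else 0)
      from funext fun j => Matrix.vecMul_diagonal _ _ j]
    rw [dotProduct]
    refine Finset.sum_congr rfl fun j _ => ?_
    have hconjmul : star (y j) * y j = ((‖y j‖ ^ 2 : ℝ) : ℂ) := by
      rw [Complex.star_def]
      push_cast
      exact RCLike.conj_mul (y j)
    calc star (y j) * (if (j : ℕ) < r ∧ (j : ℕ) < n then (eps (j : ℕ) : ℂ) else 0) * y j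
        = (if (j : ℕ) < r ∧ (j : ℕ) < n then (eps (j : ℕ) : ℂ) else 0) *
          (star (y j) * y j) := by ring
      _ = _ := by rw [hconjmul]
  have hyx : ((∑ j, ‖y j‖ ^ 2 : ℝ) : ℂ) = ((∑ j, ‖xv j‖ ^ 2 : ℝ) : ℂ) := by
    rw [← star_dot_self, ← star_dot_self, hy, Matrix.star_mulVec,
      Matrix.conjTranspose_conjTranspose, Matrix.dotProduct_mulVec, Matrix.vecMul_vecMul,
      hVV', Matrix.vecMul_one]
  have hyxR : (∑ j, ‖y j‖ ^ 2) = ∑ j, ‖xv j‖ ^ 2 := Complex.ofReal_injective hyx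
  have hKxvR : (∑ i, ‖(K *ᵥ xv) i‖ ^ 2) =
      ∑ j : Fin m, (if (j : ℕ) < r ∧ (j : ℕ) < n then eps (j : ℕ) else 0) * ‖y j‖ ^ 2 := by
    apply Complex.ofReal_injective
    rw [hKxv]
    push_cast [apply_ite (fun t : ℝ => (t : ℂ))]
    rfl
  have hbound : (∑ i, ‖(K *ᵥ xv) i‖ ^ 2) ≤ κ ^ 2 * ∑ j, ‖xv j‖ ^ 2 := by
    rw [hKxvR, ← hyxR, Finset.mul_sum]
    apply Finset.sum_le_sum
    intro j _
    have h2 : (0 : ℝ) ≤ ‖y j‖ ^ 2 := sq_nonneg _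
    split_ifs with h
    · rcases lt_or_ge (j : ℕ) (r - p) with hh | hh
      · exact mul_le_mul_of_nonneg_right (hepsκ _ hh) h2
      · rw [hepsz _ hh h.1, zero_mul]
        positivity
    · rw [zero_mul]
      positivity
  have hnorm1 : ‖Matrix.toEuclideanLin K v‖ = Real.sqrt (∑ i, ‖(K *ᵥ xv) i‖ ^ 2) := by
    rw [EuclideanSpace.norm_eq]
    congr 1
  have hnorm2 : ‖v‖ = Real.sqrt (∑ j, ‖xv j‖ ^ 2) := by
    rw [EuclideanSpace.norm_eq]
    congr 1
  rw [hnorm1, hnorm2]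
  calc Real.sqrt (∑ i, ‖(K *ᵥ xv) i‖ ^ 2) ≤ Real.sqrt (κ ^ 2 * ∑ j, ‖xv j‖ ^ 2) :=
      Real.sqrt_le_sqrt hbound
    _ = κ * Real.sqrt (∑ j, ‖xv j‖ ^ 2) := by
      rw [Real.sqrt_mul (sq_nonneg κ), Real.sqrt_sq hκ.le]
end

section
/- Let κ > 0, λ > 0, μ ≤ 0 with κ²λ + μ ≥ 0, set α := (λ − μ)²/(4λ²), and for 0 < ε ≤ κ² define the complex numbers η^± := (λ + μ)/2 ± λ√(α − ε) (where for α − ε < 0 the square root is taken as i√(ε − α)). Then: (a) if 0 < ε < −μ/λ, then λ > η^+ > 0 > η^− > μ (all real); (b) if −μ/λ ≤ ε < α, then η^± are real and max{λ + μ, 0} ≥ η^+ > η^− ≥ min{λ + μ, 0}; (c) if α < ε ≤ κ², then η^+ and η^− are non-real and η^+ is the complex conjugate of η^−. -/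
open ComplexConjugate

/-- Let `κ > 0`, `l > 0`, `u ≤ 0` with `κ²l + u ≥ 0`, set `α := (l − u)²/(4l²)`, and for
`0 < ε ≤ κ²` define `η± := (l + u)/2 ± l·√(α − ε)` (complex square root for `α − ε < 0`).
Then: (a) if `0 < ε < −u/l`, then `l > η⁺ > 0 > η⁻ > u` (all real);
(b) if `−u/l ≤ ε < α`, then `η±` are real and `max{l+u,0} ≥ η⁺ > η⁻ ≥ min{l+u,0}`;
(c) if `α < ε ≤ κ²`, then `η⁺, η⁻` are non-real and complex conjugates of each other. -/
theorem eta_cases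
    (κ l u ε : ℝ) (hκ : 0 < κ) (hl : 0 < l) (hu : u ≤ 0)
    (hcond : 0 ≤ κ ^ 2 * l + u) (hε0 : 0 < ε) (hεκ : ε ≤ κ ^ 2) :
    ∀ α ηp ηm, α = (l - u) ^ 2 / (4 * l ^ 2) →
      ηp = (((l + u) / 2 : ℝ) : ℂ) + (l : ℂ) * sqrtC (α - ε) →
      ηm = (((l + u) / 2 : ℝ) : ℂ) - (l : ℂ) * sqrtC (α - ε) →
    ((ε < -u / l →
        ηp.im = 0 ∧ ηm.im = 0 ∧ ηp.re < l ∧ 0 < ηp.re ∧ ηm.re < 0 ∧ u < ηm.re) ∧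
     (-u / l ≤ ε → ε < α →
        ηp.im = 0 ∧ ηm.im = 0 ∧ ηp.re ≤ max (l + u) 0 ∧ ηm.re < ηp.re ∧
          min (l + u) 0 ≤ ηm.re) ∧
     (α < ε → ηp.im ≠ 0 ∧ ηm.im ≠ 0 ∧ ηp = conj ηm)) := by
  intro α ηp ηm hα hp hm
  have hl0 : (l:ℝ) ≠ 0 := ne_of_gt hl
  have h4α : 4 * l ^ 2 * α = (l - u) ^ 2 := by
    rw [hα]; field_simp
  have hl2 : (0:ℝ) < 4 * l ^ 2 := by positivity
  refine ⟨?_, ?_, ?_⟩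
  · -- case (a): ε < -u/l
    intro h
    have hlu : l * ε < -u := by
      rw [lt_div_iff₀ hl] at h; linarith [h]
    have hs0' : (0:ℝ) < α - ε := by nlinarith [sq_nonneg (l + u)]
    have hs0 : (0:ℝ) ≤ α - ε := hs0'.le
    set r := Real.sqrt (α - ε) with hr
    have hr0 : 0 < r := Real.sqrt_pos.mpr hs0'
    have hr2 : r ^ 2 = α - ε := Real.sq_sqrt hs0
    have hsq : (2 * l * r) ^ 2 = (l - u) ^ 2 - 4 * l ^ 2 * ε := by nlinarith
    have hb0 : (0:ℝ) ≤ 2 * l * r := by positivity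
    have hub : 2 * l * r < l - u :=
      lt_of_pow_lt_pow_left₀ 2 (by linarith) (by nlinarith [mul_pos hl2 hε0])
    have hlb1 : l + u < 2 * l * r :=
      lt_of_pow_lt_pow_left₀ 2 hb0
        (by nlinarith [mul_pos hl (show 0 < -u - l * ε by linarith)])
    have hlb2 : -(l + u) < 2 * l * r :=
      lt_of_pow_lt_pow_left₀ 2 hb0
        (by nlinarith [mul_pos hl (show 0 < -u - l * ε by linarith)])
    have hsC : sqrtC (α - ε) = ((r : ℝ) : ℂ) := by rw [sqrtC, if_pos hs0]
    rw [hp, hm, hsC]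
    simp only [← Complex.ofReal_mul, ← Complex.ofReal_add, ← Complex.ofReal_sub,
      Complex.ofReal_re, Complex.ofReal_im]
    refine ⟨trivial, trivial, by linarith, by linarith, by linarith, by linarith⟩
  · -- case (b)
    intro h1 h2
    have hlu : -u ≤ l * ε := by
      rw [div_le_iff₀ hl] at h1; linarith [h1]
    have hs0 : (0:ℝ) ≤ α - ε := le_of_lt (by linarith)
    set r := Real.sqrt (α - ε) with hr
    have hr0 : 0 < r := Real.sqrt_pos.mpr (by linarith)
    have hr2 : r ^ 2 = α - ε := Real.sq_sqrt hs0
    have hsq : (2 * l * r) ^ 2 = (l - u) ^ 2 - 4 * l ^ 2 * ε := by nlinarith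
    have hb0 : (0:ℝ) ≤ 2 * l * r := by positivity
    have habs : 2 * l * r ≤ |l + u| := by
      have h2 : (2 * l * r) ^ 2 ≤ |l + u| ^ 2 := by
        rw [sq_abs]; nlinarith [mul_pos hl hε0]
      exact le_of_pow_le_pow_left₀ two_ne_zero (abs_nonneg _) h2
    have hsC : sqrtC (α - ε) = ((r : ℝ) : ℂ) := by rw [sqrtC, if_pos hs0]
    rw [hp, hm, hsC]
    simp only [← Complex.ofReal_mul, ← Complex.ofReal_add, ← Complex.ofReal_sub,
      Complex.ofReal_re, Complex.ofReal_im]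
    have hmul : 0 < l * r := mul_pos hl hr0
    refine ⟨trivial, trivial, ?_, by linarith, ?_⟩
    · rcases abs_cases (l + u) with ⟨he, _⟩ | ⟨he, _⟩
      · rw [he] at habs; exact le_trans (by linarith) (le_max_left _ _)
      · rw [he] at habs; exact le_trans (by linarith) (le_max_right _ _)
    · rcases abs_cases (l + u) with ⟨he, _⟩ | ⟨he, _⟩
      · rw [he] at habs; exact le_trans (min_le_right _ _) (by linarith)
      · rw [he] at habs; exact le_trans (min_le_left _ _) (by linarith)
  · -- case (c)
    intro h
    have hs0 : ¬ (0:ℝ) ≤ α - ε := by linarith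
    have hr0 : 0 < Real.sqrt (-(α - ε)) := Real.sqrt_pos.mpr (by linarith)
    have hsC : sqrtC (α - ε) = Complex.I * ((Real.sqrt (-(α - ε)) : ℝ) : ℂ) := by
      rw [sqrtC, if_neg hs0]
    have hpim : ηp.im = l * Real.sqrt (-(α - ε)) := by
      rw [hp, hsC]; simp
    have hmim : ηm.im = -(l * Real.sqrt (-(α - ε))) := by
      rw [hm, hsC]; simp
    refine ⟨?_, ?_, ?_⟩
    · rw [hpim]; exact ne_of_gt (mul_pos hl hr0)
    · rw [hmim]; exact ne_of_lt (neg_lt_zero.mpr (mul_pos hl hr0))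
    · rw [hp, hm, hsC]
      simp only [map_sub, map_mul, Complex.conj_I, Complex.conj_ofReal]
      ring
end

section
/- Let A ∈ ℂ^{n×n} be Hermitian with eigenvalues λ_1 ≥ … ≥ λ_k > 0 ≥ λ_{k+1} ≥ … ≥ λ_n and D ∈ ℂ^{m×m} be Hermitian with eigenvalues μ_1 ≤ … ≤ μ_r ≤ 0 < μ_{r+1} ≤ … ≤ μ_m, with p = dim ker D. Let κ > 0 and assume r − p ≤ k and κ²λ_i + μ_i ≥ 0 for i = 1,…,r−p. For i = 1,…,r−p choose 0 < ε_i ≤ κ² with ε_iλ_i + μ_i ≥ 0, set ε_j = 0 for j = r−p+1,…,r, and define K := U E V* with U, V unitary satisfying A = U·diag(λ_1,…,λ_n)·U*, D = V·diag(μ_1,…,μ_m)·V*, and E ∈ ℂ^{n×m} having (i,i)-entry √ε_i for i ≤ r and zeros elsewhere. If ε_{i₀} = α_{i₀} := (λ_{i₀} − μ_{i₀})²/(4λ_{i₀}²) for some i₀ ∈ {1,…,r−p}, then η := (λ_{i₀} + μ_{i₀})/2 is an eigenvalue of S = [[A, −AK],[K*A, D]] possessing a Jordan chain of length 2; that is,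 there exists x ∈ ℂ^{n+m} with (S − ηI)x ≠ 0 and (S − ηI)²x = 0. In particular S is not diagonalizable. -/
open scoped Matrix ComplexOrder

private lemma cancelL {N M : Type*} [Fintype N] [DecidableEq N]
    (U : Matrix N N ℂ) (h : Uᴴ * U = 1) (X : Matrix N M ℂ) :
    Uᴴ * (U * X) = X := by
  rw [← Matrix.mul_assoc, h, Matrix.one_mul]

private lemma cancelL' {N M : Type*} [Fintype N] [DecidableEq N]
    (U : Matrix N N ℂ) (h : U * Uᴴ = 1) (X : Matrix N M ℂ) :
    U * (Uᴴ * X) = X := by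
  rw [← Matrix.mul_assoc, h, Matrix.one_mul]

private lemma single_smul'' {α : Type*} [DecidableEq α] (j : α) (c : ℂ) :
    (Pi.single j c : α → ℂ) = c • (Pi.single j 1 : α → ℂ) := by
  funext t
  by_cases h : t = j <;> simp [Pi.single_apply, h]

/-- If in the construction of `S = [[A, −AK],[KᴴA, D]]` (positive semidefinite case) one has
`ε i₀ = α i₀ = (lam i₀ − mu i₀)²/(4(lam i₀)²)` for some `i₀ < r − p`, then
`η = (lam i₀ + mu i₀)/2` is an eigenvalue of `S` with a Jordan chain of length 2; in
particular `S` is not diagonalizable. -/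
theorem jordan_chain_blockMatrix
    (n m k r p : ℕ) (hkn : k ≤ n) (hrm : r ≤ m) (hpr : p ≤ r)
    (κ : ℝ) (hκ : 0 < κ)
    (lam mu eps : ℕ → ℝ)
    (hlam : ∀ i j : ℕ, i ≤ j → j < n → lam j ≤ lam i)
    (hlampos : ∀ i : ℕ, i < k → 0 < lam i)
    (hlamnonpos : ∀ i : ℕ, k ≤ i → i < n → lam i ≤ 0)
    (hmu : ∀ i j : ℕ, i ≤ j → j < m → mu i ≤ mu j)
    (hmunonpos : ∀ i : ℕ, i < r → mu i ≤ 0)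
    (hmupos : ∀ i : ℕ, r ≤ i → i < m → 0 < mu i)
    (D : Matrix (Fin m) (Fin m) ℂ)
    (hp : p = Module.finrank ℂ (LinearMap.ker D.mulVecLin))
    (hrpk : r - p ≤ k)
    (hcond : ∀ i : ℕ, i < r - p → 0 ≤ κ ^ 2 * lam i + mu i)
    (heps0 : ∀ i : ℕ, i < r - p → 0 < eps i)
    (hepsκ : ∀ i : ℕ, i < r - p → eps i ≤ κ ^ 2)
    (hepsc : ∀ i : ℕ, i < r - p → 0 ≤ eps i * lam i + mu i)
    (hepsz : ∀ j : ℕ, r - p ≤ j → j < r → eps j = 0)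
    (U : Matrix (Fin n) (Fin n) ℂ) (hU : U ∈ Matrix.unitaryGroup (Fin n) ℂ)
    (V : Matrix (Fin m) (Fin m) ℂ) (hV : V ∈ Matrix.unitaryGroup (Fin m) ℂ)
    (A : Matrix (Fin n) (Fin n) ℂ)
    (hA : A = U * Matrix.diagonal (fun i : Fin n => (lam i : ℂ)) * Uᴴ)
    (hD : D = V * Matrix.diagonal (fun j : Fin m => (mu j : ℂ)) * Vᴴ)
    (E : Matrix (Fin n) (Fin m) ℂ)
    (hE : ∀ (i : Fin n) (j : Fin m),
      E i j = if (i : ℕ) = (j : ℕ) ∧ (j : ℕ) < r then (Real.sqrt (eps j) : ℂ) else 0)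
    (K : Matrix (Fin n) (Fin m) ℂ) (hK : K = U * E * Vᴴ)
    (S : Matrix (Fin n ⊕ Fin m) (Fin n ⊕ Fin m) ℂ)
    (hS : S = Matrix.fromBlocks A (-(A * K)) (Kᴴ * A) D)
    (i₀ : ℕ) (hi₀ : i₀ < r - p)
    (hα : eps i₀ = (lam i₀ - mu i₀) ^ 2 / (4 * lam i₀ ^ 2))
    (η : ℂ) (hη : η = (((lam i₀ + mu i₀) / 2 : ℝ) : ℂ)) :
    η ∈ spectrum ℂ S ∧
    (∃ x : (Fin n ⊕ Fin m) → ℂ,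
      (S - η • 1).mulVec x ≠ 0 ∧
      (S - η • 1).mulVec ((S - η • 1).mulVec x) = 0) ∧
    ¬ ∃ (P : Matrix (Fin n ⊕ Fin m) (Fin n ⊕ Fin m) ℂ) (d : (Fin n ⊕ Fin m) → ℂ),
        IsUnit P ∧ S = P * Matrix.diagonal d * P⁻¹ := by
  classical
  -- indices
  have hi₀r : i₀ < r := lt_of_lt_of_le hi₀ (Nat.sub_le r p)
  have hi₀k : i₀ < k := lt_of_lt_of_le hi₀ hrpk
  set iN : Fin n := ⟨i₀, lt_of_lt_of_le hi₀k hkn⟩ with hiN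
  set iM : Fin m := ⟨i₀, lt_of_lt_of_le hi₀r hrm⟩ with hiM
  -- scalars
  have hlampos0 : 0 < lam i₀ := hlampos i₀ hi₀k
  have hepspos0 : 0 < eps i₀ := heps0 i₀ hi₀
  set s : ℝ := Real.sqrt (eps i₀) with hsdef
  have hspos : 0 < s := Real.sqrt_pos.mpr hepspos0
  have hs2 : s ^ 2 = eps i₀ := Real.sq_sqrt hepspos0.le
  set lc : ℂ := (lam i₀ : ℂ) with hlc
  set mc : ℂ := (mu i₀ : ℂ) with hmc
  set sc : ℂ := (s : ℂ) with hsc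
  have hlcne : lc ≠ 0 := by
    simp only [hlc, ne_eq, Complex.ofReal_eq_zero]; exact hlampos0.ne'
  have hscne : sc ≠ 0 := by
    simp only [hsc, ne_eq, Complex.ofReal_eq_zero]; exact hspos.ne'
  -- key scalar identities
  have keyR : (lam i₀ - (lam i₀ + mu i₀) / 2) ^ 2 = lam i₀ ^ 2 * s ^ 2 := by
    rw [hs2, hα]
    field_simp
    ring
  have hc1 : (lc - η) ^ 2 = lc ^ 2 * sc ^ 2 := by
    rw [hη, hlc, hsc]
    exact_mod_cast congrArg (fun x : ℝ => (x : ℂ)) keyR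
  have hc2 : lc + mc - 2 * η = 0 := by
    rw [hη, hlc, hmc]
    push_cast
    ring
  -- unitary facts
  have hUl : Uᴴ * U = 1 := hU.1
  have hUr : U * Uᴴ = 1 := hU.2
  have hVl : Vᴴ * V = 1 := hV.1
  have hVr : V * Vᴴ = 1 := hV.2
  -- the two basic vectors
  set u₁ : Fin n → ℂ := U *ᵥ Pi.single iN 1 with hu₁
  set u₂ : Fin m → ℂ := V *ᵥ Pi.single iM 1 with hu₂
  have hu₂ne : u₂ ≠ 0 := by
    intro h0
    have : Vᴴ *ᵥ u₂ = Pi.single iM 1 := by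
      rw [hu₂, Matrix.mulVec_mulVec, hVl, Matrix.one_mulVec]
    rw [h0, Matrix.mulVec_zero] at this
    have := congrFun this iM
    simp at this
  -- action of E and Eᴴ on the singles
  have hEvec : E *ᵥ Pi.single iM 1 = Pi.single iN sc := by
    funext i
    simp only [Matrix.mulVec_single_one, Matrix.col_apply]
    rw [hE i iM]
    by_cases h : i = iN
    · subst h
      simp [hiN, hiM, hi₀r, hsc, hsdef]
    · have h' : (i : ℕ) ≠ i₀ := by
        intro hc
        exact h (Fin.ext hc)
      simp [hiM, h', Pi.single_apply, h]
  have hEHvec : Eᴴ *ᵥ Pi.single iN 1 = Pi.single iM sc := by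
    funext j
    simp only [Matrix.mulVec_single_one, Matrix.col_apply]
    rw [Matrix.conjTranspose_apply, hE iN j]
    by_cases h : j = iM
    · subst h
      simp [hiN, hiM, hi₀r, hsc, hsdef]
    · have h' : (iN : ℕ) ≠ (j : ℕ) := by
        intro hc
        exact h (Fin.ext hc.symm)
      simp [h', Pi.single_apply, h]
  -- the four block actions
  have hAU : A * U = U * Matrix.diagonal (fun i : Fin n => (lam i : ℂ)) := by
    rw [hA]
    simp only [Matrix.mul_assoc]
    rw [hUl, Matrix.mul_one]
  have hDV : D * V = V * Matrix.diagonal (fun j : Fin m => (mu j : ℂ)) := by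
    rw [hD]
    simp only [Matrix.mul_assoc]
    rw [hVl, Matrix.mul_one]
  have L1 : A *ᵥ u₁ = lc • u₁ := by
    rw [hu₁, Matrix.mulVec_mulVec, hAU, ← Matrix.mulVec_mulVec,
      Matrix.diagonal_mulVec_single, mul_one, single_smul'', Matrix.mulVec_smul, ← hu₁]
  have L4 : D *ᵥ u₂ = mc • u₂ := by
    rw [hu₂, Matrix.mulVec_mulVec, hDV, ← Matrix.mulVec_mulVec,
      Matrix.diagonal_mulVec_single, mul_one, single_smul'', Matrix.mulVec_smul, ← hu₂]
  have hKH : Kᴴ = V * (Eᴴ * Uᴴ) := by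
    rw [hK]
    simp [Matrix.conjTranspose_mul, Matrix.mul_assoc]
  have L2 : (Kᴴ * A) *ᵥ u₁ = (lc * sc) • u₂ := by
    have key : Kᴴ * A * U = V * (Eᴴ * Matrix.diagonal (fun i : Fin n => (lam i : ℂ))) := by
      rw [hKH, hA]
      simp only [Matrix.mul_assoc]
      rw [hUl, Matrix.mul_one, cancelL U hUl]
    rw [hu₁, Matrix.mulVec_mulVec, key, ← Matrix.mulVec_mulVec,
      ← Matrix.mulVec_mulVec, Matrix.diagonal_mulVec_single, mul_one,
      single_smul'', Matrix.mulVec_smul, hEHvec, single_smul'', Matrix.mulVec_smul,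
      Matrix.mulVec_smul, ← hu₂, smul_smul]
  have L3 : (A * K) *ᵥ u₂ = (lc * sc) • u₁ := by
    have key : A * K * V = U * (Matrix.diagonal (fun i : Fin n => (lam i : ℂ)) * E) := by
      rw [hA, hK]
      simp only [Matrix.mul_assoc]
      rw [hVl, Matrix.mul_one, cancelL U hUl]
    rw [hu₂, Matrix.mulVec_mulVec, key, ← Matrix.mulVec_mulVec,
      ← Matrix.mulVec_mulVec, hEvec, Matrix.diagonal_mulVec_single,
      single_smul'', Matrix.mulVec_smul, ← hu₁]
  -- vectors in the big space
  set y : (Fin n ⊕ Fin m) → ℂ := Sum.elim u₁ 0 with hy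
  set w : (Fin n ⊕ Fin m) → ℂ := Sum.elim 0 u₂ with hw
  set Nm : Matrix (Fin n ⊕ Fin m) (Fin n ⊕ Fin m) ℂ := S - η • 1 with hNm
  have hNy : Nm *ᵥ y = (lc - η) • y + (lc * sc) • w := by
    rw [hNm, Matrix.sub_mulVec, Matrix.smul_mulVec, Matrix.one_mulVec, hS,
      Matrix.fromBlocks_mulVec]
    funext z
    cases z with
    | inl i =>
      simp [hy, hw, L1, sub_mul, Matrix.mulVec_zero]
    | inr j =>
      simp [hy, hw, L2, Matrix.mulVec_zero]
  have hNw : Nm *ᵥ w = (-(lc * sc)) • y + (mc - η) • w := by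
    rw [hNm, Matrix.sub_mulVec, Matrix.smul_mulVec, Matrix.one_mulVec, hS,
      Matrix.fromBlocks_mulVec]
    funext z
    cases z with
    | inl i =>
      simp [hy, hw, L3, Matrix.mulVec_zero, Matrix.neg_mulVec]
    | inr j =>
      simp [hy, hw, L4, sub_mul, Matrix.mulVec_zero]
  have hN2y : Nm *ᵥ (Nm *ᵥ y) = 0 := by
    rw [hNy, Matrix.mulVec_add, Matrix.mulVec_smul, Matrix.mulVec_smul, hNy, hNw]
    match_scalars
    · linear_combination hc1
    · linear_combination (lc * sc) * hc2
  have hNyne : Nm *ᵥ y ≠ 0 := by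
    intro h0
    apply hu₂ne
    funext j
    have hj := congrFun h0 (Sum.inr j)
    rw [hNy] at hj
    simp only [Pi.add_apply, Pi.smul_apply, smul_eq_mul, hy, hw, Sum.elim_inr,
      Pi.zero_apply, mul_zero, zero_add] at hj
    rcases mul_eq_zero.mp hj with h | h
    · exact absurd ((mul_eq_zero.mp h).resolve_left hlcne) hscne
    · simpa using h
  refine ⟨?_, ⟨y, hNyne, hN2y⟩, ?_⟩
  · rw [spectrum.mem_iff]
    intro hUnit
    have halg : (algebraMap ℂ (Matrix (Fin n ⊕ Fin m) (Fin n ⊕ Fin m) ℂ)) η - S = -Nm := by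
      rw [hNm, Algebra.algebraMap_eq_smul_one, neg_sub]
    rw [halg] at hUnit
    obtain ⟨B, hB⟩ := hUnit.exists_left_inv
    apply hNyne
    have : Nm *ᵥ (Nm *ᵥ y) = 0 := hN2y
    calc Nm *ᵥ y = (1 : Matrix _ _ ℂ) *ᵥ (Nm *ᵥ y) := by rw [Matrix.one_mulVec]
      _ = (B * (-Nm)) *ᵥ (Nm *ᵥ y) := by rw [hB]
      _ = B *ᵥ ((-Nm) *ᵥ (Nm *ᵥ y)) := by rw [← Matrix.mulVec_mulVec]
      _ = B *ᵥ (-(Nm *ᵥ (Nm *ᵥ y))) := by rw [Matrix.neg_mulVec]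
      _ = 0 := by simp [hN2y]
  · rintro ⟨P, d, hPu, hPS⟩
    have hPdet : IsUnit P.det := P.isUnit_iff_isUnit_det.mp hPu
    have hPl : P⁻¹ * P = 1 := Matrix.nonsing_inv_mul P hPdet
    have hPr : P * P⁻¹ = 1 := Matrix.mul_nonsing_inv P hPdet
    set g : (Fin n ⊕ Fin m) → ℂ := fun i => d i - η with hg
    have hNP : Nm = P * Matrix.diagonal g * P⁻¹ := by
      have h1 : (η • (1 : Matrix (Fin n ⊕ Fin m) (Fin n ⊕ Fin m) ℂ)) = P * (η • 1) * P⁻¹ := by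
        rw [Matrix.mul_smul, Matrix.mul_one, Matrix.smul_mul, hPr]
      rw [hNm, hPS, h1, ← sub_mul, ← mul_sub, Matrix.smul_one_eq_diagonal,
        ← Matrix.diagonal_sub]
    have hcancel : ∀ u : (Fin n ⊕ Fin m) → ℂ, P⁻¹ *ᵥ (P *ᵥ u) = u := by
      intro u
      rw [Matrix.mulVec_mulVec, hPl, Matrix.one_mulVec]
    set t : (Fin n ⊕ Fin m) → ℂ := P⁻¹ *ᵥ y with ht
    have hstep : Nm *ᵥ y = P *ᵥ (Matrix.diagonal g *ᵥ t) := by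
      rw [hNP, ← Matrix.mulVec_mulVec, ← Matrix.mulVec_mulVec, ht]
    have h2 : P *ᵥ (Matrix.diagonal g *ᵥ (Matrix.diagonal g *ᵥ t)) = 0 := by
      have e1 : Nm *ᵥ (Nm *ᵥ y)
          = P *ᵥ (Matrix.diagonal g *ᵥ (P⁻¹ *ᵥ (P *ᵥ (Matrix.diagonal g *ᵥ t)))) := by
        rw [hstep, hNP, ← Matrix.mulVec_mulVec, ← Matrix.mulVec_mulVec]
      rw [hcancel] at e1
      rw [← e1, hN2y]
    have h3 : Matrix.diagonal g *ᵥ (Matrix.diagonal g *ᵥ t) = 0 := by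
      have h5 : P⁻¹ *ᵥ (P *ᵥ (Matrix.diagonal g *ᵥ (Matrix.diagonal g *ᵥ t)))
          = P⁻¹ *ᵥ (0 : (Fin n ⊕ Fin m) → ℂ) := by rw [h2]
      rw [hcancel, Matrix.mulVec_zero] at h5
      exact h5
    have h4 : Matrix.diagonal g *ᵥ t = 0 := by
      funext i
      have hi := congrFun h3 i
      simp only [Matrix.mulVec_diagonal, Pi.zero_apply] at hi ⊢
      rcases mul_eq_zero.mp hi with h | h
      · simp [h]
      · exact h
    apply hNyne
    rw [hstep, h4, Matrix.mulVec_zero]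
end

section
/- Let A ∈ ℂ^{n×n} be Hermitian with eigenvalues λ_1 ≥ … ≥ λ_k > 0 ≥ λ_{k+1} ≥ … ≥ λ_n and D ∈ ℂ^{m×m} be Hermitian with eigenvalues μ_1 ≤ … ≤ μ_r ≤ 0 < μ_{r+1} ≤ … ≤ μ_m, with p = dim ker D. Let κ > 0 and assume r − p ≤ k and κ²λ_i + μ_i ≥ 0 for i = 1,…,r−p. For i = 1,…,r−p choose 0 < ε_i ≤ κ² with ε_iλ_i + μ_i ≥ 0, set ε_j = 0 for j = r−p+1,…,r, and define K := U E V* with U, V unitary satisfying A = U·diag(λ_1,…,λ_n)·U*, D = V·diag(μ_1,…,μ_m)·V*, and E ∈ ℂ^{n×m} having (i,i)-entry √ε_i for i ≤ r and zeros elsewhere. If ε_i ≠ α_i := (λ_i − μ_i)²/(4λ_i²) for all i = 1,…,r−p, then ℂ^{n+m} has a basis consisting of eigenvectors of S = [[A, −AK],[K*A, D]]; i.e., S is diagonalizable. -/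
open scoped Matrix ComplexOrder

namespace DiagAux


/-- generalized (rectangular) diagonal matrix -/
def gd (q t : ℕ) (f : ℕ → ℂ) : Matrix (Fin q) (Fin t) ℂ :=
  Matrix.of fun i j => if (i : ℕ) = (j : ℕ) then f i else 0

lemma gd_apply (q t : ℕ) (f : ℕ → ℂ) (i : Fin q) (j : Fin t) :
    gd q t f i j = if (i : ℕ) = (j : ℕ) then f i else 0 := rfl

lemma gd_mul (q t u : ℕ) (f g : ℕ → ℂ) :
    gd q t f * gd t u g = gd q u (fun x => if x < t then f x * g x else 0) := by
  ext i j
  rw [Matrix.mul_apply]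
  simp only [gd_apply]
  by_cases h : (i : ℕ) = (j : ℕ)
  · by_cases h2 : (i : ℕ) < t
    · rw [Finset.sum_eq_single (⟨(i : ℕ), h2⟩ : Fin t)]
      · have hj : (j : ℕ) < t := h ▸ h2
        simp [h, h2, hj]
      · intro b _ hb
        have : (i : ℕ) ≠ (b : ℕ) := fun hc => hb (by simp [Fin.ext_iff, ← hc])
        simp [this]
      · simp
    · rw [Finset.sum_eq_zero]
      · have hj : ¬ (j : ℕ) < t := fun hc => h2 (h ▸ hc)
        simp [h, hj]
      · intro b _
        have : (i : ℕ) ≠ (b : ℕ) := fun hc => h2 (hc ▸ b.isLt)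
        simp [this]
  · rw [Finset.sum_eq_zero]
    · simp [h]
    · intro b _
      by_cases hb : (i : ℕ) = (b : ℕ)
      · have : (b : ℕ) ≠ (j : ℕ) := fun hc => h (hb.trans hc)
        simp [this]
      · simp [hb]

lemma gd_add (q t : ℕ) (f g : ℕ → ℂ) :
    gd q t f + gd q t g = gd q t (fun x => f x + g x) := by
  ext i j
  simp only [Matrix.add_apply, gd_apply]
  split_ifs <;> simp

lemma gd_congr (q t : ℕ) {f g : ℕ → ℂ} (h : ∀ x, x < q → x < t → f x = g x) :
    gd q t f = gd q t g := by
  ext i j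
  simp only [gd_apply]
  split_ifs with hij
  · exact h i i.isLt (hij ▸ j.isLt)
  · rfl

lemma gd_zero (q t : ℕ) : gd q t (fun _ => 0) = 0 := by
  ext i j; simp [gd_apply]

lemma gd_one (q : ℕ) : gd q q (fun _ => 1) = 1 := by
  ext i j
  simp only [gd_apply, Matrix.one_apply, Fin.ext_iff]

lemma diagonal_eq_gd (q : ℕ) (c : ℕ → ℂ) :
    Matrix.diagonal (fun i : Fin q => c (i : ℕ)) = gd q q c := by
  ext i j
  simp only [Matrix.diagonal_apply, gd_apply, Fin.ext_iff]

lemma gd_conjTranspose (q t : ℕ) (f : ℕ → ℝ) :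
    (gd q t (fun x => (f x : ℂ)))ᴴ = gd t q (fun x => (f x : ℂ)) := by
  ext i j
  simp only [Matrix.conjTranspose_apply, gd_apply]
  by_cases h : (j : ℕ) = (i : ℕ)
  · simp [h, eq_comm, Complex.conj_ofReal]
  · have h' : ¬ (i : ℕ) = (j : ℕ) := fun hc => h hc.symm
    simp [h, h']


lemma gd_neg (q t : ℕ) (f : ℕ → ℂ) : -gd q t f = gd q t (fun x => -f x) := by
  ext i j
  simp only [Matrix.neg_apply, gd_apply]
  split_ifs <;> simp


/-- discriminant -/
def sd (lam mu eps : ℕ → ℝ) (x : ℕ) : ℝ := (lam x - mu x) ^ 2 - 4 * eps x * lam x ^ 2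

/-- complex square root of the discriminant -/
noncomputable def zeta (lam mu eps : ℕ → ℝ) (x : ℕ) : ℂ :=
  if 0 ≤ sd lam mu eps x then (Real.sqrt (sd lam mu eps x) : ℂ)
  else Complex.I * (Real.sqrt (-(sd lam mu eps x)) : ℂ)

lemma zeta_sq (lam mu eps : ℕ → ℝ) (x : ℕ) :
    (zeta lam mu eps x) ^ 2 = ((sd lam mu eps x : ℝ) : ℂ) := by
  rw [zeta]
  split_ifs with h
  · rw [← Complex.ofReal_pow, Real.sq_sqrt h]
  · have h' : 0 ≤ -(sd lam mu eps x) := by linarith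
    rw [mul_pow, Complex.I_sq, ← Complex.ofReal_pow, Real.sq_sqrt h']
    push_cast
    ring

lemma zeta_ne (lam mu eps : ℕ → ℝ) (x : ℕ) (h : sd lam mu eps x ≠ 0) :
    zeta lam mu eps x ≠ 0 := by
  intro hc
  have := zeta_sq lam mu eps x
  rw [hc] at this
  simp at this
  exact h (by exact_mod_cast this.symm)

lemma sd_ne (lam mu eps : ℕ → ℝ) (x : ℕ) (hl : lam x ≠ 0)
    (hne : eps x ≠ (lam x - mu x) ^ 2 / (4 * lam x ^ 2)) : sd lam mu eps x ≠ 0 := by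
  intro h
  apply hne
  unfold sd at h
  field_simp
  linarith

lemma zeta_sq' (lam mu eps : ℕ → ℝ) (x : ℕ) :
    (zeta lam mu eps x) ^ 2 = ((lam x : ℂ) - (mu x : ℂ)) ^ 2 - 4 * (eps x : ℂ) * (lam x : ℂ) ^ 2 := by
  rw [zeta_sq, sd]
  push_cast
  ring

noncomputable def scf (eps : ℕ → ℝ) (r : ℕ) (x : ℕ) : ℂ :=
  if x < r then ((Real.sqrt (eps x) : ℝ) : ℂ) else 0

lemma scf_sq (eps : ℕ → ℝ) (r x : ℕ) (hxr : x < r) (he : 0 ≤ eps x) :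
    scf eps r x ^ 2 = (eps x : ℂ) := by
  rw [scf, if_pos hxr, ← Complex.ofReal_pow, Real.sq_sqrt he]

lemma scf_ne (eps : ℕ → ℝ) (r x : ℕ) (hxr : x < r) (he : 0 < eps x) :
    scf eps r x ≠ 0 := by
  rw [scf, if_pos hxr]
  exact_mod_cast (Real.sqrt_pos.mpr he).ne'

noncomputable def tpf (lam mu eps : ℕ → ℝ) (x : ℕ) : ℂ :=
  ((lam x : ℂ) + (mu x : ℂ) + zeta lam mu eps x) / 2

noncomputable def tmf (lam mu eps : ℕ → ℝ) (x : ℕ) : ℂ :=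
  ((lam x : ℂ) + (mu x : ℂ) - zeta lam mu eps x) / 2

noncomputable def avf (lam mu eps : ℕ → ℝ) (r p : ℕ) (x : ℕ) : ℂ :=
  (lam x : ℂ) * scf eps r x

noncomputable def p11f (lam mu eps : ℕ → ℝ) (r p : ℕ) (x : ℕ) : ℂ :=
  if x < r - p then avf lam mu eps r p x else 1

noncomputable def p12f (lam mu eps : ℕ → ℝ) (r p : ℕ) (x : ℕ) : ℂ :=
  if x < r - p then avf lam mu eps r p x else 0

noncomputable def p21f (lam mu eps : ℕ → ℝ) (r p : ℕ) (x : ℕ) : ℂ :=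
  if x < r - p then (lam x : ℂ) - tpf lam mu eps x else 0

noncomputable def p22f (lam mu eps : ℕ → ℝ) (r p : ℕ) (x : ℕ) : ℂ :=
  if x < r - p then (lam x : ℂ) - tmf lam mu eps x else 1

noncomputable def q11f (lam mu eps : ℕ → ℝ) (r p : ℕ) (x : ℕ) : ℂ :=
  if x < r - p then ((lam x : ℂ) - tmf lam mu eps x) / (avf lam mu eps r p x * zeta lam mu eps x)
  else 1

noncomputable def q12f (lam mu eps : ℕ → ℝ) (r p : ℕ) (x : ℕ) : ℂ :=
  if x < r - p then -(avf lam mu eps r p x / (avf lam mu eps r p x * zeta lam mu eps x)) else 0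

noncomputable def q21f (lam mu eps : ℕ → ℝ) (r p : ℕ) (x : ℕ) : ℂ :=
  if x < r - p then -(((lam x : ℂ) - tpf lam mu eps x) / (avf lam mu eps r p x * zeta lam mu eps x))
  else 0

noncomputable def q22f (lam mu eps : ℕ → ℝ) (r p : ℕ) (x : ℕ) : ℂ :=
  if x < r - p then avf lam mu eps r p x / (avf lam mu eps r p x * zeta lam mu eps x) else 1

noncomputable def d1f (lam mu eps : ℕ → ℝ) (r p : ℕ) (x : ℕ) : ℂ :=
  if x < r - p then tpf lam mu eps x else (lam x : ℂ)

noncomputable def d2f (lam mu eps : ℕ → ℝ) (r p : ℕ) (x : ℕ) : ℂ :=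
  if x < r - p then tmf lam mu eps x else (mu x : ℂ)

section scalars

variable (lam mu eps : ℕ → ℝ) (r p x : ℕ)

lemma L1 (hxrp : x < r - p) :
    (lam x : ℂ) * p11f lam mu eps r p x
      + (-((lam x : ℂ) * scf eps r x)) * p21f lam mu eps r p x
      = p11f lam mu eps r p x * d1f lam mu eps r p x := by
  simp only [p11f, p21f, d1f, avf, if_pos hxrp]
  ring

lemma L3 (hxrp : x < r - p) :
    (lam x : ℂ) * p12f lam mu eps r p x
      + (-((lam x : ℂ) * scf eps r x)) * p22f lam mu eps r p x
      = p12f lam mu eps r p x * d2f lam mu eps r p x := by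
  simp only [p12f, p22f, d2f, avf, if_pos hxrp]
  ring

lemma L2 (hxrp : x < r - p) (hxr : x < r) (he : 0 < eps x) :
    (scf eps r x * (lam x : ℂ)) * p11f lam mu eps r p x
      + (mu x : ℂ) * p21f lam mu eps r p x
      = p21f lam mu eps r p x * d1f lam mu eps r p x := by
  simp only [p11f, p21f, d1f, avf, tpf, if_pos hxrp]
  have hs := scf_sq eps r x hxr he.le
  have hz := zeta_sq' lam mu eps x
  linear_combination (lam x : ℂ) ^ 2 * hs + (1 / 4 : ℂ) * hz

lemma L4 (hxrp : x < r - p) (hxr : x < r) (he : 0 < eps x) :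
    (scf eps r x * (lam x : ℂ)) * p12f lam mu eps r p x
      + (mu x : ℂ) * p22f lam mu eps r p x
      = p22f lam mu eps r p x * d2f lam mu eps r p x := by
  simp only [p12f, p22f, d2f, avf, tmf, if_pos hxrp]
  have hs := scf_sq eps r x hxr he.le
  have hz := zeta_sq' lam mu eps x
  linear_combination (lam x : ℂ) ^ 2 * hs + (1 / 4 : ℂ) * hz


lemma avf_ne (hxr : x < r) (hl : 0 < lam x) (he : 0 < eps x) :
    avf lam mu eps r p x ≠ 0 := by
  rw [avf]
  exact mul_ne_zero (by exact_mod_cast hl.ne') (scf_ne eps r x hxr he)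

lemma zeta_ne' (hl : 0 < lam x)
    (hne : eps x ≠ (lam x - mu x) ^ 2 / (4 * lam x ^ 2)) : zeta lam mu eps x ≠ 0 :=
  zeta_ne lam mu eps x (sd_ne lam mu eps x hl.ne' hne)

section inv

variable (hxrp : x < r - p) (hxr : x < r) (hl : 0 < lam x) (he : 0 < eps x)
variable (hne : eps x ≠ (lam x - mu x) ^ 2 / (4 * lam x ^ 2))
include hxrp hxr hl he hne

lemma M11 : p11f lam mu eps r p x * q11f lam mu eps r p x
    + p12f lam mu eps r p x * q21f lam mu eps r p x = 1 := by
  have ha := avf_ne lam mu eps r p x hxr hl he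
  have hz := zeta_ne' lam mu eps x hl hne
  simp only [p11f, p12f, q11f, q21f, tpf, tmf, if_pos hxrp]
  field_simp
  ring

lemma M12 : p11f lam mu eps r p x * q12f lam mu eps r p x
    + p12f lam mu eps r p x * q22f lam mu eps r p x = 0 := by
  have ha := avf_ne lam mu eps r p x hxr hl he
  have hz := zeta_ne' lam mu eps x hl hne
  simp only [p11f, p12f, q12f, q22f, if_pos hxrp]
  field_simp
  ring

lemma M21 : p21f lam mu eps r p x * q11f lam mu eps r p x
    + p22f lam mu eps r p x * q21f lam mu eps r p x = 0 := by
  have ha := avf_ne lam mu eps r p x hxr hl he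
  have hz := zeta_ne' lam mu eps x hl hne
  simp only [p21f, p22f, q11f, q21f, tpf, tmf, if_pos hxrp]
  field_simp
  ring

lemma M22 : p21f lam mu eps r p x * q12f lam mu eps r p x
    + p22f lam mu eps r p x * q22f lam mu eps r p x = 1 := by
  have ha := avf_ne lam mu eps r p x hxr hl he
  have hz := zeta_ne' lam mu eps x hl hne
  simp only [p21f, p22f, q12f, q22f, tpf, tmf, if_pos hxrp]
  field_simp
  ring

lemma N11 : q11f lam mu eps r p x * p11f lam mu eps r p x
    + q12f lam mu eps r p x * p21f lam mu eps r p x = 1 := by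
  have ha := avf_ne lam mu eps r p x hxr hl he
  have hz := zeta_ne' lam mu eps x hl hne
  simp only [p11f, p21f, q11f, q12f, tpf, tmf, if_pos hxrp]
  field_simp
  ring

lemma N12 : q11f lam mu eps r p x * p12f lam mu eps r p x
    + q12f lam mu eps r p x * p22f lam mu eps r p x = 0 := by
  have ha := avf_ne lam mu eps r p x hxr hl he
  have hz := zeta_ne' lam mu eps x hl hne
  simp only [p12f, p22f, q11f, q12f, tpf, tmf, if_pos hxrp]
  field_simp
  ring

lemma N21 : q21f lam mu eps r p x * p11f lam mu eps r p x
    + q22f lam mu eps r p x * p21f lam mu eps r p x = 0 := by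
  have ha := avf_ne lam mu eps r p x hxr hl he
  have hz := zeta_ne' lam mu eps x hl hne
  simp only [p11f, p21f, q21f, q22f, tpf, tmf, if_pos hxrp]
  field_simp
  ring

lemma N22 : q21f lam mu eps r p x * p12f lam mu eps r p x
    + q22f lam mu eps r p x * p22f lam mu eps r p x = 1 := by
  have ha := avf_ne lam mu eps r p x hxr hl he
  have hz := zeta_ne' lam mu eps x hl hne
  simp only [p12f, p22f, q21f, q22f, tpf, tmf, if_pos hxrp]
  field_simp
  ring

end inv

end scalars



end DiagAux

open DiagAux

set_option maxHeartbeats 1600000 in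
set_option synthInstance.maxHeartbeats 400000 in
/-- If in the construction of `S = [[A, −AK],[KᴴA, D]]` (positive semidefinite case) one has
`ε i ≠ α i = (lam i − mu i)²/(4(lam i)²)` for all `i < r − p`, then `ℂ^{n+m}` has a basis
consisting of eigenvectors of `S`, i.e. `S` is diagonalizable. -/
theorem diagonalizable_blockMatrix_semidef
    (n m k r p : ℕ) (hkn : k ≤ n) (hrm : r ≤ m) (hpr : p ≤ r)
    (κ : ℝ) (hκ : 0 < κ)
    (lam mu eps : ℕ → ℝ)
    (hlam : ∀ i j : ℕ, i ≤ j → j < n → lam j ≤ lam i)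
    (hlampos : ∀ i : ℕ, i < k → 0 < lam i)
    (hlamnonpos : ∀ i : ℕ, k ≤ i → i < n → lam i ≤ 0)
    (hmu : ∀ i j : ℕ, i ≤ j → j < m → mu i ≤ mu j)
    (hmunonpos : ∀ i : ℕ, i < r → mu i ≤ 0)
    (hmupos : ∀ i : ℕ, r ≤ i → i < m → 0 < mu i)
    (D : Matrix (Fin m) (Fin m) ℂ)
    (hp : p = Module.finrank ℂ (LinearMap.ker D.mulVecLin))
    (hrpk : r - p ≤ k)
    (hcond : ∀ i : ℕ, i < r - p → 0 ≤ κ ^ 2 * lam i + mu i)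
    (heps0 : ∀ i : ℕ, i < r - p → 0 < eps i)
    (hepsκ : ∀ i : ℕ, i < r - p → eps i ≤ κ ^ 2)
    (hepsc : ∀ i : ℕ, i < r - p → 0 ≤ eps i * lam i + mu i)
    (hepsz : ∀ j : ℕ, r - p ≤ j → j < r → eps j = 0)
    (U : Matrix (Fin n) (Fin n) ℂ) (hU : U ∈ Matrix.unitaryGroup (Fin n) ℂ)
    (V : Matrix (Fin m) (Fin m) ℂ) (hV : V ∈ Matrix.unitaryGroup (Fin m) ℂ)
    (A : Matrix (Fin n) (Fin n) ℂ)
    (hA : A = U * Matrix.diagonal (fun i : Fin n => (lam i : ℂ)) * Uᴴ)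
    (hD : D = V * Matrix.diagonal (fun j : Fin m => (mu j : ℂ)) * Vᴴ)
    (E : Matrix (Fin n) (Fin m) ℂ)
    (hE : ∀ (i : Fin n) (j : Fin m),
      E i j = if (i : ℕ) = (j : ℕ) ∧ (j : ℕ) < r then (Real.sqrt (eps j) : ℂ) else 0)
    (K : Matrix (Fin n) (Fin m) ℂ) (hK : K = U * E * Vᴴ)
    (S : Matrix (Fin n ⊕ Fin m) (Fin n ⊕ Fin m) ℂ)
    (hS : S = Matrix.fromBlocks A (-(A * K)) (Kᴴ * A) D)
    (hne : ∀ i : ℕ, i < r - p → eps i ≠ (lam i - mu i) ^ 2 / (4 * lam i ^ 2)) :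
    (∃ b : Module.Basis (Fin n ⊕ Fin m) ℂ ((Fin n ⊕ Fin m) → ℂ),
      ∀ idx, ∃ c : ℂ, S.mulVec (b idx) = c • b idx) ∧
    (∃ (P : Matrix (Fin n ⊕ Fin m) (Fin n ⊕ Fin m) ℂ) (d : (Fin n ⊕ Fin m) → ℂ),
      IsUnit P ∧ S = P * Matrix.diagonal d * P⁻¹) := by
  classical
  have hU1 : Uᴴ * U = 1 := by
    have := Matrix.mem_unitaryGroup_iff'.mp hU
    rwa [Matrix.star_eq_conjTranspose] at this
  have hU2 : U * Uᴴ = 1 := by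
    have := Matrix.mem_unitaryGroup_iff.mp hU
    rwa [Matrix.star_eq_conjTranspose] at this
  have hV1 : Vᴴ * V = 1 := by
    have := Matrix.mem_unitaryGroup_iff'.mp hV
    rwa [Matrix.star_eq_conjTranspose] at this
  have hV2 : V * Vᴴ = 1 := by
    have := Matrix.mem_unitaryGroup_iff.mp hV
    rwa [Matrix.star_eq_conjTranspose] at this
  -- basic index facts
  have hxr' : ∀ x : ℕ, x < r - p → x < r := fun x hx => lt_of_lt_of_le hx (Nat.sub_le r p)
  have hxk' : ∀ x : ℕ, x < r - p → x < k := fun x hx => lt_of_lt_of_le hx hrpk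
  have hxn' : ∀ x : ℕ, x < r - p → x < n := fun x hx => lt_of_lt_of_le (hxk' x hx) hkn
  have hxm' : ∀ x : ℕ, x < r - p → x < m := fun x hx => lt_of_lt_of_le (hxr' x hx) hrm
  have hsc0 : ∀ x : ℕ, r - p ≤ x → scf eps r x = 0 := by
    intro x hx
    rw [scf]
    split_ifs with h
    · rw [hepsz x hx h, Real.sqrt_zero, Complex.ofReal_zero]
    · rfl
  -- the matrices in the diagonal frame
  set T : Matrix (Fin n ⊕ Fin m) (Fin n ⊕ Fin m) ℂ :=
    Matrix.fromBlocks (gd n n (fun x => (lam x : ℂ)))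
      (gd n m (fun x => -((lam x : ℂ) * scf eps r x)))
      (gd m n (fun x => scf eps r x * (lam x : ℂ)))
      (gd m m (fun x => (mu x : ℂ))) with hT
  set P₀ : Matrix (Fin n ⊕ Fin m) (Fin n ⊕ Fin m) ℂ :=
    Matrix.fromBlocks (gd n n (p11f lam mu eps r p)) (gd n m (p12f lam mu eps r p))
      (gd m n (p21f lam mu eps r p)) (gd m m (p22f lam mu eps r p)) with hP0
  set Q₀ : Matrix (Fin n ⊕ Fin m) (Fin n ⊕ Fin m) ℂ :=
    Matrix.fromBlocks (gd n n (q11f lam mu eps r p)) (gd n m (q12f lam mu eps r p))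
      (gd m n (q21f lam mu eps r p)) (gd m m (q22f lam mu eps r p)) with hQ0
  set Dm : Matrix (Fin n ⊕ Fin m) (Fin n ⊕ Fin m) ℂ :=
    Matrix.fromBlocks (gd n n (d1f lam mu eps r p)) 0 0 (gd m m (d2f lam mu eps r p)) with hDm
  set W : Matrix (Fin n ⊕ Fin m) (Fin n ⊕ Fin m) ℂ := Matrix.fromBlocks U 0 0 V with hW
  -- key identity T * P₀ = P₀ * Dm
  have hTP : T * P₀ = P₀ * Dm := by
    have e11 : gd n n (fun x => (lam x : ℂ)) * gd n n (p11f lam mu eps r p)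
        + gd n m (fun x => -((lam x : ℂ) * scf eps r x)) * gd m n (p21f lam mu eps r p)
        = gd n n (p11f lam mu eps r p) * gd n n (d1f lam mu eps r p) := by
      rw [gd_mul, gd_mul, gd_mul, gd_add]
      apply gd_congr
      intro x hx1 hx2
      by_cases hx : x < r - p
      · rw [if_pos hx1, if_pos (hxm' x hx), if_pos hx1]
        exact L1 lam mu eps r p x hx
      · rw [if_pos hx1, if_pos hx1]
        simp only [p11f, p21f, d1f, if_neg hx]
        split_ifs <;> ring
    have e12 : gd n n (fun x => (lam x : ℂ)) * gd n m (p12f lam mu eps r p)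
        + gd n m (fun x => -((lam x : ℂ) * scf eps r x)) * gd m m (p22f lam mu eps r p)
        = gd n m (p12f lam mu eps r p) * gd m m (d2f lam mu eps r p) := by
      rw [gd_mul, gd_mul, gd_mul, gd_add]
      apply gd_congr
      intro x hx1 hx2
      rw [if_pos hx1, if_pos hx2, if_pos hx2]
      by_cases hx : x < r - p
      · exact L3 lam mu eps r p x hx
      · simp only [p12f, p22f, d2f, if_neg hx]
        rw [hsc0 x (not_lt.mp hx)]
        ring
    have e21 : gd m n (fun x => scf eps r x * (lam x : ℂ)) * gd n n (p11f lam mu eps r p)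
        + gd m m (fun x => (mu x : ℂ)) * gd m n (p21f lam mu eps r p)
        = gd m n (p21f lam mu eps r p) * gd n n (d1f lam mu eps r p) := by
      rw [gd_mul, gd_mul, gd_mul, gd_add]
      apply gd_congr
      intro x hx1 hx2
      rw [if_pos hx2, if_pos hx1, if_pos hx2]
      by_cases hx : x < r - p
      · exact L2 lam mu eps r p x hx (hxr' x hx) (heps0 x hx)
      · simp only [p21f, if_neg hx]
        rw [hsc0 x (not_lt.mp hx)]
        ring
    have e22 : gd m n (fun x => scf eps r x * (lam x : ℂ)) * gd n m (p12f lam mu eps r p)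
        + gd m m (fun x => (mu x : ℂ)) * gd m m (p22f lam mu eps r p)
        = gd m m (p22f lam mu eps r p) * gd m m (d2f lam mu eps r p) := by
      rw [gd_mul, gd_mul, gd_mul, gd_add]
      apply gd_congr
      intro x hx1 hx2
      rw [if_pos hx1, if_pos hx1]
      by_cases hx : x < r - p
      · rw [if_pos (hxn' x hx)]
        exact L4 lam mu eps r p x hx (hxr' x hx) (heps0 x hx)
      · simp only [p12f, p22f, d2f, if_neg hx]
        split_ifs <;> ring
    rw [hT, hP0, hDm, Matrix.fromBlocks_multiply, Matrix.fromBlocks_multiply,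
      Matrix.mul_zero, Matrix.mul_zero, Matrix.mul_zero, Matrix.mul_zero,
      add_zero, add_zero, zero_add, zero_add, e11, e12, e21, e22]
  -- P₀ * Q₀ = 1
  have hP₀Q₀ : P₀ * Q₀ = 1 := by
    have f11 : gd n n (p11f lam mu eps r p) * gd n n (q11f lam mu eps r p)
        + gd n m (p12f lam mu eps r p) * gd m n (q21f lam mu eps r p)
        = gd n n (fun _ => (1 : ℂ)) := by
      rw [gd_mul, gd_mul, gd_add]
      apply gd_congr
      intro x hx1 hx2
      rw [if_pos hx1]
      by_cases hx : x < r - p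
      · rw [if_pos (hxm' x hx)]
        exact M11 lam mu eps r p x hx (hxr' x hx) (hlampos x (hxk' x hx)) (heps0 x hx) (hne x hx)
      · simp only [p11f, p12f, q11f, q21f, if_neg hx]
        split_ifs <;> ring
    have f12 : gd n n (p11f lam mu eps r p) * gd n m (q12f lam mu eps r p)
        + gd n m (p12f lam mu eps r p) * gd m m (q22f lam mu eps r p)
        = gd n m (fun _ => (0 : ℂ)) := by
      rw [gd_mul, gd_mul, gd_add]
      apply gd_congr
      intro x hx1 hx2
      rw [if_pos hx1, if_pos hx2]
      by_cases hx : x < r - p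
      · exact M12 lam mu eps r p x hx (hxr' x hx) (hlampos x (hxk' x hx)) (heps0 x hx) (hne x hx)
      · simp only [p11f, p12f, q12f, q22f, if_neg hx]
        ring
    have f21 : gd m n (p21f lam mu eps r p) * gd n n (q11f lam mu eps r p)
        + gd m m (p22f lam mu eps r p) * gd m n (q21f lam mu eps r p)
        = gd m n (fun _ => (0 : ℂ)) := by
      rw [gd_mul, gd_mul, gd_add]
      apply gd_congr
      intro x hx1 hx2
      rw [if_pos hx2, if_pos hx1]
      by_cases hx : x < r - p
      · exact M21 lam mu eps r p x hx (hxr' x hx) (hlampos x (hxk' x hx)) (heps0 x hx) (hne x hx)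
      · simp only [p21f, p22f, q11f, q21f, if_neg hx]
        ring
    have f22 : gd m n (p21f lam mu eps r p) * gd n m (q12f lam mu eps r p)
        + gd m m (p22f lam mu eps r p) * gd m m (q22f lam mu eps r p)
        = gd m m (fun _ => (1 : ℂ)) := by
      rw [gd_mul, gd_mul, gd_add]
      apply gd_congr
      intro x hx1 hx2
      rw [if_pos hx1]
      by_cases hx : x < r - p
      · rw [if_pos (hxn' x hx)]
        exact M22 lam mu eps r p x hx (hxr' x hx) (hlampos x (hxk' x hx)) (heps0 x hx) (hne x hx)
      · simp only [p21f, p22f, q12f, q22f, if_neg hx]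
        split_ifs <;> ring
    rw [hP0, hQ0, Matrix.fromBlocks_multiply, f11, f12, f21, f22, gd_one, gd_one, gd_zero, gd_zero,
      Matrix.fromBlocks_one]
  -- Q₀ * P₀ = 1
  have hQ₀P₀ : Q₀ * P₀ = 1 := by
    have g11 : gd n n (q11f lam mu eps r p) * gd n n (p11f lam mu eps r p)
        + gd n m (q12f lam mu eps r p) * gd m n (p21f lam mu eps r p)
        = gd n n (fun _ => (1 : ℂ)) := by
      rw [gd_mul, gd_mul, gd_add]
      apply gd_congr
      intro x hx1 hx2
      rw [if_pos hx1]
      by_cases hx : x < r - p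
      · rw [if_pos (hxm' x hx)]
        exact N11 lam mu eps r p x hx (hxr' x hx) (hlampos x (hxk' x hx)) (heps0 x hx) (hne x hx)
      · simp only [p11f, p21f, q11f, q12f, if_neg hx]
        split_ifs <;> ring
    have g12 : gd n n (q11f lam mu eps r p) * gd n m (p12f lam mu eps r p)
        + gd n m (q12f lam mu eps r p) * gd m m (p22f lam mu eps r p)
        = gd n m (fun _ => (0 : ℂ)) := by
      rw [gd_mul, gd_mul, gd_add]
      apply gd_congr
      intro x hx1 hx2
      rw [if_pos hx1, if_pos hx2]
      by_cases hx : x < r - p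
      · exact N12 lam mu eps r p x hx (hxr' x hx) (hlampos x (hxk' x hx)) (heps0 x hx) (hne x hx)
      · simp only [p12f, p22f, q11f, q12f, if_neg hx]
        ring
    have g21 : gd m n (q21f lam mu eps r p) * gd n n (p11f lam mu eps r p)
        + gd m m (q22f lam mu eps r p) * gd m n (p21f lam mu eps r p)
        = gd m n (fun _ => (0 : ℂ)) := by
      rw [gd_mul, gd_mul, gd_add]
      apply gd_congr
      intro x hx1 hx2
      rw [if_pos hx2, if_pos hx1]
      by_cases hx : x < r - p
      · exact N21 lam mu eps r p x hx (hxr' x hx) (hlampos x (hxk' x hx)) (heps0 x hx) (hne x hx)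
      · simp only [p11f, p21f, q21f, q22f, if_neg hx]
        ring
    have g22 : gd m n (q21f lam mu eps r p) * gd n m (p12f lam mu eps r p)
        + gd m m (q22f lam mu eps r p) * gd m m (p22f lam mu eps r p)
        = gd m m (fun _ => (1 : ℂ)) := by
      rw [gd_mul, gd_mul, gd_add]
      apply gd_congr
      intro x hx1 hx2
      rw [if_pos hx1]
      by_cases hx : x < r - p
      · rw [if_pos (hxn' x hx)]
        exact N22 lam mu eps r p x hx (hxr' x hx) (hlampos x (hxk' x hx)) (heps0 x hx) (hne x hx)
      · simp only [p12f, p22f, q21f, q22f, if_neg hx]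
        split_ifs <;> ring
    rw [hQ0, hP0, Matrix.fromBlocks_multiply, g11, g12, g21, g22, gd_one, gd_one, gd_zero, gd_zero,
      Matrix.fromBlocks_one]
  -- express E via gd
  have hEgd : E = gd n m (scf eps r) := by
    ext i j
    rw [hE, gd_apply]
    by_cases h : (i : ℕ) = (j : ℕ)
    · simp [h, scf]
    · simp [h]
  have hEH : Eᴴ = gd m n (scf eps r) := by
    ext j i
    rw [Matrix.conjTranspose_apply, hE, gd_apply]
    by_cases h : (j : ℕ) = (i : ℕ)
    · have h' : (i : ℕ) = (j : ℕ) := h.symm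
      rw [if_pos h, scf]
      by_cases h2 : (j : ℕ) < r
      · rw [if_pos ⟨h', h2⟩, if_pos h2]
        exact Complex.conj_ofReal _
      · rw [if_neg (fun hc => h2 hc.2), if_neg h2, star_zero]
    · have h' : ¬((i : ℕ) = (j : ℕ) ∧ (j : ℕ) < r) := fun hc => h hc.1.symm
      rw [if_neg h', if_neg h, star_zero]
  have hdg1 : Matrix.diagonal (fun i : Fin n => (lam (i : ℕ) : ℂ)) = gd n n (fun x => (lam x : ℂ)) :=
    diagonal_eq_gd n (fun x => (lam x : ℂ))
  have hdg2 : Matrix.diagonal (fun j : Fin m => (mu (j : ℕ) : ℂ)) = gd m m (fun x => (mu x : ℂ)) :=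
    diagonal_eq_gd m (fun x => (mu x : ℂ))
  have hA' : A = U * gd n n (fun x => (lam x : ℂ)) * Uᴴ := by
    rw [hA, hdg1]
  have hD' : D = V * gd m m (fun x => (mu x : ℂ)) * Vᴴ := by
    rw [hD, hdg2]
  -- S = W * T * Wᴴ
  have hAK : A * K = U * (gd n n (fun x => (lam x : ℂ)) * gd n m (scf eps r)) * Vᴴ := by
    rw [hA', hK, hEgd]
    simp only [Matrix.mul_assoc]
    rw [← Matrix.mul_assoc Uᴴ U, hU1, Matrix.one_mul]
  have hKA : Kᴴ * A = V * (gd m n (scf eps r) * gd n n (fun x => (lam x : ℂ))) * Uᴴ := by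
    rw [hK, hA', Matrix.conjTranspose_mul, Matrix.conjTranspose_mul,
      Matrix.conjTranspose_conjTranspose, hEH]
    simp only [Matrix.mul_assoc]
    rw [← Matrix.mul_assoc Uᴴ U, hU1, Matrix.one_mul]
  have hb12 : -(A * K) = (U * gd n m (fun x => -((lam x : ℂ) * scf eps r x))) * Vᴴ := by
    have h1 : gd n m (fun x => -((lam x : ℂ) * scf eps r x))
        = -(gd n n (fun x => (lam x : ℂ)) * gd n m (scf eps r)) := by
      rw [gd_mul, gd_neg]
      apply gd_congr
      intro x hx1 hx2
      rw [if_pos hx1]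
    rw [hAK, h1, Matrix.mul_neg, Matrix.neg_mul]
  have hb21 : Kᴴ * A = (V * gd m n (fun x => scf eps r x * (lam x : ℂ))) * Uᴴ := by
    have h1 : gd m n (scf eps r) * gd n n (fun x => (lam x : ℂ))
        = gd m n (fun x => scf eps r x * (lam x : ℂ)) := by
      rw [gd_mul]
      apply gd_congr
      intro x hx1 hx2
      rw [if_pos hx2]
    rw [hKA, h1]
  have hST : S = W * T * Wᴴ := by
    rw [hW, hT, Matrix.fromBlocks_conjTranspose, Matrix.fromBlocks_multiply,
      Matrix.fromBlocks_multiply]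
    simp only [Matrix.conjTranspose_zero, Matrix.zero_mul, Matrix.mul_zero, add_zero, zero_add]
    rw [hS, hb12, hb21, hA', hD']
  -- unitarity of W
  have hWW : Wᴴ * W = 1 := by
    rw [hW, Matrix.fromBlocks_conjTranspose, Matrix.fromBlocks_multiply]
    simp only [Matrix.conjTranspose_zero, Matrix.zero_mul, Matrix.mul_zero, add_zero, zero_add,
      hU1, hV1]
    exact Matrix.fromBlocks_one
  have hWW' : W * Wᴴ = 1 := by
    rw [hW, Matrix.fromBlocks_conjTranspose, Matrix.fromBlocks_multiply]
    simp only [Matrix.conjTranspose_zero, Matrix.zero_mul, Matrix.mul_zero, add_zero, zero_add,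
      hU2, hV2]
    exact Matrix.fromBlocks_one
  -- the eigenvector matrix
  set P : Matrix (Fin n ⊕ Fin m) (Fin n ⊕ Fin m) ℂ := W * P₀ with hPdef
  set Q : Matrix (Fin n ⊕ Fin m) (Fin n ⊕ Fin m) ℂ := Q₀ * Wᴴ with hQdef
  have hPQ1 : P * Q = 1 := by
    rw [hPdef, hQdef, Matrix.mul_assoc, ← Matrix.mul_assoc P₀, hP₀Q₀, Matrix.one_mul, hWW']
  have hQP1 : Q * P = 1 := by
    rw [hQdef, hPdef, Matrix.mul_assoc, ← Matrix.mul_assoc Wᴴ, hWW, Matrix.one_mul, hQ₀P₀]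
  have hinv : Invertible P := ⟨Q, hQP1, hPQ1⟩
  have hSP : S * P = P * Dm := by
    rw [hST, hPdef]
    calc W * T * Wᴴ * (W * P₀) = W * (T * P₀) := by
          rw [Matrix.mul_assoc (W * T) Wᴴ (W * P₀), ← Matrix.mul_assoc Wᴴ W P₀, hWW,
            Matrix.one_mul, Matrix.mul_assoc]
      _ = W * P₀ * Dm := by rw [hTP, ← Matrix.mul_assoc]
  set dsum : Fin n ⊕ Fin m → ℂ :=
    Sum.elim (fun i : Fin n => d1f lam mu eps r p (i : ℕ))
      (fun j : Fin m => d2f lam mu eps r p (j : ℕ)) with hdsum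
  have hDmdiag : Dm = Matrix.diagonal dsum := by
    have e1 : gd n n (d1f lam mu eps r p)
        = Matrix.diagonal (fun i : Fin n => d1f lam mu eps r p (i : ℕ)) :=
      (diagonal_eq_gd n (d1f lam mu eps r p)).symm
    have e2 : gd m m (d2f lam mu eps r p)
        = Matrix.diagonal (fun j : Fin m => d2f lam mu eps r p (j : ℕ)) :=
      (diagonal_eq_gd m (d2f lam mu eps r p)).symm
    rw [hDm, e1, e2, Matrix.fromBlocks_diagonal, hdsum]
  constructor
  · -- basis of eigenvectors
    have key : ∀ idx : Fin n ⊕ Fin m,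
        S.mulVec (P.mulVec ((Pi.single idx 1 : (Fin n ⊕ Fin m) → ℂ))) = dsum idx • P.mulVec ((Pi.single idx 1 : (Fin n ⊕ Fin m) → ℂ)) := by
      intro idx
      have hdv : Dm.mulVec ((Pi.single idx 1 : (Fin n ⊕ Fin m) → ℂ)) = dsum idx • (Pi.single idx 1 : (Fin n ⊕ Fin m) → ℂ) := by
        rw [hDmdiag]
        ext i
        rw [Matrix.mulVec_diagonal]
        by_cases h : i = idx
        · subst h; simp
        · simp [Pi.single_apply, h]
      rw [Matrix.mulVec_mulVec, hSP, ← Matrix.mulVec_mulVec, hdv, Matrix.mulVec_smul]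
    refine ⟨(Pi.basisFun ℂ (Fin n ⊕ Fin m)).map (P.toLinearEquiv' hinv),
      fun idx => ⟨dsum idx, ?_⟩⟩
    have hb : ((Pi.basisFun ℂ (Fin n ⊕ Fin m)).map (P.toLinearEquiv' hinv)) idx
        = P.mulVec ((Pi.single idx 1 : (Fin n ⊕ Fin m) → ℂ)) := by
      rw [Module.Basis.map_apply, Pi.basisFun_apply]
      show Matrix.toLin' P ((Pi.single idx 1 : (Fin n ⊕ Fin m) → ℂ)) = _
      rw [Matrix.toLin'_apply]
    rw [hb]
    exact key idx
  · refine ⟨P, dsum, isUnit_of_invertible P, ?_⟩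
    calc S = S * P * P⁻¹ := by
          rw [Matrix.mul_assoc, Matrix.mul_inv_of_invertible, Matrix.mul_one]
      _ = P * Matrix.diagonal dsum * P⁻¹ := by rw [hSP, hDmdiag]
end

section
/- Let A ∈ ℂ^{n×n} be Hermitian with eigenvalues λ_1 ≥ … ≥ λ_k > 0 ≥ λ_{k+1} ≥ … ≥ λ_n and D ∈ ℂ^{m×m} be Hermitian with eigenvalues μ_1 ≤ … ≤ μ_r ≤ 0 < μ_{r+1} ≤ … ≤ μ_m, with p = dim ker D. Let κ > 0 and assume r ≤ k and κ²λ_i + μ_i > 0 for i = 1,…,r−p. For i = 1,…,r−p choose 0 < ε_i < κ² with ε_iλ_i + μ_i > 0, for j = r−p+1,…,r choose arbitrary 0 ≤ ε_j < κ², and define K := U E V* with U, V unitary satisfying A = U·diag(λ_1,…,λ_n)·U*, D = V·diag(μ_1,…,μ_m)·V*, and E ∈ ℂ^{n×m} having (i,i)-entry √ε_i for i ≤ r and zeros elsewhere. If ε_i ≠ α_i := (λ_i − μ_i)²/(4λ_i²) for all i = 1,…,r, then ℂ^{n+m} has a basis consisting of eigenvectors of S = [[A, −AK],[K*A, D]];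 i.e., S is diagonalizable. -/
open scoped Matrix ComplexOrder

namespace DiagHelper

/-- A rectangular "diagonal" matrix. -/
noncomputable def ddiag (a b : ℕ) (f : ℕ → ℂ) : Matrix (Fin a) (Fin b) ℂ :=
  Matrix.of fun i j => if (i : ℕ) = (j : ℕ) then f i else 0

lemma ddiag_mul (a b c : ℕ) (f g : ℕ → ℂ) :
    ddiag a b f * ddiag b c g = ddiag a c (fun i => if i < b then f i * g i else 0) := by
  ext i j
  simp only [ddiag, Matrix.mul_apply, Matrix.of_apply]
  by_cases hij : (i : ℕ) = (j : ℕ)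
  · by_cases hib : (i : ℕ) < b
    · rw [Finset.sum_eq_single (⟨(i : ℕ), hib⟩ : Fin b)]
      · have hjb : (j : ℕ) < b := hij ▸ hib
        simp [hij, hjb]
      · intro k _ hk
        have hik : (i : ℕ) ≠ (k : ℕ) := by
          intro h; exact hk (by ext; exact h.symm)
        simp [hik]
      · simp
    · rw [Finset.sum_eq_zero]
      · have hjb : ¬ (j : ℕ) < b := hij ▸ hib
        simp [hij, hjb]
      · intro k _
        have hik : (i : ℕ) ≠ (k : ℕ) := fun h => hib (h ▸ k.isLt)
        simp [hik]
  · rw [Finset.sum_eq_zero]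
    · simp [hij]
    · intro k _
      by_cases h1 : (i : ℕ) = (k : ℕ)
      · have h2 : (k : ℕ) ≠ (j : ℕ) := fun h => hij (h1.trans h)
        simp [h2]
      · simp [h1]

lemma ddiag_add (a b : ℕ) (f g : ℕ → ℂ) :
    ddiag a b f + ddiag a b g = ddiag a b (fun i => f i + g i) := by
  ext i j
  by_cases h : (i : ℕ) = (j : ℕ) <;> simp [ddiag, h]

lemma neg_ddiag (a b : ℕ) (f : ℕ → ℂ) :
    -ddiag a b f = ddiag a b (fun i => -f i) := by
  ext i j
  by_cases h : (i : ℕ) = (j : ℕ) <;> simp [ddiag, h]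

lemma ddiag_congr (a b : ℕ) {f g : ℕ → ℂ} (h : ∀ i, i < a → i < b → f i = g i) :
    ddiag a b f = ddiag a b g := by
  ext ⟨i, hi⟩ ⟨j, hj⟩
  by_cases hij : i = j
  · subst hij; simp [ddiag, h i hi hj]
  · simp [ddiag, hij]

lemma ddiag_eq_one (a : ℕ) {f : ℕ → ℂ} (h : ∀ i, i < a → f i = 1) :
    ddiag a a f = 1 := by
  ext i j
  by_cases hij : (i : ℕ) = (j : ℕ)
  · have hij' : i = j := Fin.ext hij
    simp [ddiag, hij', h (j : ℕ) j.isLt, Matrix.one_apply]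
  · have hij' : i ≠ j := fun h' => hij (by rw [h'])
    simp [ddiag, hij, Matrix.one_apply_ne hij']

lemma ddiag_eq_zero (a b : ℕ) {f : ℕ → ℂ} (h : ∀ i, i < a → i < b → f i = 0) :
    ddiag a b f = 0 := by
  ext ⟨i, hi⟩ ⟨j, hj⟩
  by_cases hij : i = j
  · subst hij; simp [ddiag, h i hi hj]
  · simp [ddiag, hij]

lemma ddiag_eq_diagonal (a : ℕ) (f : ℕ → ℂ) :
    ddiag a a f = Matrix.diagonal (fun i : Fin a => f (i : ℕ)) := by
  ext i j
  by_cases hij : i = j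
  · simp [ddiag, hij]
  · have h' : (i : ℕ) ≠ (j : ℕ) := fun h => hij (Fin.ext h)
    simp [ddiag, h', Matrix.diagonal_apply_ne _ hij]

/-- Generic: a conjugation relation `S * P = P * diagonal d` with `P` invertible
gives an eigenbasis and a diagonalization. -/
lemma eigen_of_conj {ι : Type} [Fintype ι] [DecidableEq ι]
    (S P Pinv : Matrix ι ι ℂ) (d : ι → ℂ)
    (h1 : P * Pinv = 1) (h2 : S * P = P * Matrix.diagonal d) :
    (∃ b : Module.Basis ι ℂ (ι → ℂ), ∀ idx, ∃ c : ℂ, S.mulVec (b idx) = c • b idx) ∧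
    (∃ (Q : Matrix ι ι ℂ) (e : ι → ℂ), IsUnit Q ∧ S = Q * Matrix.diagonal e * Q⁻¹) := by
  have hinv : Invertible P := invertibleOfRightInverse P Pinv h1
  have hPu : IsUnit P := isUnit_of_invertible P
  constructor
  · refine ⟨(Pi.basisFun ℂ ι).map (P.toLinearEquiv' hinv), fun idx => ⟨d idx, ?_⟩⟩
    have hb : ((Pi.basisFun ℂ ι).map (P.toLinearEquiv' hinv)) idx
        = P.mulVec (Pi.single idx 1) := by
      simp only [Module.Basis.map_apply, Pi.basisFun_apply]
      rfl
    rw [hb, Matrix.mulVec_mulVec, h2, ← Matrix.mulVec_mulVec,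
      Matrix.diagonal_mulVec_single, mul_one]
    have hsingle : (Pi.single idx (d idx) : ι → ℂ) = d idx • (Pi.single idx (1 : ℂ) : ι → ℂ) := by
      ext x
      by_cases h : x = idx <;> simp [Pi.single_apply, h]
    rw [hsingle, Matrix.mulVec_smul]
  · refine ⟨P, d, hPu, ?_⟩
    have h3 : S * P * P⁻¹ = S := by
      rw [Matrix.mul_inv_cancel_right_of_invertible]
    rw [← h3, h2]



noncomputable def dsc (lam mu eps : ℕ → ℝ) (i : ℕ) : ℝ :=
  (lam i - mu i) ^ 2 - 4 * eps i * lam i ^ 2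

noncomputable def del (lam mu eps : ℕ → ℝ) (i : ℕ) : ℂ :=
  if eps i = 0 then ((lam i : ℂ) - (mu i : ℂ))
  else if 0 ≤ dsc lam mu eps i then ((Real.sqrt (dsc lam mu eps i) : ℝ) : ℂ)
  else ((Real.sqrt (-dsc lam mu eps i) : ℝ) : ℂ) * Complex.I

noncomputable def tp (lam mu eps : ℕ → ℝ) (i : ℕ) : ℂ :=
  ((lam i : ℂ) + (mu i : ℂ) + del lam mu eps i) / 2

noncomputable def tm (lam mu eps : ℕ → ℝ) (i : ℕ) : ℂ :=
  ((lam i : ℂ) + (mu i : ℂ) - del lam mu eps i) / 2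

lemma del_sq (lam mu eps : ℕ → ℝ) (i : ℕ) :
    del lam mu eps i ^ 2 = ((lam i : ℂ) - (mu i : ℂ)) ^ 2 - 4 * (eps i : ℂ) * (lam i : ℂ) ^ 2 := by
  unfold del
  by_cases h0 : eps i = 0
  · rw [if_pos h0, h0]; push_cast; ring
  · rw [if_neg h0]
    by_cases hd : 0 ≤ dsc lam mu eps i
    · rw [if_pos hd]
      have h1 : ((Real.sqrt (dsc lam mu eps i) : ℝ) : ℂ) ^ 2 = ((dsc lam mu eps i : ℝ) : ℂ) := by
        norm_cast; exact Real.sq_sqrt hd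
      rw [h1]; unfold dsc; push_cast; ring
    · rw [if_neg hd]
      have h1 : ((Real.sqrt (-dsc lam mu eps i) : ℝ) : ℂ) ^ 2 = ((-dsc lam mu eps i : ℝ) : ℂ) := by
        norm_cast; exact Real.sq_sqrt (by linarith [lt_of_not_ge hd])
      rw [mul_pow, h1, Complex.I_sq]; unfold dsc; push_cast; ring

lemma del_sq' (lam mu eps : ℕ → ℝ) (i : ℕ) :
    del lam mu eps i ^ 2 = ((dsc lam mu eps i : ℝ) : ℂ) := by
  rw [del_sq]; unfold dsc; push_cast; ring

lemma dsc_ne (lam mu eps : ℕ → ℝ) (i : ℕ) (hl : lam i ≠ 0)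
    (hne : eps i ≠ (lam i - mu i) ^ 2 / (4 * lam i ^ 2)) : dsc lam mu eps i ≠ 0 := by
  intro h
  apply hne
  have h4 : (4 : ℝ) * lam i ^ 2 ≠ 0 := by positivity
  rw [eq_div_iff h4]
  unfold dsc at h
  linear_combination -h

lemma del_ne (lam mu eps : ℕ → ℝ) (i : ℕ) (hl : lam i ≠ 0)
    (hne : eps i ≠ (lam i - mu i) ^ 2 / (4 * lam i ^ 2)) : del lam mu eps i ≠ 0 := by
  intro h
  have h2 := del_sq' lam mu eps i
  rw [h] at h2
  have h3 : ((dsc lam mu eps i : ℝ) : ℂ) = 0 := by rw [← h2]; ring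
  exact dsc_ne lam mu eps i hl hne (by exact_mod_cast h3)

lemma del_ne' (lam mu eps : ℕ → ℝ) (i : ℕ) (hl : lam i ≠ 0)
    (hne : eps i ≠ (lam i - mu i) ^ 2 / (4 * lam i ^ 2)) :
    del lam mu eps i + (lam i : ℂ) - (mu i : ℂ) ≠ 0 := by
  intro h
  have hd : del lam mu eps i = (mu i : ℂ) - (lam i : ℂ) := by linear_combination h
  by_cases h0 : eps i = 0
  · have hdel : del lam mu eps i = (lam i : ℂ) - (mu i : ℂ) := by unfold del; rw [if_pos h0]
    rw [hdel] at hd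
    have hc : (lam i : ℂ) = (mu i : ℂ) := by linear_combination hd / 2
    have hlm : lam i = mu i := by exact_mod_cast hc
    apply dsc_ne lam mu eps i hl hne
    unfold dsc; rw [h0, hlm]; ring
  · have h2 := del_sq lam mu eps i
    rw [hd] at h2
    have h3 : 4 * (eps i : ℂ) * (lam i : ℂ) ^ 2 = 0 := by linear_combination h2
    have hL : (lam i : ℂ) ≠ 0 := by exact_mod_cast hl
    have hE : (eps i : ℂ) ≠ 0 := by exact_mod_cast h0
    apply hE
    rcases mul_eq_zero.mp h3 with h4 | h4
    · rcases mul_eq_zero.mp h4 with h5 | h5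
      · norm_num at h5
      · exact h5
    · exact absurd (pow_eq_zero_iff (by norm_num) |>.mp h4) hL

lemma quad_tp (lam mu eps : ℕ → ℝ) (i : ℕ) :
    tp lam mu eps i ^ 2 - ((lam i : ℂ) + (mu i : ℂ)) * tp lam mu eps i
      + (lam i : ℂ) * (mu i : ℂ) + (eps i : ℂ) * (lam i : ℂ) ^ 2 = 0 := by
  unfold tp
  linear_combination del_sq lam mu eps i / 4

lemma quad_tm (lam mu eps : ℕ → ℝ) (i : ℕ) :
    tm lam mu eps i ^ 2 - ((lam i : ℂ) + (mu i : ℂ)) * tm lam mu eps i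
      + (lam i : ℂ) * (mu i : ℂ) + (eps i : ℂ) * (lam i : ℂ) ^ 2 = 0 := by
  unfold tm
  linear_combination del_sq lam mu eps i / 4

lemma sq_sqrt_c (eps : ℕ → ℝ) (i : ℕ) (he : 0 ≤ eps i) :
    ((Real.sqrt (eps i) : ℝ) : ℂ) ^ 2 = (eps i : ℂ) := by
  norm_cast; exact Real.sq_sqrt he

noncomputable def aF (r : ℕ) (lam mu eps : ℕ → ℝ) (i : ℕ) : ℂ :=
  if i < r then tp lam mu eps i - (mu i : ℂ) else 1

noncomputable def bF (r : ℕ) (lam eps : ℕ → ℝ) (i : ℕ) : ℂ :=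
  if i < r then ((Real.sqrt (eps i) : ℝ) : ℂ) * (lam i : ℂ) else 0

noncomputable def cF (r : ℕ) (lam mu eps : ℕ → ℝ) (i : ℕ) : ℂ :=
  if i < r then (lam i : ℂ) - tm lam mu eps i else 1

noncomputable def dF (r : ℕ) (lam mu eps : ℕ → ℝ) (i : ℕ) : ℂ :=
  aF r lam mu eps i * cF r lam mu eps i - bF r lam eps i ^ 2

lemma dF_ne (r : ℕ) (lam mu eps : ℕ → ℝ) (i : ℕ)
    (hl : i < r → lam i ≠ 0) (he : i < r → 0 ≤ eps i)
    (hne : i < r → eps i ≠ (lam i - mu i) ^ 2 / (4 * lam i ^ 2)) :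
    dF r lam mu eps i ≠ 0 := by
  by_cases hir : i < r
  · have heq : dF r lam mu eps i
        = del lam mu eps i * (del lam mu eps i + (lam i : ℂ) - (mu i : ℂ)) / 2 := by
      unfold dF aF bF cF
      rw [if_pos hir, if_pos hir, if_pos hir]
      unfold tp tm
      linear_combination (-(1 : ℂ) / 4) * del_sq lam mu eps i
        - (lam i : ℂ) ^ 2 * sq_sqrt_c eps i (he hir)
    rw [heq]
    exact div_ne_zero (mul_ne_zero (del_ne lam mu eps i (hl hir) (hne hir))
      (del_ne' lam mu eps i (hl hir) (hne hir))) (by norm_num)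
  · unfold dF aF bF cF
    rw [if_neg hir, if_neg hir, if_neg hir]
    norm_num

lemma eq_TL (r : ℕ) (lam mu eps : ℕ → ℝ) (i : ℕ) (hir : i < r) (he : 0 ≤ eps i) :
    (lam i : ℂ) * aF r lam mu eps i + (-bF r lam eps i) * bF r lam eps i
      = aF r lam mu eps i * tp lam mu eps i := by
  unfold aF bF
  rw [if_pos hir, if_pos hir]
  linear_combination (-1 : ℂ) * quad_tp lam mu eps i - (lam i : ℂ) ^ 2 * sq_sqrt_c eps i he

lemma eq_TR (r : ℕ) (lam mu eps : ℕ → ℝ) (i : ℕ) (hir : i < r) :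
    (lam i : ℂ) * bF r lam eps i + (-bF r lam eps i) * cF r lam mu eps i
      = bF r lam eps i * tm lam mu eps i := by
  unfold bF cF
  rw [if_pos hir, if_pos hir]
  ring

lemma eq_BL (r : ℕ) (lam mu eps : ℕ → ℝ) (i : ℕ) (hir : i < r) :
    bF r lam eps i * aF r lam mu eps i + (mu i : ℂ) * bF r lam eps i
      = bF r lam eps i * tp lam mu eps i := by
  unfold aF bF
  rw [if_pos hir, if_pos hir]
  ring

lemma eq_BR (r : ℕ) (lam mu eps : ℕ → ℝ) (i : ℕ) (hir : i < r) (he : 0 ≤ eps i) :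
    bF r lam eps i * bF r lam eps i + (mu i : ℂ) * cF r lam mu eps i
      = cF r lam mu eps i * tm lam mu eps i := by
  unfold bF cF
  rw [if_pos hir, if_pos hir]
  linear_combination quad_tm lam mu eps i + (lam i : ℂ) ^ 2 * sq_sqrt_c eps i he


noncomputable def WM (n m r : ℕ) (lam mu eps : ℕ → ℝ) :
    Matrix (Fin n ⊕ Fin m) (Fin n ⊕ Fin m) ℂ :=
  Matrix.fromBlocks (ddiag n n (aF r lam mu eps)) (ddiag n m (bF r lam eps))
    (ddiag m n (bF r lam eps)) (ddiag m m (cF r lam mu eps))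

noncomputable def WMinv (n m r : ℕ) (lam mu eps : ℕ → ℝ) :
    Matrix (Fin n ⊕ Fin m) (Fin n ⊕ Fin m) ℂ :=
  Matrix.fromBlocks
    (ddiag n n fun i => cF r lam mu eps i / dF r lam mu eps i)
    (ddiag n m fun i => -bF r lam eps i / dF r lam mu eps i)
    (ddiag m n fun i => -bF r lam eps i / dF r lam mu eps i)
    (ddiag m m fun i => aF r lam mu eps i / dF r lam mu eps i)

noncomputable def TM (n m r : ℕ) (lam mu eps : ℕ → ℝ) :
    Matrix (Fin n ⊕ Fin m) (Fin n ⊕ Fin m) ℂ :=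
  Matrix.fromBlocks (ddiag n n fun i => (lam i : ℂ)) (ddiag n m fun i => -bF r lam eps i)
    (ddiag m n (bF r lam eps)) (ddiag m m fun i => (mu i : ℂ))

noncomputable def tt1 (r : ℕ) (lam mu eps : ℕ → ℝ) (i : ℕ) : ℂ :=
  if i < r then tp lam mu eps i else (lam i : ℂ)

noncomputable def tt2 (r : ℕ) (lam mu eps : ℕ → ℝ) (i : ℕ) : ℂ :=
  if i < r then tm lam mu eps i else (mu i : ℂ)

noncomputable def DM (n m r : ℕ) (lam mu eps : ℕ → ℝ) :
    Matrix (Fin n ⊕ Fin m) (Fin n ⊕ Fin m) ℂ :=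
  Matrix.fromBlocks (ddiag n n (tt1 r lam mu eps)) 0 0 (ddiag m m (tt2 r lam mu eps))

lemma WM_mul_WMinv (n m r : ℕ) (lam mu eps : ℕ → ℝ) (hrn : r ≤ n) (hrm : r ≤ m)
    (hl : ∀ i, i < r → lam i ≠ 0) (he : ∀ i, i < r → 0 ≤ eps i)
    (hne : ∀ i, i < r → eps i ≠ (lam i - mu i) ^ 2 / (4 * lam i ^ 2)) :
    WM n m r lam mu eps * WMinv n m r lam mu eps = 1 := by
  have hd : ∀ i, dF r lam mu eps i ≠ 0 := fun i =>
    dF_ne r lam mu eps i (hl i) (he i) (hne i)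
  rw [WM, WMinv, Matrix.fromBlocks_multiply]
  rw [ddiag_mul, ddiag_mul, ddiag_mul, ddiag_mul, ddiag_mul, ddiag_mul, ddiag_mul, ddiag_mul]
  rw [ddiag_add, ddiag_add, ddiag_add, ddiag_add]
  rw [← Matrix.fromBlocks_one]
  refine Matrix.fromBlocks_inj.mpr ⟨?_, ?_, ?_, ?_⟩
  · apply ddiag_eq_one; intro i hin
    rw [if_pos hin]
    by_cases hir : i < r
    · rw [if_pos (lt_of_lt_of_le hir hrm)]
      have h1 : aF r lam mu eps i * (cF r lam mu eps i / dF r lam mu eps i)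
          + bF r lam eps i * (-bF r lam eps i / dF r lam mu eps i)
          = (aF r lam mu eps i * cF r lam mu eps i - bF r lam eps i ^ 2) / dF r lam mu eps i := by
        ring
      rw [h1]
      exact div_self (hd i)
    · by_cases him : i < m <;> simp [aF, bF, cF, dF, hir] <;> norm_num
  · apply ddiag_eq_zero; intro i hin him
    rw [if_pos hin, if_pos him]
    ring
  · apply ddiag_eq_zero; intro i him hin
    rw [if_pos him, if_pos hin]
    ring
  · apply ddiag_eq_one; intro i him
    rw [if_pos him]
    by_cases hir : i < r
    · rw [if_pos (lt_of_lt_of_le hir hrn)]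
      have h1 : bF r lam eps i * (-bF r lam eps i / dF r lam mu eps i)
          + cF r lam mu eps i * (aF r lam mu eps i / dF r lam mu eps i)
          = (aF r lam mu eps i * cF r lam mu eps i - bF r lam eps i ^ 2) / dF r lam mu eps i := by
        ring
      rw [h1]
      exact div_self (hd i)
    · by_cases hin : i < n <;> simp [aF, bF, cF, dF, hir] <;> norm_num

lemma TM_mul_WM (n m r : ℕ) (lam mu eps : ℕ → ℝ) (hrn : r ≤ n) (hrm : r ≤ m)
    (he : ∀ i, i < r → 0 ≤ eps i) :
    TM n m r lam mu eps * WM n m r lam mu eps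
      = WM n m r lam mu eps * DM n m r lam mu eps := by
  rw [TM, WM, DM, Matrix.fromBlocks_multiply, Matrix.fromBlocks_multiply]
  simp only [Matrix.mul_zero, Matrix.zero_mul, add_zero, zero_add]
  rw [ddiag_mul, ddiag_mul, ddiag_mul, ddiag_mul, ddiag_mul, ddiag_mul, ddiag_mul, ddiag_mul,
    ddiag_mul, ddiag_mul, ddiag_mul, ddiag_mul]
  rw [ddiag_add, ddiag_add, ddiag_add, ddiag_add]
  refine Matrix.fromBlocks_inj.mpr ⟨?_, ?_, ?_, ?_⟩
  · apply ddiag_congr; intro i hin _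
    rw [if_pos hin, if_pos hin]
    by_cases hir : i < r
    · rw [if_pos (lt_of_lt_of_le hir hrm)]
      rw [show tt1 r lam mu eps i = tp lam mu eps i from if_pos hir]
      exact eq_TL r lam mu eps i hir (he i hir)
    · rw [show tt1 r lam mu eps i = (lam i : ℂ) from if_neg hir]
      by_cases him : i < m <;> simp [aF, bF, hir] <;> ring
  · apply ddiag_congr; intro i hin him
    rw [if_pos hin, if_pos him, if_pos him]
    by_cases hir : i < r
    · rw [show tt2 r lam mu eps i = tm lam mu eps i from if_pos hir]
      exact eq_TR r lam mu eps i hir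
    · simp [bF, cF, hir, tt2]
  · apply ddiag_congr; intro i him hin
    rw [if_pos him, if_pos hin, if_pos hin]
    by_cases hir : i < r
    · rw [show tt1 r lam mu eps i = tp lam mu eps i from if_pos hir]
      exact eq_BL r lam mu eps i hir
    · simp [bF, aF, hir, tt1]
  · apply ddiag_congr; intro i him _
    rw [if_pos him, if_pos him]
    by_cases hir : i < r
    · rw [if_pos (lt_of_lt_of_le hir hrn)]
      rw [show tt2 r lam mu eps i = tm lam mu eps i from if_pos hir]
      exact eq_BR r lam mu eps i hir (he i hir)
    · rw [show tt2 r lam mu eps i = (mu i : ℂ) from if_neg hir]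
      by_cases hin : i < n <;> simp [bF, cF, hir] <;> ring

end DiagHelper

open DiagHelper

/-- If in the construction of `S = [[A, −AK],[KᴴA, D]]` (positive definite case) one has
`ε i ≠ α i = (lam i − mu i)²/(4(lam i)²)` for all `i < r`, then `ℂ^{n+m}` has a basis
consisting of eigenvectors of `S`, i.e. `S` is diagonalizable. -/
theorem diagonalizable_blockMatrix_posdef
    (n m k r p : ℕ) (hkn : k ≤ n) (hrm : r ≤ m) (hpr : p ≤ r)
    (κ : ℝ) (hκ : 0 < κ)
    (lam mu eps : ℕ → ℝ)
    (hlam : ∀ i j : ℕ, i ≤ j → j < n → lam j ≤ lam i)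
    (hlampos : ∀ i : ℕ, i < k → 0 < lam i)
    (hlamnonpos : ∀ i : ℕ, k ≤ i → i < n → lam i ≤ 0)
    (hmu : ∀ i j : ℕ, i ≤ j → j < m → mu i ≤ mu j)
    (hmunonpos : ∀ i : ℕ, i < r → mu i ≤ 0)
    (hmupos : ∀ i : ℕ, r ≤ i → i < m → 0 < mu i)
    (D : Matrix (Fin m) (Fin m) ℂ)
    (hp : p = Module.finrank ℂ (LinearMap.ker D.mulVecLin))
    (hrk : r ≤ k)
    (hcond : ∀ i : ℕ, i < r - p → 0 < κ ^ 2 * lam i + mu i)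
    (heps0 : ∀ i : ℕ, i < r - p → 0 < eps i)
    (hepsκ : ∀ i : ℕ, i < r - p → eps i < κ ^ 2)
    (hepsc : ∀ i : ℕ, i < r - p → 0 < eps i * lam i + mu i)
    (hepsz : ∀ j : ℕ, r - p ≤ j → j < r → 0 ≤ eps j ∧ eps j < κ ^ 2)
    (U : Matrix (Fin n) (Fin n) ℂ) (hU : U ∈ Matrix.unitaryGroup (Fin n) ℂ)
    (V : Matrix (Fin m) (Fin m) ℂ) (hV : V ∈ Matrix.unitaryGroup (Fin m) ℂ)
    (A : Matrix (Fin n) (Fin n) ℂ)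
    (hA : A = U * Matrix.diagonal (fun i : Fin n => (lam i : ℂ)) * Uᴴ)
    (hD : D = V * Matrix.diagonal (fun j : Fin m => (mu j : ℂ)) * Vᴴ)
    (E : Matrix (Fin n) (Fin m) ℂ)
    (hE : ∀ (i : Fin n) (j : Fin m),
      E i j = if (i : ℕ) = (j : ℕ) ∧ (j : ℕ) < r then (Real.sqrt (eps j) : ℂ) else 0)
    (K : Matrix (Fin n) (Fin m) ℂ) (hK : K = U * E * Vᴴ)
    (S : Matrix (Fin n ⊕ Fin m) (Fin n ⊕ Fin m) ℂ)
    (hS : S = Matrix.fromBlocks A (-(A * K)) (Kᴴ * A) D)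
    (hne : ∀ i : ℕ, i < r → eps i ≠ (lam i - mu i) ^ 2 / (4 * lam i ^ 2)) :
    (∃ b : Module.Basis (Fin n ⊕ Fin m) ℂ ((Fin n ⊕ Fin m) → ℂ),
      ∀ idx, ∃ c : ℂ, S.mulVec (b idx) = c • b idx) ∧
    (∃ (P : Matrix (Fin n ⊕ Fin m) (Fin n ⊕ Fin m) ℂ) (d : (Fin n ⊕ Fin m) → ℂ),
      IsUnit P ∧ S = P * Matrix.diagonal d * P⁻¹) := by
  classical
  have hUU' : U * Uᴴ = 1 := by
    have h := Matrix.mem_unitaryGroup_iff.mp hU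
    rwa [Matrix.star_eq_conjTranspose] at h
  have hUU : Uᴴ * U = 1 := by
    have h := Matrix.mem_unitaryGroup_iff'.mp hU
    rwa [Matrix.star_eq_conjTranspose] at h
  have hVV' : V * Vᴴ = 1 := by
    have h := Matrix.mem_unitaryGroup_iff.mp hV
    rwa [Matrix.star_eq_conjTranspose] at h
  have hVV : Vᴴ * V = 1 := by
    have h := Matrix.mem_unitaryGroup_iff'.mp hV
    rwa [Matrix.star_eq_conjTranspose] at h
  have hrn : r ≤ n := le_trans hrk hkn
  have hl : ∀ i, i < r → lam i ≠ 0 := fun i h => ne_of_gt (hlampos i (lt_of_lt_of_le h hrk))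
  have he : ∀ i, i < r → 0 ≤ eps i := by
    intro i h
    rcases lt_or_ge i (r - p) with h1 | h1
    · exact le_of_lt (heps0 i h1)
    · exact (hepsz i h1 h).1
  have hΛ : Matrix.diagonal (fun i : Fin n => (lam i : ℂ)) = ddiag n n (fun i => (lam i : ℂ)) :=
    (ddiag_eq_diagonal n (fun i => ((lam i : ℝ) : ℂ))).symm
  have hM : Matrix.diagonal (fun j : Fin m => (mu j : ℂ)) = ddiag m m (fun i => (mu i : ℂ)) :=
    (ddiag_eq_diagonal m (fun i => ((mu i : ℝ) : ℂ))).symm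
  have hE' : E = ddiag n m (fun i => if i < r then ((Real.sqrt (eps i) : ℝ) : ℂ) else 0) := by
    ext i j
    rw [hE i j]
    simp only [ddiag, Matrix.of_apply]
    by_cases hij : (i : ℕ) = (j : ℕ)
    · by_cases hjr : (j : ℕ) < r
      · have hir' : (i : ℕ) < r := by omega
        rw [if_pos ⟨hij, hjr⟩, if_pos hij, if_pos hir', hij]
      · have hir' : ¬ (i : ℕ) < r := by omega
        rw [if_neg (by tauto), if_pos hij, if_neg hir']
    · rw [if_neg (by tauto), if_neg hij]
  have hEH : Eᴴ = ddiag m n (fun i => if i < r then ((Real.sqrt (eps i) : ℝ) : ℂ) else 0) := by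
    rw [hE']
    ext j i
    simp only [Matrix.conjTranspose_apply, ddiag, Matrix.of_apply]
    by_cases hij : (i : ℕ) = (j : ℕ)
    · rw [if_pos hij, if_pos hij.symm, ← hij]
      by_cases hir : (i : ℕ) < r <;>
        simp [hir, Complex.star_def, Complex.conj_ofReal]
    · rw [if_neg hij, if_neg (fun h => hij h.symm), star_zero]
  have hbF : ddiag n m (fun i => if i < n then
      (lam i : ℂ) * (if i < r then ((Real.sqrt (eps i) : ℝ) : ℂ) else 0) else 0)
      = ddiag n m (bF r lam eps) := by
    apply ddiag_congr; intro i hin _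
    rw [if_pos hin]
    by_cases hir : i < r <;> simp [bF, hir, mul_comm]
  have hbF' : ddiag m n (fun i => if i < n then
      (if i < r then ((Real.sqrt (eps i) : ℝ) : ℂ) else 0) * (lam i : ℂ) else 0)
      = ddiag m n (bF r lam eps) := by
    apply ddiag_congr; intro i _ hin
    rw [if_pos hin]
    by_cases hir : i < r <;> simp [bF, hir]
  have hAK : A * K = U * ddiag n m (bF r lam eps) * Vᴴ := by
    rw [hA, hK]
    simp only [Matrix.mul_assoc]
    rw [show Uᴴ * (U * (E * Vᴴ)) = E * Vᴴ by rw [← Matrix.mul_assoc, hUU, Matrix.one_mul]]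
    rw [hΛ, hE', ← Matrix.mul_assoc (ddiag n n _), ddiag_mul, hbF]
  have hKA : Kᴴ * A = V * ddiag m n (bF r lam eps) * Uᴴ := by
    rw [hK, hA]
    simp only [Matrix.conjTranspose_mul, Matrix.conjTranspose_conjTranspose, Matrix.mul_assoc]
    rw [show Uᴴ * (U * (Matrix.diagonal (fun i : Fin n => (lam i : ℂ)) * Uᴴ))
        = Matrix.diagonal (fun i : Fin n => (lam i : ℂ)) * Uᴴ by
      rw [← Matrix.mul_assoc, hUU, Matrix.one_mul]]
    rw [hEH, hΛ, ← Matrix.mul_assoc (ddiag m n _), ddiag_mul, hbF']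
  set Q : Matrix (Fin n ⊕ Fin m) (Fin n ⊕ Fin m) ℂ := Matrix.fromBlocks U 0 0 V with hQdef
  have hQH : Qᴴ = Matrix.fromBlocks Uᴴ 0 0 Vᴴ := by
    rw [hQdef]
    simp [Matrix.fromBlocks_conjTranspose]
  have hQQ : Q * Qᴴ = 1 := by
    rw [hQdef, hQH, Matrix.fromBlocks_multiply]
    simp only [Matrix.mul_zero, Matrix.zero_mul, add_zero, zero_add, hUU', hVV',
      Matrix.fromBlocks_one]
  have hQQ' : Qᴴ * Q = 1 := by
    rw [hQdef, hQH, Matrix.fromBlocks_multiply]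
    simp only [Matrix.mul_zero, Matrix.zero_mul, add_zero, zero_add, hUU, hVV,
      Matrix.fromBlocks_one]
  have hS' : S = Q * TM n m r lam mu eps * Qᴴ := by
    rw [hS, hQdef, hQH, TM, Matrix.fromBlocks_multiply, Matrix.fromBlocks_multiply]
    simp only [Matrix.mul_zero, Matrix.zero_mul, add_zero, zero_add]
    refine Matrix.fromBlocks_inj.mpr ⟨?_, ?_, ?_, ?_⟩
    · rw [hA, hΛ]
    · rw [hAK, ← neg_ddiag]
      rw [Matrix.mul_neg, Matrix.neg_mul]
    · exact hKA
    · rw [hD, hM]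
  have h1 : Q * WM n m r lam mu eps * (WMinv n m r lam mu eps * Qᴴ) = 1 := by
    have hW := WM_mul_WMinv n m r lam mu eps hrn hrm hl he hne
    calc Q * WM n m r lam mu eps * (WMinv n m r lam mu eps * Qᴴ)
        = Q * (WM n m r lam mu eps * WMinv n m r lam mu eps) * Qᴴ := by
          simp only [Matrix.mul_assoc]
      _ = Q * Qᴴ := by rw [hW, Matrix.mul_one]
      _ = 1 := hQQ
  have hDMdiag : DM n m r lam mu eps
      = Matrix.diagonal (Sum.elim (fun i : Fin n => tt1 r lam mu eps i)
          (fun j : Fin m => tt2 r lam mu eps j)) := by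
    rw [DM, ddiag_eq_diagonal, ddiag_eq_diagonal, Matrix.fromBlocks_diagonal]
  have h2 : S * (Q * WM n m r lam mu eps)
      = Q * WM n m r lam mu eps * Matrix.diagonal (Sum.elim (fun i : Fin n => tt1 r lam mu eps i)
          (fun j : Fin m => tt2 r lam mu eps j)) := by
    rw [hS']
    calc Q * TM n m r lam mu eps * Qᴴ * (Q * WM n m r lam mu eps)
        = Q * (TM n m r lam mu eps * (Qᴴ * Q * WM n m r lam mu eps)) := by
          simp only [Matrix.mul_assoc]
      _ = Q * (TM n m r lam mu eps * WM n m r lam mu eps) := by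
          rw [hQQ', Matrix.one_mul]
      _ = Q * (WM n m r lam mu eps * DM n m r lam mu eps) := by
          rw [TM_mul_WM n m r lam mu eps hrn hrm he]
      _ = Q * WM n m r lam mu eps * Matrix.diagonal (Sum.elim (fun i : Fin n => tt1 r lam mu eps i)
            (fun j : Fin m => tt2 r lam mu eps j)) := by
          rw [← hDMdiag, Matrix.mul_assoc]
  exact eigen_of_conj S (Q * WM n m r lam mu eps) (WMinv n m r lam mu eps * Qᴴ) _ h1 h2
end
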